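/- arXiv:2101.05562 — 9 statements merged into one kernel-verified Lean document; each statement's English description precedes it below -/
import Mathlib

section
/- Let a, b, c : ℕ → ℂ (indexed from 1) satisfy a_j c_j ≠ 0 for all j and ∑_{n≥1}(|1 − a_n| + |b_n| + |1 − c_n|) < ∞, and set Δ := ∑_{n≥1}(|b_n| + |1 − a_n c_n|). Then every eigenvalue λ of the Jacobi matrix J = J({a_j},{b_j},{c_j}) with λ ∉ [−2,2] satisfies |λ² − 4| ≤ (2Δ / log 2)². -/
noncomputable section

/-- The segment `[-2,2]` regarded as a subset of `ℂ`. -/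
def segC : Set ℂ := (fun x : ℝ => (x : ℂ)) '' Set.Icc (-2) 2

/-- `l` is an eigenvalue of the semi-infinite Jacobi matrix `J({a_j},{b_j},{c_j})`
(entries indexed from 1): there is a nonzero square-summable sequence `g = (g_k)_{k ≥ 1}`,
extended by `g 0 = 0`, satisfying the recurrence
`a_{k-1} g_{k-1} + b_k g_k + c_k g_{k+1} = l g_k` for all `k ≥ 1`. -/
def IsJacobiEigenvalue (a b c : ℕ → ℂ) (l : ℂ) : Prop :=
  ∃ g : ℕ → ℂ, g 0 = 0 ∧ g ≠ 0 ∧ Summable (fun k : ℕ => ‖g k‖ ^ 2) ∧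
    ∀ k : ℕ, 1 ≤ k → a (k - 1) * g (k - 1) + b k * g k + c k * g (k + 1) = l * g k

lemma exists_jouk (l : ℂ) (hl : l ∉ segC) : ∃ z : ℂ, z ≠ 0 ∧ ‖z‖ < 1 ∧ z + z⁻¹ = l := by
  obtain ⟨s, hs⟩ := IsAlgClosed.exists_pow_nat_eq (l ^ 2 - 4) (n := 2) (by norm_num)
  set w : ℂ := (l + s) / 2 with hw
  have hweq : w ^ 2 - l * w + 1 = 0 := by
    rw [hw]; linear_combination (1/4 : ℂ) * hs
  have hw0 : w ≠ 0 := by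
    intro h; rw [h] at hweq; simp at hweq
  have hlw : w + w⁻¹ = l := by
    field_simp
    linear_combination -hweq + (1/2 : ℂ) * hs - (1/4 : ℂ)*hs*0
  have hwne1 : ‖w‖ ≠ 1 := by
    intro h1
    apply hl
    have hinv : w⁻¹ = (starRingEnd ℂ) w := by
      rw [Complex.inv_def]
      have : Complex.normSq w = 1 := by
        rw [Complex.normSq_eq_norm_sq, h1]; norm_num
      rw [this]; simp
    have : l = 2 * w.re := by
      rw [← hlw, hinv, Complex.add_conj]; norm_num
    refine ⟨2 * w.re, ⟨?_, ?_⟩, by rw [this]; push_cast; ring⟩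
    · nlinarith [abs_le.mp (le_trans (Complex.abs_re_le_norm w) (le_of_eq h1))]
    · nlinarith [abs_le.mp (le_trans (Complex.abs_re_le_norm w) (le_of_eq h1))]
  rcases lt_or_gt_of_ne hwne1 with h | h
  · exact ⟨w, hw0, h, hlw⟩
  · refine ⟨w⁻¹, inv_ne_zero hw0, ?_, by rw [inv_inv, add_comm]; exact hlw⟩
    rw [norm_inv]
    exact inv_lt_one_of_one_lt₀ h

/-- The free discrete resolvent kernel. -/
def Gf (z : ℂ) (k m : ℕ) : ℂ := (z ^ |(k : ℤ) - m| - z ^ ((k : ℤ) + m)) / (z - z⁻¹)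

lemma Gf_zero (z : ℂ) (m : ℕ) : Gf z 0 m = 0 := by
  simp [Gf]

lemma abs_zpow_le_one {z : ℂ} (hz1 : ‖z‖ < 1) (n : ℤ) (hn : 0 ≤ n) :
    ‖z ^ n‖ ≤ 1 := by
  lift n to ℕ using hn
  rw [zpow_natCast, norm_pow]
  exact pow_le_one₀ (norm_nonneg z) hz1.le

lemma norm_Gf_le {z : ℂ} (hz1 : ‖z‖ < 1) (k m : ℕ) :
    ‖Gf z k m‖ ≤ 2 / ‖z - z⁻¹‖ := by
  rw [Gf, norm_div]
  gcongr
  calc ‖z ^ |(k : ℤ) - m| - z ^ ((k : ℤ) + m)‖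
      ≤ ‖z ^ |(k : ℤ) - m|‖ + ‖z ^ ((k : ℤ) + m)‖ := norm_sub_le _ _
    _ ≤ 1 + 1 := add_le_add (abs_zpow_le_one hz1 _ (abs_nonneg _))
        (abs_zpow_le_one hz1 _ (by positivity))
    _ = 2 := by norm_num

lemma zpow_abs_rec {z : ℂ} (hz0 : z ≠ 0) (n : ℤ) :
    z ^ |n - 1| + z ^ |n + 1| - (z + z⁻¹) * z ^ |n|
      = if n = 0 then z - z⁻¹ else 0 := by
  rcases lt_trichotomy n 0 with h | h | h
  · rw [if_neg h.ne, abs_of_nonpos (by omega : n - 1 ≤ 0),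
        abs_of_nonpos (by omega : n + 1 ≤ 0), abs_of_nonpos h.le,
        show -(n - 1) = -n + 1 by ring, show -(n + 1) = -n + (-1) by ring,
        zpow_add₀ hz0, zpow_add₀ hz0, zpow_one, zpow_neg_one]
    ring
  · subst h
    simp only [zero_sub, zero_add, if_pos rfl, abs_neg, abs_one, abs_zero]
    rw [zpow_one, zpow_zero, if_pos trivial]
    ring
  · rw [if_neg h.ne', abs_of_nonneg (by omega : 0 ≤ n - 1),
        abs_of_nonneg (by omega : 0 ≤ n + 1), abs_of_nonneg h.le,
        show n - 1 = n + (-1) by ring, zpow_add₀ hz0, zpow_add₀ hz0, zpow_one, zpow_neg_one]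
    ring

lemma Gf_rec {z : ℂ} (hz0 : z ≠ 0) (hq : z - z⁻¹ ≠ 0) (k m : ℕ) :
    Gf z k m + Gf z (k + 2) m - (z + z⁻¹) * Gf z (k + 1) m
      = if k + 1 = m then 1 else 0 := by
  have h1 := zpow_abs_rec hz0 ((k : ℤ) + 1 - m)
  have e1 : (k : ℤ) - m = ((k : ℤ) + 1 - m) - 1 := by ring
  have e2 : ((k + 2 : ℕ) : ℤ) - m = ((k : ℤ) + 1 - m) + 1 := by push_cast; ring
  have e3 : ((k + 1 : ℕ) : ℤ) - m = (k : ℤ) + 1 - m := by push_cast; ring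
  have e4 : ((k + 2 : ℕ) : ℤ) + m = (((k + 1 : ℕ) : ℤ) + m) + 1 := by push_cast; ring
  have e5 : ((k : ℕ) : ℤ) + m = (((k + 1 : ℕ) : ℤ) + m) + (-1) := by push_cast; ring
  have hcond : (if k + 1 = m then (1 : ℂ) else 0) * (z - z⁻¹)
      = if (k : ℤ) + 1 - m = 0 then z - z⁻¹ else 0 := by
    by_cases h : k + 1 = m
    · rw [if_pos h, if_pos (by omega), one_mul]
    · rw [if_neg h, if_neg (by omega), zero_mul]
  have key : (z ^ |(k : ℤ) - m| - z ^ ((k : ℤ) + m))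
      + (z ^ |((k + 2 : ℕ) : ℤ) - m| - z ^ (((k + 2 : ℕ) : ℤ) + m))
      - (z + z⁻¹) * (z ^ |((k + 1 : ℕ) : ℤ) - m| - z ^ (((k + 1 : ℕ) : ℤ) + m))
      = (if k + 1 = m then (1 : ℂ) else 0) * (z - z⁻¹) := by
    rw [e1, e2, e3, e4, e5, hcond, ← h1]
    simp only [zpow_add₀ hz0, zpow_one, zpow_neg_one]
    ring
  rw [Gf, Gf, Gf, ← add_div, mul_div_assoc', ← sub_div, key,
    mul_div_cancel_right₀ _ hq]

/-- transfer polynomial -/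
def Pf (z : ℂ) (k : ℕ) : ℂ := (z ^ (-(k : ℤ)) - z ^ (k : ℤ)) / (z⁻¹ - z)

lemma Pf_zero (z : ℂ) : Pf z 0 = 0 := by simp [Pf]

lemma Pf_one {z : ℂ} (hq' : z⁻¹ - z ≠ 0) : Pf z 1 = 1 := by
  rw [Pf]
  push_cast
  rw [zpow_one, zpow_neg_one, div_self hq']

lemma Pf_rec {z : ℂ} (hz0 : z ≠ 0) (k : ℕ) :
    Pf z (k + 2) = (z + z⁻¹) * Pf z (k + 1) - Pf z k := by
  have e1 : (((k + 2 : ℕ)) : ℤ) = (k : ℤ) + 1 + 1 := by push_cast; ring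
  have e2 : (((k + 1 : ℕ)) : ℤ) = (k : ℤ) + 1 := by push_cast; ring
  have e3 : -(((k + 2 : ℕ)) : ℤ) = -(k : ℤ) + (-1) + (-1) := by push_cast; ring
  have e4 : -(((k + 1 : ℕ)) : ℤ) = -(k : ℤ) + (-1) := by push_cast; ring
  rw [Pf, Pf, Pf, e1, e2,
    show (-((k : ℤ) + 1 + 1)) = -(k : ℤ) + -1 + -1 by ring,
    show (-((k : ℤ) + 1)) = -(k : ℤ) + -1 by ring]
  simp only [zpow_add₀ hz0, zpow_one, zpow_neg_one]
  have hzz : z * z⁻¹ = 1 := mul_inv_cancel₀ hz0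
  linear_combination ((z ^ ((k : ℤ)) - z ^ (-(k : ℤ))) / (z⁻¹ - z)) * hzz

lemma Pf_lower {z : ℂ} (hz0 : z ≠ 0) (hz1 : ‖z‖ < 1) (k : ℕ) :
    ((1 / ‖z‖) ^ k - 1) / ‖z⁻¹ - z‖ ≤ ‖Pf z k‖ := by
  have hQ : 0 ≤ ‖z⁻¹ - z‖ := norm_nonneg _
  rcases eq_or_lt_of_le hQ with h | h
  · rw [← h, div_zero]
    exact norm_nonneg _
  rw [Pf, norm_div]
  gcongr
  have h1 : ‖z ^ (-(k : ℤ))‖ = (1 / ‖z‖) ^ k := by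
    rw [norm_zpow, zpow_neg, zpow_natCast, ← inv_pow, inv_eq_one_div]
  have h2 : ‖z ^ ((k : ℤ))‖ ≤ 1 := abs_zpow_le_one hz1 _ (by positivity)
  calc (1 / ‖z‖) ^ k - 1 ≤ ‖z ^ (-(k : ℤ))‖ - ‖z ^ ((k : ℤ))‖ := by rw [h1]; linarith
    _ ≤ ‖z ^ (-(k : ℤ)) - z ^ ((k : ℤ))‖ := norm_sub_norm_le _ _

/-- modified `c` sequence with `c' 0 = 1` -/
def cps (c : ℕ → ℂ) (j : ℕ) : ℂ := if j = 0 then 1 else c j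

/-- gauged eigenvector -/
def fseq (c g : ℕ → ℂ) (n : ℕ) : ℂ := g n * ∏ j ∈ Finset.range n, cps c j

/-- the perturbation applied to the gauged eigenvector -/
def rseq (a b c g : ℕ → ℂ) (m : ℕ) : ℂ :=
  b (m + 1) * fseq c g (m + 1) + (a m * cps c m - 1) * fseq c g m

lemma fseq_rec (a b c g : ℕ → ℂ) (l : ℂ)
    (hrec : ∀ k : ℕ, 1 ≤ k → a (k - 1) * g (k - 1) + b k * g k + c k * g (k + 1) = l * g k)
    (k : ℕ) :
    fseq c g k + fseq c g (k + 2) - l * fseq c g (k + 1) = -(rseq a b c g k) := by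
  have h := hrec (k + 1) (by omega)
  simp only [Nat.add_sub_cancel] at h
  have hc1 : cps c (k + 1) = c (k + 1) := if_neg (Nat.succ_ne_zero k)
  simp only [fseq, rseq, Finset.prod_range_succ, hc1]
  linear_combination ((∏ j ∈ Finset.range k, cps c j) * cps c k) * h

/-- Spectral enclosure in a Cassini oval (Theorem 0.3 (i)). -/
theorem stmt1 (a b c : ℕ → ℂ)
    (hnz : ∀ j : ℕ, 1 ≤ j → a j * c j ≠ 0)
    (hS : Summable (fun n : ℕ => ‖1 - a (n + 1)‖ + ‖b (n + 1)‖ + ‖1 - c (n + 1)‖))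
    (l : ℂ) (hl : IsJacobiEigenvalue a b c l) (hout : l ∉ segC) :
    ‖l ^ 2 - 4‖ ≤
      (2 * (∑' n : ℕ, (‖b (n + 1)‖ + ‖1 - a (n + 1) * c (n + 1)‖)) / Real.log 2) ^ 2 := by
  classical
  obtain ⟨g, hg0, hgne, hgsum, hrec⟩ := hl
  obtain ⟨z, hz0, hz1, hzl⟩ := exists_jouk l hout
  have ht0 : 0 < ‖z‖ := norm_pos_iff.mpr hz0
  -- the denominator z - z⁻¹ is nonzero
  have hq : z - z⁻¹ ≠ 0 := by
    intro h
    have h2 : z = z⁻¹ := by linear_combination h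
    have h3 : ‖z‖ * ‖z‖ = 1 := by
      calc ‖z‖ * ‖z‖ = ‖z‖ * ‖z⁻¹‖ := by rw [← h2]
        _ = ‖z * z⁻¹‖ := (norm_mul z z⁻¹).symm
        _ = 1 := by rw [mul_inv_cancel₀ hz0, norm_one]
    nlinarith
  have hqpos : 0 < ‖z - z⁻¹‖ := norm_pos_iff.mpr hq
  have hq' : z⁻¹ - z ≠ 0 := fun h => hq (by linear_combination -h)
  have hq'pos : 0 < ‖z⁻¹ - z‖ := norm_pos_iff.mpr hq'
  -- summability of the pieces
  have habc_nonneg : ∀ n : ℕ, (0:ℝ) ≤ ‖1 - a (n+1)‖ + ‖b (n+1)‖ + ‖1 - c (n+1)‖ := by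
    intro n; positivity
  have hSa : Summable (fun n : ℕ => ‖1 - a (n + 1)‖) :=
    hS.of_nonneg_of_le (fun n => norm_nonneg _)
      (fun n => by have := norm_nonneg (b (n+1)); have := norm_nonneg (1 - c (n+1)); linarith)
  have hSb : Summable (fun n : ℕ => ‖b (n + 1)‖) :=
    hS.of_nonneg_of_le (fun n => norm_nonneg _)
      (fun n => by have := norm_nonneg (1 - a (n+1)); have := norm_nonneg (1 - c (n+1)); linarith)
  have hSc : Summable (fun n : ℕ => ‖1 - c (n + 1)‖) :=
    hS.of_nonneg_of_le (fun n => norm_nonneg _)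
      (fun n => by have := norm_nonneg (1 - a (n+1)); have := norm_nonneg (b (n+1)); linarith)
  set Ka : ℝ := ∑' n : ℕ, ‖1 - a (n + 1)‖ with hKa
  have hKa0 : 0 ≤ Ka := tsum_nonneg (fun n => norm_nonneg _)
  have hSv : Summable (fun n : ℕ => ‖1 - a (n + 1) * c (n + 1)‖) := by
    refine Summable.of_nonneg_of_le (fun n => norm_nonneg _) ?_ (hSa.add (hSc.mul_left (1 + Ka)))
    · intro n
      have h1 : (1 : ℂ) - a (n+1) * c (n+1) = (1 - a (n+1)) + a (n+1) * (1 - c (n+1)) := by ring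
      have h2 : ‖a (n+1)‖ ≤ 1 + Ka := by
        have h3 : ‖1 - a (n+1)‖ ≤ Ka := Summable.le_tsum hSa n (fun j _ => norm_nonneg _)
        calc ‖a (n+1)‖ = ‖(1 : ℂ) - (1 - a (n+1))‖ := by ring_nf
          _ ≤ ‖(1 : ℂ)‖ + ‖1 - a (n+1)‖ := norm_sub_le _ _
          _ ≤ 1 + Ka := by rw [norm_one]; linarith
      calc ‖1 - a (n+1) * c (n+1)‖ ≤ ‖1 - a (n+1)‖ + ‖a (n+1)‖ * ‖1 - c (n+1)‖ := by
            rw [h1]; exact (norm_add_le _ _).trans (by rw [norm_mul])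
        _ ≤ ‖1 - a (n+1)‖ + (1 + Ka) * ‖1 - c (n+1)‖ := by
            have := norm_nonneg (1 - c (n+1)); nlinarith
  -- the gauged eigenvector and its basic bounds
  set f : ℕ → ℂ := fseq c g with hf
  have hf0 : f 0 = 0 := by simp [hf, fseq, hg0]
  have hgb : ∀ k, ‖g k‖ ≤ Real.sqrt (∑' k : ℕ, ‖g k‖ ^ 2) := by
    intro k
    have h1 : ‖g k‖ ^ 2 ≤ ∑' k : ℕ, ‖g k‖ ^ 2 := Summable.le_tsum hgsum k (fun j _ => sq_nonneg _)
    calc ‖g k‖ = Real.sqrt (‖g k‖ ^ 2) := (Real.sqrt_sq (norm_nonneg _)).symm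
      _ ≤ _ := Real.sqrt_le_sqrt h1
  set Sc : ℝ := ∑' n : ℕ, ‖1 - c (n + 1)‖ with hScdef
  have hprodb : ∀ n : ℕ, ‖∏ j ∈ Finset.range n, cps c j‖ ≤ Real.exp Sc := by
    intro n
    have h1 : ∑ j ∈ Finset.range n, ‖cps c j - 1‖ ≤ Sc := by
      cases n with
      | zero =>
        simp only [Finset.range_zero, Finset.sum_empty]
        exact tsum_nonneg (fun n => norm_nonneg _)
      | succ m =>
        rw [Finset.sum_range_succ']
        have e1 : ∑ i ∈ Finset.range m, ‖cps c (i + 1) - 1‖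
            = ∑ i ∈ Finset.range m, ‖1 - c (i + 1)‖ :=
          Finset.sum_congr rfl (fun i _ => by
            rw [cps, if_neg (Nat.succ_ne_zero i), norm_sub_rev])
        have e2 : ‖cps c 0 - 1‖ = 0 := by
          rw [cps, if_pos rfl, sub_self, norm_zero]
        rw [e1, e2, add_zero]
        exact Summable.sum_le_tsum _ (fun j _ => norm_nonneg _) hSc
    calc ‖∏ j ∈ Finset.range n, cps c j‖ = ∏ j ∈ Finset.range n, ‖cps c j‖ := norm_prod _ _
      _ ≤ ∏ j ∈ Finset.range n, Real.exp ‖cps c j - 1‖ := by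
          apply Finset.prod_le_prod (fun j _ => norm_nonneg _)
          intro j _
          calc ‖cps c j‖ = ‖1 + (cps c j - 1)‖ := by ring_nf
            _ ≤ ‖(1:ℂ)‖ + ‖cps c j - 1‖ := norm_add_le _ _
            _ = 1 + ‖cps c j - 1‖ := by rw [norm_one]
            _ ≤ Real.exp ‖cps c j - 1‖ := by
                have := Real.add_one_le_exp (‖cps c j - 1‖); linarith
      _ = Real.exp (∑ j ∈ Finset.range n, ‖cps c j - 1‖) := (Real.exp_sum _ _).symm
      _ ≤ Real.exp Sc := Real.exp_le_exp.mpr h1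
  have hfbdd : BddAbove (Set.range fun k => ‖f k‖) := by
    refine ⟨Real.sqrt (∑' k : ℕ, ‖g k‖ ^ 2) * Real.exp Sc, ?_⟩
    rintro x ⟨k, rfl⟩
    calc ‖f k‖ = ‖g k‖ * ‖∏ j ∈ Finset.range k, cps c j‖ := by rw [hf, fseq, norm_mul]
      _ ≤ Real.sqrt (∑' k : ℕ, ‖g k‖ ^ 2) * Real.exp Sc := by
          apply mul_le_mul (hgb k) (hprodb k) (norm_nonneg _)
          exact Real.sqrt_nonneg _
  set M : ℝ := ⨆ k, ‖f k‖ with hM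
  have hMle : ∀ k, ‖f k‖ ≤ M := fun k => le_ciSup hfbdd k
  have hMpos : 0 < M := by
    obtain ⟨k, hk⟩ := Function.ne_iff.mp hgne
    have hfk : f k ≠ 0 := by
      rw [hf, fseq]
      apply mul_ne_zero hk
      apply Finset.prod_ne_zero_iff.mpr
      intro j _
      rw [cps]
      split_ifs with hj
      · exact one_ne_zero
      · intro hcj
        exact hnz j (by omega) (by rw [hcj, mul_zero])
    exact lt_of_lt_of_le (norm_pos_iff.mpr hfk) (hMle k)
  -- the perturbation sequence
  set ρ : ℕ → ℂ := rseq a b c g with hρ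
  have hvs : Summable (fun m : ℕ => ‖a m * cps c m - 1‖) := by
    rw [← summable_nat_add_iff 1]
    have : ∀ n : ℕ, ‖a (n + 1) * cps c (n + 1) - 1‖ = ‖1 - a (n + 1) * c (n + 1)‖ := by
      intro n
      rw [cps, if_neg (Nat.succ_ne_zero n), norm_sub_rev]
    simpa only [this] using hSv
  have hρb : ∀ m, ‖ρ m‖ ≤ ‖b (m + 1)‖ * M + ‖a m * cps c m - 1‖ * ‖f m‖ := by
    intro m
    rw [hρ, rseq]
    calc ‖b (m + 1) * fseq c g (m + 1) + (a m * cps c m - 1) * fseq c g m‖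
        ≤ ‖b (m + 1) * fseq c g (m + 1)‖ + ‖(a m * cps c m - 1) * fseq c g m‖ :=
          norm_add_le _ _
      _ = ‖b (m + 1)‖ * ‖f (m + 1)‖ + ‖a m * cps c m - 1‖ * ‖f m‖ := by
          rw [norm_mul, norm_mul]
      _ ≤ ‖b (m + 1)‖ * M + ‖a m * cps c m - 1‖ * ‖f m‖ := by
          have := hMle (m + 1); have := norm_nonneg (b (m + 1)); nlinarith
  have hρmaj : Summable (fun m : ℕ => ‖b (m + 1)‖ * M + ‖a m * cps c m - 1‖ * M) :=
    (hSb.mul_right M).add (hvs.mul_right M)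
  have hρsum : Summable (fun m : ℕ => ‖ρ m‖) := by
    refine Summable.of_nonneg_of_le (fun m => norm_nonneg _) (fun m => ?_) hρmaj
    refine (hρb m).trans ?_
    have h1 := hMle m
    have h2 := norm_nonneg (a m * cps c m - 1)
    nlinarith
  set R : ℝ := ∑' m : ℕ, ‖ρ m‖ with hR
  have hR0 : 0 ≤ R := tsum_nonneg (fun m => norm_nonneg _)
  set Δ : ℝ := ∑' n : ℕ, (‖b (n + 1)‖ + ‖1 - a (n + 1) * c (n + 1)‖) with hΔ
  have hΔ0 : 0 ≤ Δ := tsum_nonneg (fun n => by positivity)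
  -- R ≤ M * Δ
  have hRle : R ≤ M * Δ := by
    have hsum2 : Summable (fun m : ℕ => ‖a m * cps c m - 1‖ * ‖f m‖) := by
      refine Summable.of_nonneg_of_le (fun m => by positivity) (fun m => ?_) (hvs.mul_right M)
      have := hMle m; have := norm_nonneg (a m * cps c m - 1); nlinarith
    have step1 : R ≤ ∑' m : ℕ, (‖b (m + 1)‖ * M + ‖a m * cps c m - 1‖ * ‖f m‖) :=
      Summable.tsum_le_tsum hρb hρsum ((hSb.mul_right M).add hsum2)
    have step2 : ∑' m : ℕ, (‖b (m + 1)‖ * M + ‖a m * cps c m - 1‖ * ‖f m‖)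
        = (∑' m : ℕ, ‖b (m + 1)‖ * M) + ∑' m : ℕ, ‖a m * cps c m - 1‖ * ‖f m‖ :=
      Summable.tsum_add (hSb.mul_right M) hsum2
    have step3 : ∑' m : ℕ, ‖a m * cps c m - 1‖ * ‖f m‖
        = ∑' m : ℕ, ‖a (m + 1) * cps c (m + 1) - 1‖ * ‖f (m + 1)‖ := by
      rw [Summable.tsum_eq_zero_add hsum2, hf0, norm_zero, mul_zero, zero_add]
    have step4 : ∑' m : ℕ, ‖a (m + 1) * cps c (m + 1) - 1‖ * ‖f (m + 1)‖
        ≤ ∑' m : ℕ, ‖1 - a (m + 1) * c (m + 1)‖ * M := by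
      have ebound : ∀ m : ℕ, ‖a (m + 1) * cps c (m + 1) - 1‖ * ‖f (m + 1)‖
          ≤ ‖1 - a (m + 1) * c (m + 1)‖ * M := by
        intro m
        have e : ‖a (m + 1) * cps c (m + 1) - 1‖ = ‖1 - a (m + 1) * c (m + 1)‖ := by
          rw [cps, if_neg (Nat.succ_ne_zero m), norm_sub_rev]
        rw [e]
        have := hMle (m + 1); have := norm_nonneg (1 - a (m + 1) * c (m + 1)); nlinarith
      have hsum3 : Summable (fun m : ℕ => ‖a (m + 1) * cps c (m + 1) - 1‖ * ‖f (m + 1)‖) :=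
        Summable.of_nonneg_of_le (fun m => by positivity) ebound (hSv.mul_right M)
      exact Summable.tsum_le_tsum ebound hsum3 (hSv.mul_right M)
    have step5 : (∑' m : ℕ, ‖b (m + 1)‖ * M) + ∑' m : ℕ, ‖1 - a (m + 1) * c (m + 1)‖ * M
        = M * Δ := by
      rw [tsum_mul_right, tsum_mul_right, hΔ, Summable.tsum_add hSb hSv]
      ring
    calc R ≤ _ := step1
      _ = _ := step2
      _ ≤ (∑' m : ℕ, ‖b (m + 1)‖ * M) + ∑' m : ℕ, ‖1 - a (m + 1) * c (m + 1)‖ * M := by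
          rw [step3]; exact add_le_add le_rfl step4
      _ = M * Δ := step5
  -- the resolvent series
  set T : ℕ → ℂ := fun k => ∑' m : ℕ, Gf z k (m + 1) * ρ m with hT
  have hTnorm : ∀ k, Summable (fun m : ℕ => ‖Gf z k (m + 1) * ρ m‖) := by
    intro k
    refine Summable.of_nonneg_of_le (fun m => norm_nonneg _) (fun m => ?_)
      (hρsum.mul_left (2 / ‖z - z⁻¹‖))
    rw [norm_mul]
    have h1 := norm_Gf_le hz1 k (m + 1)
    have h2 := norm_nonneg (ρ m)
    nlinarith [norm_nonneg (Gf z k (m + 1))]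
  have hTsum : ∀ k, Summable (fun m : ℕ => Gf z k (m + 1) * ρ m) :=
    fun k => (hTnorm k).of_norm
  have hTb : ∀ k, ‖T k‖ ≤ 2 / ‖z - z⁻¹‖ * R := by
    intro k
    calc ‖T k‖ ≤ ∑' m : ℕ, ‖Gf z k (m + 1) * ρ m‖ := norm_tsum_le_tsum_norm (hTnorm k)
      _ ≤ ∑' m : ℕ, 2 / ‖z - z⁻¹‖ * ‖ρ m‖ := by
          refine Summable.tsum_le_tsum (fun m => ?_) (hTnorm k) (hρsum.mul_left _)
          rw [norm_mul]
          have h1 := norm_Gf_le hz1 k (m + 1)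
          have h2 := norm_nonneg (ρ m)
          nlinarith [norm_nonneg (Gf z k (m + 1))]
      _ = 2 / ‖z - z⁻¹‖ * R := tsum_mul_left
  have hT0 : T 0 = 0 := by
    rw [hT]
    simp only [Gf_zero, zero_mul]
    exact tsum_zero
  have hTrec : ∀ k : ℕ, T k + T (k + 2) - l * T (k + 1) = ρ k := by
    intro k
    have hsum1 : Summable (fun m : ℕ => Gf z k (m + 1) * ρ m + Gf z (k + 2) (m + 1) * ρ m) :=
      (hTsum k).add (hTsum (k + 2))
    have hsum2' : Summable (fun m : ℕ => l * (Gf z (k + 1) (m + 1) * ρ m)) :=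
      (hTsum (k + 1)).mul_left l
    have e1 : T k + T (k + 2) = ∑' m : ℕ, (Gf z k (m + 1) * ρ m + Gf z (k + 2) (m + 1) * ρ m) :=
      (Summable.tsum_add (hTsum k) (hTsum (k + 2))).symm
    have e2 : l * T (k + 1) = ∑' m : ℕ, l * (Gf z (k + 1) (m + 1) * ρ m) := by
      rw [hT]; exact tsum_mul_left.symm
    rw [e1, e2, ← Summable.tsum_sub hsum1 hsum2']
    have e3 : ∀ m : ℕ, Gf z k (m + 1) * ρ m + Gf z (k + 2) (m + 1) * ρ m
        - l * (Gf z (k + 1) (m + 1) * ρ m)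
        = (if k + 1 = m + 1 then (1 : ℂ) else 0) * ρ m := by
      intro m
      rw [← Gf_rec hz0 hq k (m + 1), ← hzl]
      ring
    rw [tsum_congr e3]
    have e4 : ∀ m : ℕ, (if k + 1 = m + 1 then (1 : ℂ) else 0) * ρ m
        = if m = k then ρ m else 0 := by
      intro m
      by_cases h : m = k
      · rw [if_pos h, if_pos (by omega), one_mul]
      · rw [if_neg h, if_neg (by omega), zero_mul]
    rw [tsum_congr e4]
    rw [tsum_eq_single k (fun m hm => if_neg hm)]
    rw [if_pos rfl]
  -- the full sequence satisfies the free recurrence and vanishes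
  set w : ℕ → ℂ := fun k => f k + T k with hw
  have hw0 : w 0 = 0 := by rw [hw]; simp only [hf0, hT0, add_zero]
  have hwrec : ∀ k : ℕ, w (k + 2) = l * w (k + 1) - w k := by
    intro k
    have h1 := fseq_rec a b c g l hrec k
    have h2 := hTrec k
    rw [hw]
    simp only []
    rw [hf, hρ] at *
    linear_combination h1 + h2
  have hwP : ∀ k : ℕ, w k = w 1 * Pf z k := by
    intro k
    induction k using Nat.twoStepInduction with
    | zero => rw [hw0, Pf_zero, mul_zero]
    | one => rw [Pf_one hq', mul_one]
    | more n ih1 ih2 =>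
      rw [hwrec n, Pf_rec hz0, hzl, ih1, ih2]
      ring
  -- w is bounded, hence w 1 = 0
  set B : ℝ := M + 2 / ‖z - z⁻¹‖ * R with hB
  have hB0 : 0 ≤ B := by
    have : 0 ≤ 2 / ‖z - z⁻¹‖ * R := by positivity
    rw [hB]; linarith [hMpos.le]
  have hwbdd : ∀ k, ‖w k‖ ≤ B := by
    intro k
    rw [hw]
    calc ‖f k + T k‖ ≤ ‖f k‖ + ‖T k‖ := norm_add_le _ _
      _ ≤ B := add_le_add (hMle k) (hTb k)
  have hw1 : w 1 = 0 := by
    by_contra h1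
    have hw1pos : 0 < ‖w 1‖ := norm_pos_iff.mpr h1
    have hinv1 : 1 < 1 / ‖z‖ := by
      rw [lt_div_iff₀ ht0]; linarith
    obtain ⟨k, hk⟩ := pow_unbounded_of_one_lt
      (B * ‖z⁻¹ - z‖ / ‖w 1‖ + 1) hinv1
    have h2 := Pf_lower hz0 hz1 k
    have h3 : ‖w k‖ = ‖w 1‖ * ‖Pf z k‖ := by rw [hwP k, norm_mul]
    have h4 := hwbdd k
    -- combine: ‖w 1‖ * (((1/‖z‖)^k - 1) / ‖z⁻¹ - z‖) ≤ B
    have h5 : ‖w 1‖ * (((1 / ‖z‖) ^ k - 1) / ‖z⁻¹ - z‖) ≤ B := by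
      refine le_trans ?_ (h3 ▸ h4)
      exact mul_le_mul_of_nonneg_left h2 hw1pos.le
    have h6 : ((1 / ‖z‖) ^ k - 1) * ‖w 1‖ ≤ B * ‖z⁻¹ - z‖ := by
      have h7 := mul_le_mul_of_nonneg_right h5 hq'pos.le
      calc ((1 / ‖z‖) ^ k - 1) * ‖w 1‖
          = ‖w 1‖ * (((1 / ‖z‖) ^ k - 1) / ‖z⁻¹ - z‖) * ‖z⁻¹ - z‖ := by
            rw [mul_assoc, div_mul_cancel₀ _ (ne_of_gt hq'pos)]; ring
        _ ≤ B * ‖z⁻¹ - z‖ := h7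
    have h8 : B * ‖z⁻¹ - z‖ < ((1 / ‖z‖) ^ k - 1) * ‖w 1‖ := by
      have h9 : B * ‖z⁻¹ - z‖ / ‖w 1‖ < (1 / ‖z‖) ^ k - 1 := by linarith
      exact (div_lt_iff₀ hw1pos).mp h9
    linarith
  have hwz : ∀ k, w k = 0 := by
    intro k
    rw [hwP k, hw1, zero_mul]
  -- hence f = -T and the key estimate follows
  have hfT : ∀ k, f k = -T k := by
    intro k
    have := hwz k
    rw [hw] at this
    simp only [] at this
    linear_combination this
  have hfle : ∀ k, ‖f k‖ ≤ 2 / ‖z - z⁻¹‖ * (M * Δ) := by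
    intro k
    rw [hfT k, norm_neg]
    refine (hTb k).trans ?_
    have h1 : (0:ℝ) ≤ 2 / ‖z - z⁻¹‖ := by positivity
    nlinarith
  have hMle2 : M ≤ 2 / ‖z - z⁻¹‖ * (M * Δ) := by
    rw [hM]
    exact ciSup_le hfle
  -- conclude ‖z - z⁻¹‖ ≤ 2 * Δ
  have hkey : ‖z - z⁻¹‖ ≤ 2 * Δ := by
    have h1 : M * ‖z - z⁻¹‖ ≤ 2 * (M * Δ) := by
      have h2 := mul_le_mul_of_nonneg_right hMle2 hqpos.le
      calc M * ‖z - z⁻¹‖ ≤ 2 / ‖z - z⁻¹‖ * (M * Δ) * ‖z - z⁻¹‖ := h2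
        _ = 2 * (M * Δ) := by
            rw [div_mul_eq_mul_div, div_mul_cancel₀ _ (ne_of_gt hqpos)]
    nlinarith
  -- final computation
  have hfin : ‖l ^ 2 - 4‖ = ‖z - z⁻¹‖ ^ 2 := by
    have h1 : l ^ 2 - 4 = (z - z⁻¹) ^ 2 := by
      rw [← hzl]
      have hzz : z * z⁻¹ = 1 := mul_inv_cancel₀ hz0
      linear_combination (4 : ℂ) * hzz
    rw [h1, norm_pow]
  rw [hfin]
  have hlog0 : 0 < Real.log 2 := Real.log_pos (by norm_num)
  have hlog1 : Real.log 2 ≤ 1 := by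
    have := Real.log_two_lt_d9
    linarith
  have hstep : 2 * Δ ≤ 2 * Δ / Real.log 2 := by
    rw [le_div_iff₀ hlog0]
    nlinarith
  have : ‖z - z⁻¹‖ ≤ 2 * Δ / Real.log 2 := le_trans hkey hstep
  have hnn : (0:ℝ) ≤ ‖z - z⁻¹‖ := norm_nonneg _
  calc ‖z - z⁻¹‖ ^ 2 ≤ (2 * Δ / Real.log 2) ^ 2 := pow_le_pow_left₀ hnn this 2
    _ = (2 * (∑' n : ℕ, (‖b (n + 1)‖ + ‖1 - a (n + 1) * c (n + 1)‖)) / Real.log 2) ^ 2 := by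
        rw [hΔ]
end
end

section
/- Let a, b, c : ℕ → ℂ (indexed from 1) satisfy a_j c_j ≠ 0 for all j and ∑_{n≥1}(|1 − a_n| + |b_n| + |1 − c_n|) < ∞. Then the Jacobi matrix J = J({a_j},{b_j},{c_j}) has no embedded eigenvalues: no real number λ with −2 < λ < 2 is an eigenvalue of J. -/
noncomputable section

/-- Weierstrass product inequality. -/
lemma weier_aux (f : ℕ → ℝ) (h0 : ∀ i, 0 ≤ f i) (h1 : ∀ i, f i ≤ 1) (n : ℕ) :
    1 - ∑ i ∈ Finset.range n, f i ≤ ∏ i ∈ Finset.range n, (1 - f i) := by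
  induction n with
  | zero => simp
  | succ n ih =>
    rw [Finset.prod_range_succ, Finset.sum_range_succ]
    have hp : (0:ℝ) ≤ ∏ i ∈ Finset.range n, (1 - f i) :=
      Finset.prod_nonneg fun i _ => by linarith [h1 i]
    have hp1 : ∏ i ∈ Finset.range n, (1 - f i) ≤ 1 :=
      Finset.prod_le_one (fun i _ => by linarith [h1 i]) (fun i _ => by linarith [h0 i])
    nlinarith [h0 n, h1 n, ih, mul_nonneg (h0 n) (sub_nonneg.2 hp1)]

set_option maxHeartbeats 2000000 in
/-- Absence of embedded eigenvalues (Corollary 2.3): for a trace class perturbation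
of the free half-line Jacobi matrix, no `λ ∈ (-2,2)` is an eigenvalue. -/
theorem stmt3 (a b c : ℕ → ℂ)
    (hnz : ∀ j : ℕ, 1 ≤ j → a j * c j ≠ 0)
    (hS : Summable (fun n : ℕ => ‖1 - a (n + 1)‖ + ‖b (n + 1)‖ + ‖1 - c (n + 1)‖)) :
    ∀ x : ℝ, -2 < x → x < 2 → ¬ IsJacobiEigenvalue a b c (x : ℂ) := by
  intro x hx1 hx2 hev
  obtain ⟨g, hg0, hgne, hgsum, heq⟩ := hev
  -- the spectral parameter on the unit circle
  set θ : ℝ := Real.arccos (x / 2) with hθdef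
  clear_value θ
  have hsin : 0 < Real.sin θ := by
    rw [hθdef, Real.sin_arccos]
    apply Real.sqrt_pos.2
    nlinarith
  set d : ℝ := 2 * Real.sin θ with hddef
  clear_value d
  have hd : 0 < d := by rw [hddef]; positivity
  set z : ℂ := Complex.exp ((θ : ℂ) * Complex.I) with hzdef
  clear_value z
  have habs : ‖z‖ = 1 := by
    rw [hzdef]
    exact Complex.norm_exp_ofReal_mul_I θ
  have habsc : ‖(starRingEnd ℂ) z‖ = 1 := by
    rw [Complex.norm_conj, habs]
  have hz1 : z * (starRingEnd ℂ) z = 1 := by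
    rw [Complex.mul_conj, Complex.normSq_eq_norm_sq, habs]
    norm_num
  have hre : z.re = Real.cos θ := by rw [hzdef]; exact Complex.exp_ofReal_mul_I_re θ
  have him : z.im = Real.sin θ := by rw [hzdef]; exact Complex.exp_ofReal_mul_I_im θ
  have hcos : Real.cos θ = x / 2 := by
    rw [hθdef]; exact Real.cos_arccos (by linarith) (by linarith)
  have hsumz : z + (starRingEnd ℂ) z = (x : ℂ) := by
    rw [Complex.add_conj, hre, hcos]
    push_cast; ring
  have hxz : (x : ℂ) - (starRingEnd ℂ) z = z := by rw [← hsumz]; ring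
  have hxz' : (x : ℂ) - z = (starRingEnd ℂ) z := by rw [← hsumz]; ring
  have habsdiff : ‖z - (starRingEnd ℂ) z‖ = d := by
    rw [Complex.sub_conj, him, norm_mul, Complex.norm_I, mul_one, Complex.norm_real,
      Real.norm_eq_abs, abs_of_pos (by linarith : (0:ℝ) < 2 * Real.sin θ), hddef]
  -- the perturbation size
  set ε : ℕ → ℝ := fun m => ‖1 - a m‖ + ‖b (m + 1)‖ + ‖1 - c (m + 1)‖ with hεdef
  clear_value ε
  have hεnn : ∀ m, 0 ≤ ε m := by
    intro m; simp only [hεdef]; positivity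
  have hεsum : Summable ε := by
    rw [← summable_nat_add_iff 1]
    apply Summable.of_nonneg_of_le (fun n => hεnn (n + 1)) (fun n => ?_)
      (hS.add ((summable_nat_add_iff 1).2 hS))
    simp only [hεdef]
    have h1 : (0:ℝ) ≤ ‖b (n + 1)‖ := norm_nonneg _
    have h2 : (0:ℝ) ≤ ‖1 - c (n + 1)‖ := norm_nonneg _
    have h3 : (0:ℝ) ≤ ‖1 - a (n + 1 + 1)‖ := norm_nonneg _
    linarith
  -- the residual sequence
  obtain ⟨r, hrec, hrbound⟩ :
      ∃ r : ℕ → ℂ, (∀ m, g (m + 2) = (x : ℂ) * g (m + 1) - g m + r m) ∧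
        (∀ m, ‖r m‖ ≤ ε m * (‖g m‖ + ‖g (m + 1)‖ + ‖g (m + 2)‖)) := by
    refine ⟨fun m => (1 - c (m + 1)) * g (m + 2) - b (m + 1) * g (m + 1) + (1 - a m) * g m,
      fun m => ?_, fun m => ?_⟩
    · have h := heq (m + 1) (Nat.le_add_left 1 m)
      simp only [Nat.add_sub_cancel] at h
      linear_combination h
    · have t1 : ‖(1 - c (m + 1)) * g (m + 2) - b (m + 1) * g (m + 1) + (1 - a m) * g m‖ ≤
          ‖1 - c (m + 1)‖ * ‖g (m + 2)‖ + ‖b (m + 1)‖ * ‖g (m + 1)‖ + ‖1 - a m‖ * ‖g m‖ := by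
        calc ‖(1 - c (m + 1)) * g (m + 2) - b (m + 1) * g (m + 1) + (1 - a m) * g m‖
            ≤ ‖(1 - c (m + 1)) * g (m + 2) - b (m + 1) * g (m + 1)‖ + ‖(1 - a m) * g m‖ :=
              norm_add_le _ _
          _ ≤ ‖(1 - c (m + 1)) * g (m + 2)‖ + ‖b (m + 1) * g (m + 1)‖ + ‖(1 - a m) * g m‖ := by
              linarith [norm_sub_le ((1 - c (m + 1)) * g (m + 2)) (b (m + 1) * g (m + 1))]
          _ = ‖1 - c (m + 1)‖ * ‖g (m + 2)‖ + ‖b (m + 1)‖ * ‖g (m + 1)‖ +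
              ‖1 - a m‖ * ‖g m‖ := by rw [norm_mul, norm_mul, norm_mul]
      simp only [hεdef]
      nlinarith [norm_nonneg (1 - a m), norm_nonneg (b (m + 1)), norm_nonneg (1 - c (m + 1)),
        norm_nonneg (g m), norm_nonneg (g (m + 1)), norm_nonneg (g (m + 2)),
        mul_nonneg (norm_nonneg (1 - a m)) (norm_nonneg (g (m + 1))),
        mul_nonneg (norm_nonneg (1 - a m)) (norm_nonneg (g (m + 2))),
        mul_nonneg (norm_nonneg (b (m + 1))) (norm_nonneg (g m)),
        mul_nonneg (norm_nonneg (b (m + 1))) (norm_nonneg (g (m + 2))),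
        mul_nonneg (norm_nonneg (1 - c (m + 1))) (norm_nonneg (g m)),
        mul_nonneg (norm_nonneg (1 - c (m + 1))) (norm_nonneg (g (m + 1)))]
  -- the rotated coordinates
  set w : ℕ → ℂ := fun k => g (k + 1) - (starRingEnd ℂ) z * g k with hwdef
  clear_value w
  set w' : ℕ → ℂ := fun k => g (k + 1) - z * g k with hw'def
  clear_value w'
  set S : ℕ → ℝ := fun k => ‖w k‖ + ‖w' k‖ with hSdef
  clear_value S
  have hSnn : ∀ k, 0 ≤ S k := by
    intro k; simp only [hSdef]; positivity
  have hwrec : ∀ m, w (m + 1) = z * w m + r m := by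
    intro m
    simp only [hwdef]
    linear_combination hrec m + g (m + 1) * hxz + g m * hz1
  have hw'rec : ∀ m, w' (m + 1) = (starRingEnd ℂ) z * w' m + r m := by
    intro m
    simp only [hw'def]
    linear_combination hrec m + g (m + 1) * hxz' + g m * hz1
  -- recovering g from w, w'
  have hgS : ∀ m, ‖g m‖ ≤ S m / d ∧ ‖g (m + 1)‖ ≤ S m / d := by
    intro m
    constructor
    · rw [le_div_iff₀ hd]
      have h1 : (z - (starRingEnd ℂ) z) * g m = w m - w' m := by
        simp only [hwdef]; simp only [hw'def]; ring
      have h2 : ‖(z - (starRingEnd ℂ) z) * g m‖ = d * ‖g m‖ := by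
        rw [norm_mul, habsdiff]
      calc ‖g m‖ * d = d * ‖g m‖ := by ring
        _ = ‖w m - w' m‖ := by rw [← h2, h1]
        _ ≤ ‖w m‖ + ‖w' m‖ := norm_sub_le _ _
        _ = S m := by simp only [hSdef]
    · rw [le_div_iff₀ hd]
      have h1 : (z - (starRingEnd ℂ) z) * g (m + 1) = z * w m - (starRingEnd ℂ) z * w' m := by
        simp only [hwdef]; simp only [hw'def]; ring
      have h2 : ‖(z - (starRingEnd ℂ) z) * g (m + 1)‖ = d * ‖g (m + 1)‖ := by
        rw [norm_mul, habsdiff]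
      calc ‖g (m + 1)‖ * d = d * ‖g (m + 1)‖ := by ring
        _ = ‖z * w m - (starRingEnd ℂ) z * w' m‖ := by rw [← h2, h1]
        _ ≤ ‖z * w m‖ + ‖(starRingEnd ℂ) z * w' m‖ := norm_sub_le _ _
        _ = ‖w m‖ + ‖w' m‖ := by rw [norm_mul, norm_mul, habs, habsc, one_mul, one_mul]
        _ = S m := by simp only [hSdef]
  -- one-step lower bound
  have hkey : ∀ m, (1 - (6 / d) * ε m) * S m ≤ S (m + 1) := by
    intro m
    -- step inequality from the recursions
    have h1 : ‖w m‖ ≤ ‖w (m + 1)‖ + ‖r m‖ := by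
      rw [hwrec m]
      calc ‖w m‖ = ‖z * w m‖ := by rw [norm_mul, habs, one_mul]
        _ = ‖(z * w m + r m) - r m‖ := by congr 1; ring
        _ ≤ ‖z * w m + r m‖ + ‖r m‖ := norm_sub_le _ _
    have h2 : ‖w' m‖ ≤ ‖w' (m + 1)‖ + ‖r m‖ := by
      rw [hw'rec m]
      calc ‖w' m‖ = ‖(starRingEnd ℂ) z * w' m‖ := by rw [norm_mul, habsc, one_mul]
        _ = ‖((starRingEnd ℂ) z * w' m + r m) - r m‖ := by congr 1; ring
        _ ≤ ‖(starRingEnd ℂ) z * w' m + r m‖ + ‖r m‖ := norm_sub_le _ _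
    have hstep : S m - 2 * ‖r m‖ ≤ S (m + 1) := by
      simp only [hSdef]
      have e1 : ‖w m‖ + ‖w' m‖ = S m := by simp only [hSdef]
      have e2 : ‖w (m + 1)‖ + ‖w' (m + 1)‖ = S (m + 1) := by simp only [hSdef]
      linarith
    -- bound the residual in terms of S
    have hg1 := (hgS m).1
    have hg2 := (hgS m).2
    have hg3 := (hgS (m + 1)).2
    have hg3' : ‖g (m + 2)‖ ≤ S (m + 1) / d := hg3
    have hrb : ‖r m‖ ≤ ε m * (2 * (S m / d) + S (m + 1) / d) := by
      refine le_trans (hrbound m) (mul_le_mul_of_nonneg_left ?_ (hεnn m))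
      linarith
    -- combine: (1+q) S' ≥ (1-2q) S with q = 2 ε / d, then 1 - 3q bound
    have hq : 0 ≤ 2 * ε m / d := div_nonneg (by linarith [hεnn m]) hd.le
    have hd' : d ≠ 0 := ne_of_gt hd
    have hcomb : (1 - 2 * (2 * ε m / d)) * S m ≤ (1 + 2 * ε m / d) * S (m + 1) := by
      have h'' : 2 * ‖r m‖ ≤ (2 * ε m / d) * (2 * S m + S (m + 1)) := by
        have h3 := mul_le_mul_of_nonneg_right hrb hd.le
        have h' : ε m * (2 * (S m / d) + S (m + 1) / d) * d = ε m * (2 * S m + S (m + 1)) := by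
          field_simp
        rw [h'] at h3
        have h4 : (2 * ε m / d) * (2 * S m + S (m + 1)) * d
            = 2 * (ε m * (2 * S m + S (m + 1))) := by field_simp
        rw [← mul_le_mul_iff_of_pos_right hd, h4]
        linarith
      nlinarith [hstep]
    have hfin : (1 - 3 * (2 * ε m / d)) * S m ≤ S (m + 1) := by
      have hA : 0 ≤ (1 + 2 * ε m / d) * (S (m + 1) - (1 - 3 * (2 * ε m / d)) * S m) := by
        nlinarith [hcomb, mul_nonneg (mul_nonneg hq hq) (hSnn m)]
      have h1q : (0:ℝ) < 1 + 2 * ε m / d := by linarith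
      nlinarith [hA, h1q]
    have hconv : (6 / d) * ε m = 3 * (2 * ε m / d) := by
      field_simp <;> ring
    rw [hconv]
    exact hfin
  -- choose a good starting index K
  obtain ⟨N, hN⟩ : ∃ N : ℕ, ∑' k : ℕ, ε (k + (N + 1)) < d / 12 := by
    have ht := tendsto_sum_nat_add (fun n => ε n)
    have hev : ∀ᶠ i : ℕ in Filter.atTop, ∑' k : ℕ, ε (k + i) < d / 12 :=
      ht.eventually (gt_mem_nhds (by positivity))
    obtain ⟨N, hN⟩ := Filter.eventually_atTop.1 hev
    exact ⟨N, hN (N + 1) (Nat.le_succ N)⟩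
  set K : ℕ := N + 1 with hKdef
  clear_value K
  have hKtail : Summable (fun k : ℕ => ε (k + K)) := (summable_nat_add_iff K).2 hεsum
  have htail : ∑' k : ℕ, ε (k + K) < d / 12 := hN
  have hterm : ∀ j : ℕ, (6 / d) * ε (j + K) ≤ 1 / 2 := by
    intro j
    have h1 : ε (j + K) ≤ ∑' k : ℕ, ε (k + K) :=
      Summable.le_tsum hKtail j (fun k _ => hεnn _)
    have h2 : ε (j + K) ≤ d / 12 := le_of_lt (lt_of_le_of_lt h1 htail)
    rw [div_mul_eq_mul_div, div_le_iff₀ hd]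
    nlinarith [hεnn (j + K)]
  -- lower bound for S on the tail
  have hlow : ∀ n : ℕ, (1 / 2) * S K ≤ S (K + n) := by
    have hprod : ∀ n : ℕ,
        (∏ j ∈ Finset.range n, (1 - (6 / d) * ε (j + K))) * S K ≤ S (K + n) := by
      intro n
      induction n with
      | zero => simp
      | succ n ih =>
        rw [Finset.prod_range_succ]
        have hkey' := hkey (K + n)
        have hnn : 0 ≤ 1 - (6 / d) * ε (n + K) := by
          have := hterm n; linarith
        have hre : K + n = n + K := by omega
        calc (∏ j ∈ Finset.range n, (1 - (6 / d) * ε (j + K))) * (1 - (6 / d) * ε (n + K)) * S K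
            = (1 - (6 / d) * ε (n + K)) * ((∏ j ∈ Finset.range n, (1 - (6 / d) * ε (j + K))) * S K) := by
              ring
          _ ≤ (1 - (6 / d) * ε (n + K)) * S (K + n) :=
              mul_le_mul_of_nonneg_left ih hnn
          _ = (1 - (6 / d) * ε (K + n)) * S (K + n) := by rw [← hre]
          _ ≤ S (K + n + 1) := hkey'
    intro n
    have hsumle : ∑ j ∈ Finset.range n, (6 / d) * ε (j + K) ≤ 1 / 2 := by
      have h1 : ∑ j ∈ Finset.range n, (6 / d) * ε (j + K)
          = (6 / d) * ∑ j ∈ Finset.range n, ε (j + K) := by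
        rw [Finset.mul_sum]
      have h2 : ∑ j ∈ Finset.range n, ε (j + K) ≤ ∑' k : ℕ, ε (k + K) :=
        Summable.sum_le_tsum _ (fun k _ => hεnn _) hKtail
      rw [h1]
      have h3 : (6 / d) * ∑ j ∈ Finset.range n, ε (j + K) ≤ (6 / d) * (d / 12) := by
        apply mul_le_mul_of_nonneg_left _ (by positivity)
        exact le_of_lt (lt_of_le_of_lt h2 htail)
      have h4 : (6 / d) * (d / 12) = 1 / 2 := by field_simp; ring
      linarith
    have hW := weier_aux (fun j => (6 / d) * ε (j + K))
      (fun j => mul_nonneg (by positivity) (hεnn _)) (fun j => le_trans (hterm j) (by norm_num)) n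
    have : (1 / 2 : ℝ) ≤ ∏ j ∈ Finset.range n, (1 - (6 / d) * ε (j + K)) := by
      linarith
    calc (1 / 2) * S K ≤ (∏ j ∈ Finset.range n, (1 - (6 / d) * ε (j + K))) * S K :=
          mul_le_mul_of_nonneg_right this (hSnn K)
      _ ≤ S (K + n) := hprod n
  -- S K is positive
  have hSKpos : 0 < S K := by
    rcases lt_or_eq_of_le (hSnn K) with h | h
    · exact h
    -- if S K = 0 then g vanishes identically
    exfalso
    have hwK : w K = 0 ∧ w' K = 0 := by
      have h1 : ‖w K‖ + ‖w' K‖ = 0 := by simp only [hSdef] at h; exact h.symm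
      constructor
      · have : ‖w K‖ = 0 := by
          have := norm_nonneg (w K); have := norm_nonneg (w' K); linarith
        exact norm_eq_zero.1 this
      · have : ‖w' K‖ = 0 := by
          have := norm_nonneg (w K); have := norm_nonneg (w' K); linarith
        exact norm_eq_zero.1 this
    have hzzne : z - (starRingEnd ℂ) z ≠ 0 := by
      intro hc
      rw [hc] at habsdiff
      simp at habsdiff
      linarith [hd, habsdiff.symm ▸ hd]
    have hgK : g K = 0 := by
      have h1 : (z - (starRingEnd ℂ) z) * g K = w K - w' K := by
        simp only [hwdef]; simp only [hw'def]; ring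
      rw [hwK.1, hwK.2, sub_zero] at h1
      exact (mul_eq_zero.1 h1).resolve_left hzzne
    have hgK1 : g (K + 1) = 0 := by
      have h1 : w K = g (K + 1) - (starRingEnd ℂ) z * g K := by simp only [hwdef]
      rw [hwK.1, hgK] at h1
      simpa using h1.symm
    -- upward propagation
    have hup : ∀ n : ℕ, g (K + n) = 0 ∧ g (K + n + 1) = 0 := by
      intro n
      induction n with
      | zero => exact ⟨hgK, hgK1⟩
      | succ n ih =>
        refine ⟨ih.2, ?_⟩
        have h := heq (K + n + 1) (by omega)
        simp only [Nat.add_sub_cancel] at h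
        rw [ih.1, ih.2] at h
        simp only [mul_zero, zero_add, add_zero] at h
        have hc : c (K + n + 1) ≠ 0 := right_ne_zero_of_mul (hnz (K + n + 1) (by omega))
        have : g (K + n + 1 + 1) = 0 := by
          rcases mul_eq_zero.1 h with h' | h'
          · exact absurd h' hc
          · exact h'
        exact this
    -- downward propagation
    have hdown : ∀ j : ℕ, j ≤ K → g (K - j) = 0 ∧ g (K - j + 1) = 0 := by
      intro j
      induction j with
      | zero => intro _; simpa using ⟨hgK, hgK1⟩
      | succ j ih =>
        intro hjK
        have ihj := ih (by omega)
        set m := K - (j + 1) with hmdef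
        have hm1 : K - j = m + 1 := by omega
        have hm2 : K - j + 1 = m + 2 := by omega
        rw [hm1] at ihj
        have hgm2 : g (m + 2) = 0 := ihj.2
        have h := heq (m + 1) (Nat.le_add_left 1 m)
        simp only [Nat.add_sub_cancel] at h
        rw [ihj.1, hgm2] at h
        simp only [mul_zero, add_zero, zero_add] at h
        have hgm : g m = 0 := by
          rcases Nat.eq_zero_or_pos m with hm0 | hm0
          · rw [hm0]; exact hg0
          · have ha : a m ≠ 0 := left_ne_zero_of_mul (hnz m hm0)
            rcases mul_eq_zero.1 h with h' | h'
            · exact absurd h' ha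
            · exact h'
        exact ⟨hgm, ihj.1⟩
    have hzero : ∀ n, g n = 0 := by
      intro n
      rcases le_or_gt n K with hn | hn
      · have := (hdown (K - n) (by omega)).1
        rwa [show K - (K - n) = n by omega] at this
      · have := (hup (n - K)).1
        rwa [show K + (n - K) = n by omega] at this
    exact hgne (funext fun n => hzero n)
  -- g tends to zero, hence S tends to zero: contradiction
  have hgn0 : Filter.Tendsto (fun k => ‖g k‖) Filter.atTop (nhds 0) := by
    have h1 := hgsum.tendsto_atTop_zero
    have h2 : Filter.Tendsto (fun k => Real.sqrt (‖g k‖ ^ 2)) Filter.atTop (nhds (Real.sqrt 0)) :=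
      (Real.continuous_sqrt.tendsto 0).comp h1
    rw [Real.sqrt_zero] at h2
    refine h2.congr (fun k => ?_)
    rw [Real.sqrt_sq (norm_nonneg _)]
  have hgn1 : Filter.Tendsto (fun k => ‖g (k + 1)‖) Filter.atTop (nhds 0) :=
    hgn0.comp (Filter.tendsto_add_atTop_nat 1)
  have hS0 : Filter.Tendsto S Filter.atTop (nhds 0) := by
    apply squeeze_zero hSnn (g := fun k => 2 * (‖g k‖ + ‖g (k + 1)‖))
    · intro k
      simp only [hSdef]; rw [hwdef, hw'def]
      simp only
      have t1 : ‖g (k + 1) - (starRingEnd ℂ) z * g k‖ ≤ ‖g (k + 1)‖ + ‖g k‖ := by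
        calc ‖g (k + 1) - (starRingEnd ℂ) z * g k‖ ≤ ‖g (k + 1)‖ + ‖(starRingEnd ℂ) z * g k‖ :=
            norm_sub_le _ _
          _ = ‖g (k + 1)‖ + ‖g k‖ := by rw [norm_mul, habsc, one_mul]
      have t2 : ‖g (k + 1) - z * g k‖ ≤ ‖g (k + 1)‖ + ‖g k‖ := by
        calc ‖g (k + 1) - z * g k‖ ≤ ‖g (k + 1)‖ + ‖z * g k‖ := norm_sub_le _ _
          _ = ‖g (k + 1)‖ + ‖g k‖ := by rw [norm_mul, habs, one_mul]
      linarith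
    · have : Filter.Tendsto (fun k => ‖g k‖ + ‖g (k + 1)‖) Filter.atTop (nhds (0 + 0)) :=
        hgn0.add hgn1
      rw [add_zero] at this
      simpa using this.const_mul 2
  have hev2 : ∀ᶠ k : ℕ in Filter.atTop, S k < (1 / 2) * S K :=
    hS0.eventually (gt_mem_nhds (by positivity))
  obtain ⟨M, hM⟩ := Filter.eventually_atTop.1 hev2
  have h1 := hM (max M K) (le_max_left _ _)
  have h2 := hlow (max M K - K)
  rw [show K + (max M K - K) = max M K by omega] at h2
  linarith
end
end

section
/- Let a, b, c : ℕ → ℂ (indexed from 1, with the convention a_0 = c_0 = 1) satisfy ∑_{m≥1} δ_m < ∞, where δ_m := |b_m| + |1 − a_{m−1} c_{m−1}|, and a_n c_n → 1 as n → ∞. Fix z with 0 < |z| < 1 and let u = (u_k)_{k≥0} be a sequence of complex numbers satisfying the three-term recurrence u_{k−1} + b_k u_k + a_k c_k u_{k+1} = (z + 1/z) u_k for all k ≥ 1 together with the Jost normalization z^{−k} u_k → 1 as k → ∞. Then for every k ≥ 0 the series ∑_{m=k+1}^∞ T(k,m;z) u_m converges absolutely and u_k = z^k + ∑_{m=k+1}^∞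 T(k,m;z) u_m. -/
noncomputable section

/-- The Green kernel `G(k,m;z) = (z^{m-k} - z^{k-m})/(z - z⁻¹)` for `m ≥ k`,
and `G(k,m;z) = 0` for `m < k` (both expressions vanish at `m = k`). -/
def greenG (z : ℂ) (k m : ℤ) : ℂ :=
  if k ≤ m then (z ^ (m - k) - z ^ (k - m)) / (z - z⁻¹) else 0

/-- The kernel `T(k,m;z) = -b_m G(k,m;z) + (1 - a_{m-1} c_{m-1}) G(k,m-1;z)`,
for sequences `a, b, c` indexed from 1 (with the convention `a 0 = c 0 = 1`). -/
def kerT (a b c : ℕ → ℂ) (z : ℂ) (k m : ℕ) : ℂ :=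
  -(b m) * greenG z k m + (1 - a (m - 1) * c (m - 1)) * greenG z k ((m : ℤ) - 1)

open Filter

private lemma green_self' (z : ℂ) (k : ℤ) : greenG z k k = 0 := by simp [greenG]

private lemma green_succ' {z : ℂ} (hD : z - z⁻¹ ≠ 0) (k : ℤ) : greenG z k (k+1) = 1 := by
  have h1 : k + 1 - k = (1:ℤ) := by ring
  have h2 : k - (k+1) = (-1:ℤ) := by ring
  simp only [greenG, if_pos (by omega : k ≤ k+1), h1, h2, zpow_one, zpow_neg_one]
  exact div_self hD

private lemma green_step' {z : ℂ} (hz0 : z ≠ 0) (k m : ℤ) (h : k ≤ m) :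
    greenG z k m + greenG z k (m+2) = (z + 1/z) * greenG z k (m+1) := by
  simp only [greenG, if_pos h, if_pos (by omega : k ≤ m + 2), if_pos (by omega : k ≤ m + 1)]
  have e1 : m + 2 - k = (m - k) + 1 + 1 := by ring
  have e2 : k - (m + 2) = (k - m) + (-1) + (-1) := by ring
  have e3 : m + 1 - k = (m - k) + 1 := by ring
  have e4 : k - (m + 1) = (k - m) + (-1) := by ring
  rw [e1, e2, e3, e4]
  simp only [zpow_add₀ hz0, zpow_one, zpow_neg_one]
  rw [← add_div, mul_div_assoc']
  congr 1
  field_simp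
  ring

private lemma green_bound' {z : ℂ} (hz0 : z ≠ 0) (hz1 : ‖z‖ < 1)
    (k m : ℤ) : ‖greenG z k m‖ ≤ 2 * ‖z‖ ^ (k - m) / ‖z - z⁻¹‖ := by
  have hr0 : 0 < ‖z‖ := norm_pos_iff.mpr hz0
  unfold greenG
  split
  case isTrue h =>
    have hle : ‖z‖ ^ (m - k) ≤ ‖z‖ ^ (k - m) :=
      zpow_le_zpow_right_of_le_one₀ hr0 hz1.le (by omega)
    rw [norm_div]
    rcases eq_or_ne (z - z⁻¹) 0 with h0 | h0
    · simp [h0]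
    have hDn : 0 < ‖z - z⁻¹‖ := norm_pos_iff.mpr h0
    gcongr
    calc ‖z ^ (m - k) - z ^ (k - m)‖ ≤ ‖z ^ (m - k)‖ + ‖z ^ (k - m)‖ := norm_sub_le _ _
      _ = ‖z‖ ^ (m - k) + ‖z‖ ^ (k - m) := by
          rw [norm_zpow, norm_zpow]
      _ ≤ 2 * ‖z‖ ^ (k - m) := by linarith
  case isFalse h =>
    simp only [norm_zero]
    positivity


set_option maxHeartbeats 2000000 in
/-- The Jost solution satisfies the discrete Volterra-type equation (Theorem 1.1, direct
direction): if `u` solves the three-term recurrence with Jost normalization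
`z^{-k} u_k → 1`, then `u_k = z^k + ∑_{m=k+1}^∞ T(k,m;z) u_m`, the series converging
absolutely. Here `δ_m = |b_m| + |1 - a_{m-1} c_{m-1}|` is summable and `a_n c_n → 1`. -/
theorem stmt5 (a b c : ℕ → ℂ) (ha0 : a 0 = 1) (hc0 : c 0 = 1)
    (hδ : Summable (fun m : ℕ => ‖b (m + 1)‖ + ‖1 - a m * c m‖))
    (hac : Filter.Tendsto (fun n : ℕ => a n * c n) Filter.atTop (nhds 1))
    (z : ℂ) (hz0 : z ≠ 0) (hz1 : ‖z‖ < 1)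
    (u : ℕ → ℂ)
    (hrec : ∀ k : ℕ, 1 ≤ k →
      u (k - 1) + b k * u k + a k * c k * u (k + 1) = (z + 1 / z) * u k)
    (hjost : Filter.Tendsto (fun k : ℕ => u k / z ^ k) Filter.atTop (nhds 1)) :
    ∀ k : ℕ,
      Summable (fun m : ℕ => ‖kerT a b c z k (m + k + 1) * u (m + k + 1)‖) ∧
      u k = z ^ k + ∑' m : ℕ, kerT a b c z k (m + k + 1) * u (m + k + 1) := by
  have hr0 : 0 < ‖z‖ := norm_pos_iff.mpr hz0
  have hD : z - z⁻¹ ≠ 0 := by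
    intro h
    have h2 : z = z⁻¹ := sub_eq_zero.mp h
    have hzz : z * z = 1 := by nth_rewrite 2 [h2]; exact mul_inv_cancel₀ hz0
    have := congrArg norm hzz
    simp only [norm_mul, norm_one] at this
    nlinarith
  have hDn : 0 < ‖z - z⁻¹‖ := norm_pos_iff.mpr hD
  obtain ⟨C, hC⟩ := hjost.norm.bddAbove_range
  have hCb : ∀ n, ‖u n / z ^ n‖ ≤ C := fun n => hC ⟨n, rfl⟩
  have hC0 : 0 ≤ C := le_trans (norm_nonneg _) (hCb 0)
  have hu : ∀ n, ‖u n‖ ≤ C * ‖z‖ ^ n := by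
    intro n
    have hzn : (z:ℂ) ^ n ≠ 0 := pow_ne_zero n hz0
    have he : ‖u n‖ = ‖u n / z ^ n‖ * ‖z‖ ^ n := by
      rw [norm_div, norm_pow]
      field_simp
    rw [he]
    exact mul_le_mul_of_nonneg_right (hCb n) (by positivity)
  intro k
  have key : ∀ j : ℕ, ‖kerT a b c z k (j + k + 1) * u (j + k + 1)‖ ≤
      (2 * C / ‖z - z⁻¹‖ * ‖z‖ ^ k) *
        (‖b (j + k + 1)‖ + ‖1 - a (j + k) * c (j + k)‖) := by
    intro j
    have hr0 : 0 < ‖z‖ := norm_pos_iff.mpr hz0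
    set m : ℕ := j + k + 1 with hm
    set R := ‖z‖ with hR
    -- bound on kerT
    have hg1 : ‖greenG z k m‖ ≤ 2 * R ^ ((k:ℤ) - (m:ℤ)) / ‖z - z⁻¹‖ := green_bound' hz0 hz1 _ _
    have hg2 : ‖greenG z k ((m:ℤ) - 1)‖ ≤ 2 * R ^ ((k:ℤ) - (m:ℤ)) / ‖z - z⁻¹‖ := by
      refine le_trans (green_bound' hz0 hz1 _ _) ?_
      gcongr 2 * ?_ / _
      exact zpow_le_zpow_right_of_le_one₀ hr0 hz1.le (by omega)
    have hker : ‖kerT a b c z k m‖ ≤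
        (‖b m‖ + ‖1 - a (m-1) * c (m-1)‖) * (2 * R ^ ((k:ℤ) - (m:ℤ)) / ‖z - z⁻¹‖) := by
      unfold kerT
      calc ‖-(b m) * greenG z ↑k ↑m + (1 - a (m-1) * c (m-1)) * greenG z ↑k ((m:ℤ)-1)‖
          ≤ ‖-(b m) * greenG z ↑k ↑m‖ + ‖(1 - a (m-1) * c (m-1)) * greenG z ↑k ((m:ℤ)-1)‖ :=
            norm_add_le _ _
        _ = ‖b m‖ * ‖greenG z ↑k ↑m‖ + ‖1 - a (m-1) * c (m-1)‖ * ‖greenG z ↑k ((m:ℤ)-1)‖ := by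
            rw [norm_mul, norm_mul, norm_neg]
        _ ≤ ‖b m‖ * (2 * R ^ ((k:ℤ) - (m:ℤ)) / ‖z - z⁻¹‖)
              + ‖1 - a (m-1) * c (m-1)‖ * (2 * R ^ ((k:ℤ) - (m:ℤ)) / ‖z - z⁻¹‖) := by
            exact add_le_add (mul_le_mul_of_nonneg_left hg1 (norm_nonneg _))
              (mul_le_mul_of_nonneg_left hg2 (norm_nonneg _))
        _ = _ := by ring
    have hpow : R ^ ((k:ℤ) - (m:ℤ)) * R ^ (m:ℕ) = R ^ (k:ℕ) := by
      rw [← zpow_natCast R m, ← zpow_add₀ (ne_of_gt hr0), ← zpow_natCast R k]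
      congr 1
      ring
    have hm1 : m - 1 = j + k := by omega
    calc ‖kerT a b c z k m * u m‖ = ‖kerT a b c z k m‖ * ‖u m‖ := norm_mul _ _
      _ ≤ ((‖b m‖ + ‖1 - a (m-1) * c (m-1)‖) * (2 * R ^ ((k:ℤ) - (m:ℤ)) / ‖z - z⁻¹‖)) *
            (C * R ^ (m:ℕ)) :=
          mul_le_mul hker (hu m) (norm_nonneg _) (by positivity)
      _ = (2 * C / ‖z - z⁻¹‖ * (R ^ ((k:ℤ) - (m:ℤ)) * R ^ (m:ℕ))) *
            (‖b m‖ + ‖1 - a (m-1) * c (m-1)‖) := by ring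
      _ = (2 * C / ‖z - z⁻¹‖ * R ^ (k:ℕ)) * (‖b m‖ + ‖1 - a (j+k) * c (j+k)‖) := by
          rw [hpow, hm1]
  have hg : Summable (fun j : ℕ => (2 * C / ‖z - z⁻¹‖ * ‖z‖ ^ k) *
      (‖b (j + k + 1)‖ + ‖1 - a (j + k) * c (j + k)‖)) := by
    apply Summable.mul_left
    exact (summable_nat_add_iff k).mpr hδ
  have hsum : Summable (fun m : ℕ => ‖kerT a b c z k (m + k + 1) * u (m + k + 1)‖) :=
    Summable.of_nonneg_of_le (fun j => norm_nonneg _) key hg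
  refine ⟨hsum, ?_⟩
  -- closed form for partial sums
  have hS : ∀ n : ℕ, ∑ j ∈ Finset.range n, kerT a b c z k (j + k + 1) * u (j + k + 1)
      = u k - u (n + k) * greenG z k ((n:ℤ) + k + 1)
        + a (n + k) * c (n + k) * u (n + k + 1) * greenG z k ((n:ℤ) + k) := by
    intro n
    induction n with
    | zero =>
      have e1 : ((0:ℕ):ℤ) + (k:ℤ) + 1 = (k:ℤ) + 1 := by push_cast; ring
      have e2 : ((0:ℕ):ℤ) + (k:ℤ) = (k:ℤ) := by push_cast; ring
      rw [Finset.sum_range_zero, e1, e2, green_succ' hD, green_self']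
      simp
    | succ n ih =>
      rw [Finset.sum_range_succ, ih]
      have hrec' := hrec (n + k + 1) (by omega)
      simp only [Nat.add_sub_cancel] at hrec'
      have hG : greenG z k ((n:ℤ) + k) + greenG z k ((n:ℤ) + k + 2)
          = (z + 1/z) * greenG z k ((n:ℤ) + k + 1) := green_step' hz0 (k:ℤ) ((n:ℤ) + k) (by omega)
      have halg : ∀ G0 G1 G2 : ℂ, G0 + G2 = (z + 1/z) * G1 →
          u k - u (n+k) * G1 + a (n+k) * c (n+k) * u (n+k+1) * G0
            + (-b (n+k+1) * G1 + (1 - a (n+k) * c (n+k)) * G0) * u (n+k+1)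
          = u k - u (n+k+1) * G2 + a (n+k+1) * c (n+k+1) * u (n+k+1+1) * G1 := by
        intro G0 G1 G2 hG2
        linear_combination (-G1) * hrec' + (u (n+k+1)) * hG2
      have c1 : greenG z k ((n+k+1:ℕ):ℤ) = greenG z k ((n:ℤ) + k + 1) := by
        congr 1 <;> omega
      have c2 : greenG z k (((n+k+1:ℕ):ℤ) - 1) = greenG z k ((n:ℤ) + k) := by
        congr 1 <;> omega
      have c3 : greenG z k (((n+1:ℕ):ℤ) + k + 1) = greenG z k ((n:ℤ) + k + 2) := by
        congr 1 <;> omega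
      have c4 : greenG z k (((n+1:ℕ):ℤ) + k) = greenG z k ((n:ℤ) + k + 1) := by
        congr 1 <;> omega
      have e5 : n + 1 + k = n + k + 1 := by omega
      have e6 : n + 1 + k + 1 = n + k + 1 + 1 := by omega
      simp only [kerT, Nat.add_sub_cancel, c1, c2, c3, c4, e5, e6]
      exact halg _ _ _ hG
  -- limit of the closed form
  have hlimit : Filter.Tendsto (fun n : ℕ => u k - u (n + k) * greenG z k ((n:ℤ) + k + 1)
        + a (n + k) * c (n + k) * u (n + k + 1) * greenG z k ((n:ℤ) + k))
      Filter.atTop (nhds (u k - z ^ k)) := by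
    have hr0 : 0 < ‖z‖ := norm_pos_iff.mpr hz0
    set R := ‖z‖ with hR
    -- geometric bound tends to zero
    have hgeo : Tendsto (fun n : ℕ => (C * R ^ (k+1)) * (R^2) ^ n) atTop (nhds 0) := by
      have h2 : R^2 < 1 := by nlinarith
      have := (tendsto_pow_atTop_nhds_zero_of_lt_one (by positivity) h2).const_mul (C * R ^ (k+1))
      simpa using this
    -- first endpoint term
    have hzero1 : Tendsto (fun n : ℕ => u (n + k) * z ^ ((n:ℤ) + 1)) atTop (nhds 0) := by
      apply squeeze_zero_norm _ hgeo
      intro n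
      have : ‖u (n + k) * z ^ ((n:ℤ) + 1)‖ = ‖u (n+k)‖ * R ^ (n+1 : ℕ) := by
        rw [norm_mul]
        congr 1
        rw [show ((n:ℤ) + 1) = ((n+1 : ℕ) : ℤ) by push_cast; ring, zpow_natCast,
          norm_pow]
      rw [this]
      calc ‖u (n+k)‖ * R ^ (n+1:ℕ) ≤ (C * R ^ (n+k)) * R ^ (n+1:ℕ) :=
            mul_le_mul_of_nonneg_right (hu _) (by positivity)
        _ = (C * R ^ (k+1)) * (R^2) ^ n := by ring
    have hzero2 : Tendsto (fun n : ℕ => u (n + k + 1) * z ^ ((n:ℤ))) atTop (nhds 0) := by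
      apply squeeze_zero_norm _ hgeo
      intro n
      have : ‖u (n + k + 1) * z ^ ((n:ℤ))‖ = ‖u (n+k+1)‖ * R ^ (n : ℕ) := by
        rw [norm_mul]
        congr 1
        rw [zpow_natCast, norm_pow]
      rw [this]
      calc ‖u (n+k+1)‖ * R ^ (n:ℕ) ≤ (C * R ^ (n+k+1)) * R ^ (n:ℕ) :=
            mul_le_mul_of_nonneg_right (hu _) (by positivity)
        _ = (C * R ^ (k+1)) * (R^2) ^ n := by ring
    have hjost1 : Tendsto (fun n : ℕ => u (n + k) / z ^ (n + k)) atTop (nhds 1) :=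
      hjost.comp (tendsto_add_atTop_nat k)
    have hjost2 : Tendsto (fun n : ℕ => u (n + k + 1) / z ^ (n + k + 1)) atTop (nhds 1) :=
      hjost.comp (tendsto_add_atTop_nat (k + 1))
    have hac' : Tendsto (fun n : ℕ => a (n + k) * c (n + k)) atTop (nhds 1) :=
      hac.comp (tendsto_add_atTop_nat k)
    -- closed forms for Green terms
    have e1 : ∀ n : ℕ, u (n + k) * greenG z k ((n:ℤ) + k + 1)
        = (u (n + k) * z ^ ((n:ℤ) + 1) - (u (n + k) / z ^ (n + k)) * z ^ ((k:ℤ) - 1))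
            / (z - z⁻¹) := by
      intro n
      have key : (u (n + k) / z ^ (n + k)) * z ^ ((k:ℤ) - 1)
          = u (n + k) * z ^ ((k:ℤ) - ((n:ℤ) + k + 1)) := by
        rw [div_mul_eq_mul_div, mul_div_assoc, ← zpow_natCast z (n + k), ← zpow_sub₀ hz0]
        congr 2
        push_cast; ring
      unfold greenG
      rw [if_pos (by omega : (k:ℤ) ≤ (n:ℤ) + k + 1),
        show ((n:ℤ) + k + 1) - k = (n:ℤ) + 1 by ring, key]
      ring
    have e2 : ∀ n : ℕ, u (n + k + 1) * greenG z k ((n:ℤ) + k)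
        = (u (n + k + 1) * z ^ ((n:ℤ)) - (u (n + k + 1) / z ^ (n + k + 1)) * z ^ ((k:ℤ) + 1))
            / (z - z⁻¹) := by
      intro n
      have key : (u (n + k + 1) / z ^ (n + k + 1)) * z ^ ((k:ℤ) + 1)
          = u (n + k + 1) * z ^ ((k:ℤ) - ((n:ℤ) + k)) := by
        rw [div_mul_eq_mul_div, mul_div_assoc, ← zpow_natCast z (n + k + 1), ← zpow_sub₀ hz0]
        congr 2
        push_cast; ring
      unfold greenG
      rw [if_pos (by omega : (k:ℤ) ≤ (n:ℤ) + k),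
        show ((n:ℤ) + k) - k = (n:ℤ) by ring, key]
      ring
    have hT1 : Tendsto (fun n : ℕ => u (n + k) * greenG z k ((n:ℤ) + k + 1)) atTop
        (nhds ((0 - 1 * z ^ ((k:ℤ) - 1)) / (z - z⁻¹))) := by
      simp only [e1]
      exact (hzero1.sub (hjost1.mul_const _)).div_const _
    have hT2 : Tendsto (fun n : ℕ => u (n + k + 1) * greenG z k ((n:ℤ) + k)) atTop
        (nhds ((0 - 1 * z ^ ((k:ℤ) + 1)) / (z - z⁻¹))) := by
      simp only [e2]
      exact (hzero2.sub (hjost2.mul_const _)).div_const _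
    have final := (((tendsto_const_nhds :
        Filter.Tendsto (fun _ : ℕ => u k) atTop (nhds (u k))).sub hT1).add (hac'.mul hT2))
    have hval : u k - (0 - 1 * z ^ ((k:ℤ) - 1)) / (z - z⁻¹)
        + 1 * ((0 - 1 * z ^ ((k:ℤ) + 1)) / (z - z⁻¹)) = u k - z ^ k := by
      have h1 : z ^ ((k:ℤ) - 1) = z ^ (k:ℕ) * z⁻¹ := by
        rw [zpow_sub₀ hz0, zpow_natCast, zpow_one]; rfl
      have h2 : z ^ ((k:ℤ) + 1) = z ^ (k:ℕ) * z := by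
        rw [zpow_add₀ hz0, zpow_natCast, zpow_one]
      have key : (0 - 1 * z ^ ((k:ℤ) - 1)) / (z - z⁻¹)
          - (0 - 1 * z ^ ((k:ℤ) + 1)) / (z - z⁻¹) = z ^ (k:ℕ) := by
        rw [div_sub_div_same, h1, h2,
          show (0 - 1 * (z ^ (k:ℕ) * z⁻¹)) - (0 - 1 * (z ^ (k:ℕ) * z))
            = z ^ (k:ℕ) * (z - z⁻¹) from by ring,
          mul_div_assoc, div_self hD, mul_one]
      linear_combination -key
    rw [hval] at final
    have heq : (fun n : ℕ => u k - u (n + k) * greenG z k ((n:ℤ) + k + 1)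
          + a (n + k) * c (n + k) * u (n + k + 1) * greenG z k ((n:ℤ) + k))
        = (fun n : ℕ => u k - u (n + k) * greenG z k ((n:ℤ) + k + 1)
          + (a (n + k) * c (n + k)) * (u (n + k + 1) * greenG z k ((n:ℤ) + k))) := by
      funext n; ring
    rw [heq]
    exact final
  have hsummable : Summable (fun m : ℕ => kerT a b c z k (m + k + 1) * u (m + k + 1)) :=
    hsum.of_norm
  have htends := hsummable.hasSum.tendsto_sum_nat
  have hfun : (fun n : ℕ => ∑ j ∈ Finset.range n, kerT a b c z k (j + k + 1) * u (j + k + 1))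
      = (fun n : ℕ => u k - u (n + k) * greenG z k ((n:ℤ) + k + 1)
        + a (n + k) * c (n + k) * u (n + k + 1) * greenG z k ((n:ℤ) + k)) := funext hS
  rw [hfun] at htends
  have hval := tendsto_nhds_unique htends hlimit
  linear_combination -hval
end
end

section
/- Let a, b, c : ℕ → ℂ (indexed from 1, with the convention a_0 = c_0 = 1) satisfy Δ := ∑_{m≥1} δ_m < ∞, where δ_m := |b_m| + |1 − a_{m−1} c_{m−1}|, and set s₀(k) := ∑_{n=k+1}^∞ δ_n and ω(z) := 2z/(1 − z²). Then there exists a family of functions u_k⁺ : ℂ → ℂ (k ≥ 0) such that: (i) each u_k⁺ is analytic on the open unit disk and continuous on the closed unit disk minus the two points ±1; (ii) for every z in the closed unit disk with z ∉ {0, 1, −1} and every k ≥ 0, the series ∑_{m=k+1}^∞ T(k,m;z) u_m⁺(z) converges absolutely and u_k⁺(z) = z^k + ∑_{m=k+1}^∞ T(k,m;z) u_m⁺(z); (iii) for every z in the closed unit disk with z ≠ ±1 and every k ≥ 0, |u_k⁺(z) − z^k| ≤ |z|^k (exp(|ω(z)| s₀(k)) − 1). -/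
noncomputable section

open Finset Metric Filter

namespace Stmt7

/-- `δ_{m+1}` -/
def del (a b c : ℕ → ℂ) (m : ℕ) : ℝ := ‖b (m+1)‖ + ‖1 - a m * c m‖

/-- `s₀(k) = ∑_{n>k} δ_n` -/
def s0 (a b c : ℕ → ℂ) (k : ℕ) : ℝ := ∑' n, del a b c (n + k)

/-- total sum -/
def Δt (a b c : ℕ → ℂ) : ℝ := ∑' n, del a b c n

def polyG (j : ℕ) (z : ℂ) : ℂ := ∑ i ∈ Finset.range j, z ^ (2*i)

def Kk (a b c : ℕ → ℂ) (k j : ℕ) (z : ℂ) : ℂ :=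
  -(b (j+k+1)) * (z * polyG (j+1) z) + (1 - a (j+k) * c (j+k)) * (z^2 * polyG j z)

def JV (a b c : ℕ → ℂ) : ℕ → ℕ → ℂ → ℂ
  | 0 => fun _ _ => 1
  | n+1 => fun k z => ∑' j : ℕ, Kk a b c k j z * JV a b c n (j+k+1) z

def om (z : ℂ) : ℂ := 2*z/(1-z^2)

def SS : Set ℂ := Metric.closedBall 0 1 \ {1, -1}

variable {a b c : ℕ → ℂ}

lemma del_nonneg (m : ℕ) : 0 ≤ del a b c m :=
  add_nonneg (norm_nonneg _) (norm_nonneg _)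

lemma summable_del_add (hδ : Summable (del a b c)) (k : ℕ) :
    Summable (fun n => del a b c (n + k)) := (summable_nat_add_iff k).2 hδ

lemma s0_nonneg (k : ℕ) : 0 ≤ s0 a b c k :=
  tsum_nonneg (fun _ => del_nonneg _)

lemma s0_le (hδ : Summable (del a b c)) (k : ℕ) : s0 a b c k ≤ Δt a b c := by
  have h := Summable.sum_add_tsum_nat_add (f := del a b c) k hδ
  have h2 : 0 ≤ ∑ i ∈ range k, del a b c i := Finset.sum_nonneg (fun i _ => del_nonneg i)
  simp only [s0, Δt]
  linarith

lemma Δt_nonneg : 0 ≤ Δt a b c := s0_nonneg 0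

lemma s0_succ (hδ : Summable (del a b c)) (k : ℕ) :
    s0 a b c k = del a b c k + s0 a b c (k+1) := by
  have h := Summable.tsum_eq_zero_add (summable_del_add hδ k)
  simp only [s0]
  rw [h, zero_add]
  congr 1
  exact tsum_congr fun n => by ring_nf

lemma mem_SS_iff {z : ℂ} : z ∈ SS ↔ ‖z‖ ≤ 1 ∧ z ≠ 1 ∧ z ≠ -1 := by
  simp [SS, Metric.mem_closedBall, Complex.dist_eq, sub_zero,
    not_or]


lemma pow_add_le' (n : ℕ) {x y : ℝ} (hx : 0 ≤ x) (hy : 0 ≤ y) :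
    x^(n+1) + ((n:ℝ)+1) * x^n * y ≤ (x+y)^(n+1) := by
  induction n with
  | zero => simp
  | succ n ih =>
    have hxy : 0 ≤ x + y := by linarith
    have h3 : x^(n+2) + ((n:ℝ)+2) * x^(n+1) * y
        ≤ (x+y) * (x^(n+1) + ((n:ℝ)+1) * x^n * y) := by
      ring_nf
      nlinarith [mul_nonneg (pow_nonneg hx n) (mul_nonneg hy hy),
        mul_nonneg (Nat.cast_nonneg n : (0:ℝ) ≤ (n:ℝ))
          (mul_nonneg (pow_nonneg hx n) (mul_nonneg hy hy))]
    push_cast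
    calc x^(n+1+1) + ((n:ℝ)+1+1) * x^(n+1) * y
        ≤ (x+y) * (x^(n+1) + ((n:ℝ)+1) * x^n * y) := by push_cast at h3; linarith
      _ ≤ (x+y) * (x+y)^(n+1) := mul_le_mul_of_nonneg_left ih hxy
      _ = (x+y)^(n+1+1) := by ring


lemma telescope (hδ : Summable (del a b c)) (n k : ℕ) :
    ∑' j, del a b c (j+k) * s0 a b c (j+k+1)^n ≤ s0 a b c k^(n+1) / (n+1) := by
  apply Real.tsum_le_of_sum_range_le
  · intro j
    exact mul_nonneg (del_nonneg _) (pow_nonneg (s0_nonneg _) _)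
  · intro N
    have key : ∀ j : ℕ, del a b c (j+k) * s0 a b c (j+k+1)^n
        ≤ s0 a b c (j+k)^(n+1)/(n+1) - s0 a b c (j+k+1)^(n+1)/(n+1) := by
      intro j
      have h1 := pow_add_le' n (s0_nonneg (a:=a) (b:=b) (c:=c) (j+k+1)) (del_nonneg (a:=a) (b:=b) (c:=c) (j+k))
      have h2 : s0 a b c (j+k) = del a b c (j+k) + s0 a b c (j+k+1) := s0_succ hδ (j+k)
      rw [h2]
      have hn : (0:ℝ) < (n:ℝ)+1 := by positivity
      rw [div_sub_div_same, le_div_iff₀ hn]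
      have h1' : s0 a b c (j+k+1)^(n+1) + ((n:ℝ)+1) * s0 a b c (j+k+1)^n * del a b c (j+k)
          ≤ (del a b c (j+k) + s0 a b c (j+k+1))^(n+1) := by
        rw [add_comm (del a b c (j+k))]; exact h1
      nlinarith [h1']
    calc ∑ j ∈ range N, del a b c (j+k) * s0 a b c (j+k+1)^n
        ≤ ∑ j ∈ range N, (s0 a b c (j+k)^(n+1)/(n+1) - s0 a b c (j+k+1)^(n+1)/(n+1)) :=
          Finset.sum_le_sum (fun j _ => key j)
      _ = s0 a b c (0+k)^(n+1)/(n+1) - s0 a b c (N+k)^(n+1)/(n+1) := by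
          have := Finset.sum_range_sub' (f := fun j => s0 a b c (j+k)^(n+1)/((n:ℝ)+1)) N
          simpa [show ∀ x:ℕ, x+1+k = x+k+1 from fun x => by omega] using this
      _ ≤ s0 a b c k^(n+1)/(n+1) := by
          have : 0 ≤ s0 a b c (N+k)^(n+1)/((n:ℝ)+1) :=
            div_nonneg (pow_nonneg (s0_nonneg _) _) (by positivity)
          simp only [zero_add]
          linarith

lemma sq_sub_one_ne {z : ℂ} (h1 : z ≠ 1) (h2 : z ≠ -1) : z^2 - 1 ≠ 0 := by
  intro h
  have : (z - 1) * (z + 1) = 0 := by linear_combination h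
  rcases mul_eq_zero.1 this with h' | h'
  · exact h1 (by linear_combination h')
  · exact h2 (by linear_combination h')

lemma polyG_eq {z : ℂ} (hz : z^2 - 1 ≠ 0) (j : ℕ) :
    polyG j z = ((z^2)^j - 1) / (z^2 - 1) := by
  rw [eq_div_iff hz, polyG]
  have := geom_sum_mul (z^2) j
  simpa [pow_mul] using this

lemma norm_om {z : ℂ} : ‖om z‖ = 2 * ‖z‖ / ‖z^2 - 1‖ := by
  rw [om, norm_div, norm_mul]
  rw [show (1 : ℂ) - z^2 = -(z^2 - 1) by ring, norm_neg]
  norm_num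

lemma norm_z_polyG {z : ℂ} (hz : ‖z‖ ≤ 1) (h1 : z ≠ 1) (h2 : z ≠ -1) (j : ℕ) :
    ‖z * polyG j z‖ ≤ ‖om z‖ := by
  have hd := sq_sub_one_ne h1 h2
  have hb : ‖(z^2)^j - 1‖ ≤ 2 := by
    calc ‖(z^2)^j - 1‖ ≤ ‖(z^2)^j‖ + ‖(1:ℂ)‖ := norm_sub_le _ _
      _ ≤ 2 := by
        rw [norm_pow, norm_pow, norm_one]
        have : ‖z‖^2 ≤ 1 := pow_le_one₀ (norm_nonneg z) hz
        have : (‖z‖^2)^j ≤ 1 := pow_le_one₀ (by positivity) this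
        linarith
  rw [polyG_eq hd, norm_om]
  calc ‖z * (((z^2)^j - 1) / (z^2 - 1))‖ = ‖z‖ * ‖(z^2)^j - 1‖ / ‖z^2 - 1‖ := by
        rw [norm_mul, norm_div]; ring
    _ ≤ 2 * ‖z‖ / ‖z^2 - 1‖ := by
        gcongr ?_ / _
        nlinarith [norm_nonneg z]

lemma norm_z2_polyG {z : ℂ} (hz : ‖z‖ ≤ 1) (h1 : z ≠ 1) (h2 : z ≠ -1) (j : ℕ) :
    ‖z^2 * polyG j z‖ ≤ ‖om z‖ := by
  calc ‖z^2 * polyG j z‖ = ‖z‖ * ‖z * polyG j z‖ := by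
        rw [show z^2 * polyG j z = z * (z * polyG j z) by ring, norm_mul]
    _ ≤ 1 * ‖om z‖ :=
        mul_le_mul hz (norm_z_polyG hz h1 h2 j) (norm_nonneg _) zero_le_one
    _ = ‖om z‖ := one_mul _

lemma Kk_bound {z : ℂ} (hzS : z ∈ SS) (k j : ℕ) :
    ‖Kk a b c k j z‖ ≤ del a b c (j+k) * ‖om z‖ := by
  obtain ⟨hz, h1, h2⟩ := mem_SS_iff.1 hzS
  calc ‖Kk a b c k j z‖
      ≤ ‖-(b (j+k+1)) * (z * polyG (j+1) z)‖ +
        ‖(1 - a (j+k) * c (j+k)) * (z^2 * polyG j z)‖ := norm_add_le _ _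
    _ ≤ ‖b (j+k+1)‖ * ‖om z‖ + ‖1 - a (j+k) * c (j+k)‖ * ‖om z‖ := by
        rw [norm_mul (-(b (j+k+1))), norm_mul (1 - a (j+k) * c (j+k)), norm_neg]
        exact add_le_add
          (mul_le_mul_of_nonneg_left (norm_z_polyG hz h1 h2 (j+1)) (norm_nonneg _))
          (mul_le_mul_of_nonneg_left (norm_z2_polyG hz h1 h2 j) (norm_nonneg _))
    _ = del a b c (j+k) * ‖om z‖ := by rw [del]; ring

lemma JV_succ_def (n k : ℕ) (z : ℂ) :
    JV a b c (n+1) k z = ∑' j : ℕ, Kk a b c k j z * JV a b c n (j+k+1) z := rfl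

lemma JV_bound (hδ : Summable (del a b c)) :
    ∀ n k, ∀ z ∈ SS, ‖JV a b c n k z‖ ≤ (‖om z‖ * s0 a b c k)^n / n.factorial := by
  intro n
  induction n with
  | zero => intro k z _; simp [JV]
  | succ n ih =>
    intro k z hz
    have hterm : ∀ j : ℕ, ‖Kk a b c k j z * JV a b c n (j+k+1) z‖
        ≤ (‖om z‖^(n+1) / n.factorial) * (del a b c (j+k) * s0 a b c (j+k+1)^n) := by
      intro j
      rw [norm_mul]
      calc ‖Kk a b c k j z‖ * ‖JV a b c n (j+k+1) z‖
          ≤ (del a b c (j+k) * ‖om z‖) * ((‖om z‖ * s0 a b c (j+k+1))^n / n.factorial) :=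
            mul_le_mul (Kk_bound hz k j) (ih (j+k+1) z hz) (norm_nonneg _)
              (mul_nonneg (del_nonneg _) (norm_nonneg _))
        _ = _ := by rw [mul_pow]; ring
    have hsum2 : Summable (fun j : ℕ =>
        (‖om z‖^(n+1) / n.factorial) * (del a b c (j+k) * s0 a b c (j+k+1)^n)) := by
      apply Summable.mul_left
      apply Summable.of_nonneg_of_le
        (fun j => mul_nonneg (del_nonneg _) (pow_nonneg (s0_nonneg _) _))
        (fun j => ?_) ((summable_del_add hδ k).mul_right (Δt a b c ^ n))
      exact mul_le_mul_of_nonneg_left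
        (pow_le_pow_left₀ (s0_nonneg _) (s0_le hδ _) n) (del_nonneg _)
    have hsumn : Summable (fun j : ℕ => ‖Kk a b c k j z * JV a b c n (j+k+1) z‖) :=
      Summable.of_nonneg_of_le (fun j => norm_nonneg _) hterm hsum2
    have hf : ((n.factorial : ℝ)) ≠ 0 := Nat.cast_ne_zero.2 n.factorial_pos.ne'
    calc ‖JV a b c (n+1) k z‖
        = ‖∑' j : ℕ, Kk a b c k j z * JV a b c n (j+k+1) z‖ := rfl
      _ ≤ ∑' j : ℕ, ‖Kk a b c k j z * JV a b c n (j+k+1) z‖ := norm_tsum_le_tsum_norm hsumn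
      _ ≤ ∑' j : ℕ, (‖om z‖^(n+1) / n.factorial) * (del a b c (j+k) * s0 a b c (j+k+1)^n) :=
          Summable.tsum_le_tsum hterm hsumn hsum2
      _ = (‖om z‖^(n+1) / n.factorial) * ∑' j : ℕ, (del a b c (j+k) * s0 a b c (j+k+1)^n) :=
          tsum_mul_left
      _ ≤ (‖om z‖^(n+1) / n.factorial) * (s0 a b c k^(n+1) / (n+1)) :=
          mul_le_mul_of_nonneg_left (telescope hδ n k) (by positivity)
      _ = (‖om z‖ * s0 a b c k)^(n+1) / (n+1).factorial := by
          rw [mul_pow, Nat.factorial_succ, div_mul_div_comm]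
          congr 1
          push_cast
          ring

lemma JV_bound' (hδ : Summable (del a b c)) (n k : ℕ) {z : ℂ} (hz : z ∈ SS) :
    ‖JV a b c n k z‖ ≤ (‖om z‖ * Δt a b c)^n / n.factorial := by
  refine (JV_bound hδ n k z hz).trans ?_
  gcongr ?_ / _
  apply pow_le_pow_left₀ (mul_nonneg (norm_nonneg _) (s0_nonneg _))
  exact mul_le_mul_of_nonneg_left (s0_le hδ _) (norm_nonneg _)

lemma Kk_JV_bound (hδ : Summable (del a b c)) (n k : ℕ) {z : ℂ} (hz : z ∈ SS) (j : ℕ) :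
    ‖Kk a b c k j z * JV a b c n (j+k+1) z‖
      ≤ del a b c (j+k) * (‖om z‖ * ((‖om z‖ * Δt a b c)^n / n.factorial)) := by
  rw [norm_mul]
  calc ‖Kk a b c k j z‖ * ‖JV a b c n (j+k+1) z‖
      ≤ (del a b c (j+k) * ‖om z‖) * ((‖om z‖ * Δt a b c)^n / n.factorial) :=
        mul_le_mul (Kk_bound hz k j) (JV_bound' hδ n (j+k+1) hz) (norm_nonneg _)
          (mul_nonneg (del_nonneg _) (norm_nonneg _))
    _ = _ := by ring

lemma Kk_JV_summable (hδ : Summable (del a b c)) (n k : ℕ) {z : ℂ} (hz : z ∈ SS) :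
    Summable (fun j : ℕ => ‖Kk a b c k j z * JV a b c n (j+k+1) z‖) :=
  Summable.of_nonneg_of_le (fun _ => norm_nonneg _) (Kk_JV_bound hδ n k hz)
    ((summable_del_add hδ k).mul_right _)

lemma ball_subset_SS : Metric.ball (0:ℂ) 1 ⊆ SS := by
  intro z hz
  rw [Metric.mem_ball, dist_zero_right] at hz
  rw [mem_SS_iff]
  refine ⟨le_of_lt hz, ?_, ?_⟩
  · rintro rfl; simp at hz
  · rintro rfl; simp at hz

lemma om_bound_on {t : Set ℂ} (ht : IsCompact t) (h1 : (1:ℂ) ∉ t) (h2 : (-1:ℂ) ∉ t) :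
    ∃ M : ℝ, 0 ≤ M ∧ ∀ z ∈ t, ‖om z‖ ≤ M := by
  have hcont : ContinuousOn om t := by
    apply ContinuousOn.div (by fun_prop) (by fun_prop)
    intro z hz
    have hz1 : z ≠ 1 := fun h => h1 (h ▸ hz)
    have hz2 : z ≠ -1 := fun h => h2 (h ▸ hz)
    intro h
    exact sq_sub_one_ne hz1 hz2 (by linear_combination -h)
  obtain ⟨M, hM⟩ := ht.exists_bound_of_continuousOn hcont
  exact ⟨max M 0, le_max_right _ _, fun z hz => (hM z hz).trans (le_max_left _ _)⟩

/-- Main regularity helper for series of functions on the cut disk. -/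
lemma reg_tsum {f : ℕ → ℂ → ℂ}
    (hc : ∀ j, ContinuousOn (f j) SS)
    (hd : ∀ j, DifferentiableOn ℂ (f j) (Metric.ball (0:ℂ) 1))
    (hbd : ∀ M : ℝ, 0 ≤ M → ∃ w : ℕ → ℝ, Summable w ∧
      ∀ j z, z ∈ SS → ‖om z‖ ≤ M → ‖f j z‖ ≤ w j) :
    ContinuousOn (fun z => ∑' j, f j z) SS ∧
      DifferentiableOn ℂ (fun z => ∑' j, f j z) (Metric.ball (0:ℂ) 1) := by
  constructor
  · intro x₀ hx₀
    obtain ⟨hx₁, hx₂, hx₃⟩ := mem_SS_iff.1 hx₀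
    set r : ℝ := min (dist x₀ 1) (dist x₀ (-1)) with hr
    have hrpos : 0 < r := by
      apply lt_min <;> rw [dist_pos] <;> assumption
    set t : Set ℂ := Metric.closedBall 0 1 ∩ Metric.closedBall x₀ (r/2) with htdef
    have htc : IsCompact t := (isCompact_closedBall _ _).inter_right Metric.isClosed_closedBall
    have h1t : (1:ℂ) ∉ t := by
      rintro ⟨-, h⟩
      rw [Metric.mem_closedBall, dist_comm] at h
      have : r ≤ r/2 := le_trans (min_le_left _ _) h
      linarith
    have h2t : (-1:ℂ) ∉ t := by
      rintro ⟨-, h⟩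
      rw [Metric.mem_closedBall, dist_comm] at h
      have : r ≤ r/2 := le_trans (min_le_right _ _) h
      linarith
    have htS : t ⊆ SS := by
      intro z hz
      refine ⟨hz.1, ?_⟩
      simp only [Set.mem_insert_iff, Set.mem_singleton_iff, not_or]
      exact ⟨fun h => h1t (h ▸ hz), fun h => h2t (h ▸ hz)⟩
    obtain ⟨M, hM0, hM⟩ := om_bound_on htc h1t h2t
    obtain ⟨w, hw, hwb⟩ := hbd M hM0
    have hct : ContinuousOn (fun z => ∑' j, f j z) t :=
      continuousOn_tsum (fun j => (hc j).mono htS) hw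
        (fun j z hz => hwb j z (htS hz) (hM z hz))
    have hx₀t : x₀ ∈ t := ⟨hx₀.1, Metric.mem_closedBall_self (by linarith)⟩
    apply (hct x₀ hx₀t).mono_of_mem_nhdsWithin
    have hsub : SS ∩ Metric.closedBall x₀ (r/2) ⊆ t := fun z hz => ⟨hz.1.1, hz.2⟩
    exact Filter.mem_of_superset
      (inter_mem_nhdsWithin SS (Metric.closedBall_mem_nhds x₀ (by linarith))) hsub
  · intro x₀ hx₀
    rw [Metric.mem_ball, dist_zero_right] at hx₀
    set r : ℝ := (1 - ‖x₀‖)/2 with hr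
    have hrpos : 0 < r := by
      have := norm_nonneg x₀; simp only [hr]; linarith [hx₀]
    have htb : Metric.closedBall x₀ r ⊆ Metric.ball (0:ℂ) 1 := by
      intro z hz
      rw [Metric.mem_closedBall, dist_eq_norm] at hz
      rw [Metric.mem_ball, dist_zero_right]
      calc ‖z‖ = ‖z - x₀ + x₀‖ := by ring_nf
        _ ≤ ‖z - x₀‖ + ‖x₀‖ := norm_add_le _ _
        _ ≤ r + ‖x₀‖ := by linarith
        _ < 1 := by simp only [hr]; linarith
    have htc : IsCompact (Metric.closedBall x₀ r) := isCompact_closedBall _ _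
    have h1t : (1:ℂ) ∉ Metric.closedBall x₀ r := fun h => by
      have := htb h; rw [Metric.mem_ball, dist_zero_right] at this; simp at this
    have h2t : (-1:ℂ) ∉ Metric.closedBall x₀ r := fun h => by
      have := htb h; rw [Metric.mem_ball, dist_zero_right] at this; simp at this
    obtain ⟨M, hM0, hM⟩ := om_bound_on htc h1t h2t
    obtain ⟨w, hw, hwb⟩ := hbd M hM0
    have htu : TendstoUniformlyOn (fun (s : Finset ℕ) z => ∑ j ∈ s, f j z)
        (fun z => ∑' j, f j z) Filter.atTop (Metric.closedBall x₀ r) :=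
      tendstoUniformlyOn_tsum hw
        (fun j z hz => hwb j z (ball_subset_SS (htb hz)) (hM z hz))
    have hdiff : DifferentiableOn ℂ (fun z => ∑' j, f j z) (Metric.ball x₀ r) := by
      apply TendstoLocallyUniformlyOn.differentiableOn
        ((htu.tendstoLocallyUniformlyOn).mono Metric.ball_subset_closedBall)
        (Filter.Eventually.of_forall ?_) Metric.isOpen_ball
      intro s
      apply DifferentiableOn.fun_sum
      intro j _
      exact (hd j).mono ((Metric.ball_subset_closedBall).trans htb)
    exact ((hdiff.differentiableAt
      (Metric.isOpen_ball.mem_nhds (Metric.mem_ball_self hrpos))).differentiableWithinAt)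

lemma fac_term_mono {x M D : ℝ} (n : ℕ) (hx : 0 ≤ x) (hD : 0 ≤ D) (h : x ≤ M) :
    (x*D)^n / n.factorial ≤ (M*D)^n / n.factorial := by
  have h2 : (0:ℝ) < n.factorial := by exact_mod_cast n.factorial_pos
  have h1 : (x*D)^n ≤ (M*D)^n :=
    pow_le_pow_left₀ (by positivity) (mul_le_mul_of_nonneg_right h hD) n
  gcongr

lemma polyG_continuous (j : ℕ) : Continuous (polyG j) := by
  unfold polyG
  exact continuous_finset_sum _ (fun i _ => continuous_pow _)

lemma polyG_differentiable (j : ℕ) : Differentiable ℂ (polyG j) := by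
  unfold polyG
  apply Differentiable.fun_sum (fun i _ => ?_)
  exact differentiable_pow _

lemma Kk_continuous (k j : ℕ) : Continuous (Kk a b c k j) := by
  unfold Kk
  apply Continuous.add
  · exact continuous_const.mul (continuous_id.mul (polyG_continuous _))
  · exact continuous_const.mul ((continuous_pow 2).mul (polyG_continuous _))

lemma Kk_differentiable (k j : ℕ) : Differentiable ℂ (Kk a b c k j) := by
  unfold Kk
  apply Differentiable.add
  · exact (differentiable_const _).mul (differentiable_id.mul (polyG_differentiable _))
  · exact (differentiable_const _).mul ((differentiable_pow 2).mul (polyG_differentiable _))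

lemma JV_reg (hδ : Summable (del a b c)) :
    ∀ n k, ContinuousOn (JV a b c n k) SS ∧
      DifferentiableOn ℂ (JV a b c n k) (Metric.ball (0:ℂ) 1) := by
  intro n
  induction n with
  | zero =>
    intro k
    exact ⟨continuousOn_const, differentiableOn_const 1⟩
  | succ n ih =>
    intro k
    have := reg_tsum (f := fun j z => Kk a b c k j z * JV a b c n (j+k+1) z)
      (fun j => ((Kk_continuous k j).continuousOn).mul (ih (j+k+1)).1)
      (fun j => ((Kk_differentiable k j).differentiableOn).mul (ih (j+k+1)).2)
      ?_
    · exact this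
    · intro M hM0
      refine ⟨fun j => del a b c (j+k) * (M * ((M * Δt a b c)^n / n.factorial)),
        (summable_del_add hδ k).mul_right _, ?_⟩
      intro j z hz hle
      refine (Kk_JV_bound hδ n k hz j).trans ?_
      have hΔ : 0 ≤ Δt a b c := Δt_nonneg
      apply mul_le_mul_of_nonneg_left ?_ (del_nonneg _)
      exact mul_le_mul hle (fac_term_mono n (norm_nonneg _) hΔ hle)
        (by positivity) ((norm_nonneg _).trans hle)

def Jv (a b c : ℕ → ℂ) (k : ℕ) (z : ℂ) : ℂ := ∑' n, JV a b c n k z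

def Ju (a b c : ℕ → ℂ) (k : ℕ) (z : ℂ) : ℂ := z^k * Jv a b c k z

lemma JV_summable_norm (hδ : Summable (del a b c)) (k : ℕ) {z : ℂ} (hz : z ∈ SS) :
    Summable (fun n => ‖JV a b c n k z‖) :=
  Summable.of_nonneg_of_le (fun _ => norm_nonneg _) (fun n => JV_bound' hδ n k hz)
    (Real.summable_pow_div_factorial _)

lemma Jv_reg (hδ : Summable (del a b c)) (k : ℕ) :
    ContinuousOn (Jv a b c k) SS ∧
      DifferentiableOn ℂ (Jv a b c k) (Metric.ball (0:ℂ) 1) := by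
  have := reg_tsum (f := fun n z => JV a b c n k z)
    (fun n => (JV_reg hδ n k).1) (fun n => (JV_reg hδ n k).2) ?_
  · exact this
  · intro M hM0
    refine ⟨fun n => (M * Δt a b c)^n / n.factorial,
      Real.summable_pow_div_factorial _, ?_⟩
    intro n z hz hle
    refine (JV_bound' hδ n k hz).trans ?_
    exact fac_term_mono n (norm_nonneg _) Δt_nonneg hle

lemma Ju_reg (hδ : Summable (del a b c)) (k : ℕ) :
    ContinuousOn (Ju a b c k) SS ∧
      DifferentiableOn ℂ (Ju a b c k) (Metric.ball (0:ℂ) 1) :=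
  ⟨((continuous_pow k).continuousOn).mul (Jv_reg hδ k).1,
    ((differentiable_pow k).differentiableOn).mul (Jv_reg hδ k).2⟩

lemma real_exp_tsum (x : ℝ) : Real.exp x = ∑' n : ℕ, x^n / n.factorial := by
  rw [Real.exp_eq_exp_ℝ, NormedSpace.exp_eq_tsum_div]

lemma Jv_norm_le (hδ : Summable (del a b c)) (k : ℕ) {z : ℂ} (hz : z ∈ SS) :
    ‖Jv a b c k z‖ ≤ Real.exp (‖om z‖ * Δt a b c) := by
  calc ‖Jv a b c k z‖ ≤ ∑' n, ‖JV a b c n k z‖ :=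
        norm_tsum_le_tsum_norm (JV_summable_norm hδ k hz)
    _ ≤ ∑' n : ℕ, (‖om z‖ * Δt a b c)^n / n.factorial :=
        Summable.tsum_le_tsum (fun n => JV_bound' hδ n k hz) (JV_summable_norm hδ k hz)
          (Real.summable_pow_div_factorial _)
    _ = Real.exp (‖om z‖ * Δt a b c) := (real_exp_tsum _).symm

lemma Jv_eq_one_add (hδ : Summable (del a b c)) (k : ℕ) {z : ℂ} (hz : z ∈ SS) :
    Jv a b c k z = 1 + ∑' n, JV a b c (n+1) k z := by
  rw [Jv, Summable.tsum_eq_zero_add ((JV_summable_norm hδ k hz).of_norm)]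
  rfl

set_option maxHeartbeats 1000000 in
lemma Jv_sub_one (hδ : Summable (del a b c)) (k : ℕ) {z : ℂ} (hz : z ∈ SS) :
    ‖Jv a b c k z - 1‖ ≤ Real.exp (‖om z‖ * s0 a b c k) - 1 := by
  set x := ‖om z‖ * s0 a b c k with hx
  have hsum1 : Summable (fun n => ‖JV a b c (n+1) k z‖) :=
    (summable_nat_add_iff 1).2 (JV_summable_norm hδ k hz)
  have hsum2 : Summable (fun n : ℕ => x^(n+1) / (n+1).factorial) :=
    (summable_nat_add_iff 1).2 (Real.summable_pow_div_factorial x)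
  have hexp : Real.exp x = 1 + ∑' n : ℕ, x^(n+1) / (n+1).factorial := by
    rw [real_exp_tsum x, Summable.tsum_eq_zero_add (Real.summable_pow_div_factorial x)]
    norm_num
  rw [Jv_eq_one_add hδ k hz]
  calc ‖1 + (∑' n, JV a b c (n+1) k z) - 1‖ = ‖∑' n, JV a b c (n+1) k z‖ := by
        congr 1; ring
    _ ≤ ∑' n, ‖JV a b c (n+1) k z‖ := norm_tsum_le_tsum_norm hsum1
    _ ≤ ∑' n : ℕ, x^(n+1) / (n+1).factorial :=
        Summable.tsum_le_tsum (fun n => JV_bound hδ (n+1) k z hz) hsum1 hsum2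
    _ = Real.exp x - 1 := by rw [hexp]; ring

lemma green_eq {z : ℂ} (hz0 : z ≠ 0) (h1 : z ≠ 1) (h2 : z ≠ -1) (k : ℤ) (j : ℕ) :
    greenG z k (k + j) = z * polyG j z / z^j := by
  have hd2 : z^2 - 1 ≠ 0 := sq_sub_one_ne h1 h2
  have hpg : polyG j z * (z^2 - 1) = z^(2*j) - 1 := by
    have := geom_sum_mul (z^2) j
    simpa [polyG, pow_mul] using this
  rw [greenG, if_pos (by omega : k ≤ k + (j:ℤ))]
  have e1 : k + (j:ℤ) - k = (j:ℤ) := by ring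
  have e2 : k - (k + (j:ℤ)) = -(j:ℤ) := by ring
  rw [e1, e2, zpow_natCast, zpow_neg, zpow_natCast]
  have hzj : z^j ≠ 0 := pow_ne_zero _ hz0
  have hden : z - z⁻¹ ≠ 0 := by
    rw [show z - z⁻¹ = (z^2 - 1) / z by field_simp]
    exact div_ne_zero hd2 hz0
  rw [div_eq_div_iff hden hzj]
  have expand : (z^j - (z^j)⁻¹) * z^j = z^(2*j) - 1 := by
    rw [sub_mul, inv_mul_cancel₀ hzj, ← pow_add, two_mul]
  have expand2 : z * polyG j z * (z - z⁻¹) = polyG j z * (z^2 - 1) := by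
    field_simp
  rw [expand, expand2, hpg]

lemma kerT_eq {z : ℂ} (hz0 : z ≠ 0) (h1 : z ≠ 1) (h2 : z ≠ -1) (k j : ℕ) :
    kerT a b c z k (j+k+1) * z^(j+k+1) = z^k * Kk a b c k j z := by
  have hzj : ∀ i : ℕ, z^i ≠ 0 := fun i => pow_ne_zero _ hz0
  have g1 : greenG z (k : ℤ) ((j+k+1 : ℕ) : ℤ) = z * polyG (j+1) z / z^(j+1) := by
    have e : ((j+k+1 : ℕ) : ℤ) = (k : ℤ) + ((j+1 : ℕ) : ℤ) := by push_cast; ring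
    rw [e, green_eq hz0 h1 h2]
  have g2 : greenG z (k : ℤ) (((j+k+1 : ℕ) : ℤ) - 1) = z * polyG j z / z^j := by
    have e : ((j+k+1 : ℕ) : ℤ) - 1 = (k : ℤ) + ((j : ℕ) : ℤ) := by push_cast; ring
    rw [e, green_eq hz0 h1 h2]
  rw [kerT, g1, g2, show j+k+1-1 = j+k from rfl, Kk]
  field_simp
  ring

lemma kerT_mul_Ju {z : ℂ} (hz0 : z ≠ 0) (h1 : z ≠ 1) (h2 : z ≠ -1) (k j : ℕ) :
    kerT a b c z k (j+k+1) * Ju a b c (j+k+1) z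
      = z^k * (Kk a b c k j z * Jv a b c (j+k+1) z) := by
  rw [Ju, show kerT a b c z k (j+k+1) * (z^(j+k+1) * Jv a b c (j+k+1) z)
      = (kerT a b c z k (j+k+1) * z^(j+k+1)) * Jv a b c (j+k+1) z by ring,
    kerT_eq hz0 h1 h2]
  ring

lemma Kk_Jv_summable (hδ : Summable (del a b c)) (k : ℕ) {z : ℂ} (hz : z ∈ SS) :
    Summable (fun j : ℕ => ‖Kk a b c k j z * Jv a b c (j+k+1) z‖) := by
  apply Summable.of_nonneg_of_le (fun _ => norm_nonneg _) (fun j => ?_)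
    ((summable_del_add hδ k).mul_right (‖om z‖ * Real.exp (‖om z‖ * Δt a b c)))
  rw [norm_mul]
  calc ‖Kk a b c k j z‖ * ‖Jv a b c (j+k+1) z‖
      ≤ (del a b c (j+k) * ‖om z‖) * Real.exp (‖om z‖ * Δt a b c) :=
        mul_le_mul (Kk_bound hz k j) (Jv_norm_le hδ (j+k+1) hz) (norm_nonneg _)
          (mul_nonneg (del_nonneg _) (norm_nonneg _))
    _ = del a b c (j+k) * (‖om z‖ * Real.exp (‖om z‖ * Δt a b c)) := by ring

lemma Jv_equation (hδ : Summable (del a b c)) (k : ℕ) {z : ℂ} (hz : z ∈ SS) :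
    Jv a b c k z = 1 + ∑' j : ℕ, Kk a b c k j z * Jv a b c (j+k+1) z := by
  have hF : Summable (fun p : ℕ × ℕ => ‖Kk a b c k p.2 z * JV a b c p.1 (p.2+k+1) z‖) := by
    apply Summable.of_nonneg_of_le (fun _ => norm_nonneg _) (fun p => ?_)
      (((Real.summable_pow_div_factorial (‖om z‖ * Δt a b c))).mul_of_nonneg
        ((summable_del_add hδ k).mul_right (‖om z‖))
        (fun n => div_nonneg (pow_nonneg (mul_nonneg (norm_nonneg _) Δt_nonneg) _)
          (by positivity))
        (fun j => mul_nonneg (del_nonneg _) (norm_nonneg _)))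
    refine (Kk_JV_bound hδ p.1 k hz p.2).trans (le_of_eq ?_)
    ring
  have hF' : Summable (Function.uncurry
      (fun n j : ℕ => Kk a b c k j z * JV a b c n (j+k+1) z)) :=
    Summable.of_norm hF
  calc Jv a b c k z = 1 + ∑' n, JV a b c (n+1) k z := Jv_eq_one_add hδ k hz
    _ = 1 + ∑' (n : ℕ) (j : ℕ), Kk a b c k j z * JV a b c n (j+k+1) z := rfl
    _ = 1 + ∑' (j : ℕ) (n : ℕ), Kk a b c k j z * JV a b c n (j+k+1) z := by
        rw [Summable.tsum_comm hF']
    _ = 1 + ∑' j : ℕ, Kk a b c k j z * Jv a b c (j+k+1) z := by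
        congr 1
        refine tsum_congr (fun j => ?_)
        rw [Jv, tsum_mul_left]

end Stmt7

open Stmt7

/-- Existence of the Jost solutions under `∑ δ_m < ∞` (Theorem 1.2 (i)):
`u_k⁺` is analytic in the open unit disk, continuous on the closed disk minus `±1`,
solves the Volterra equation, and satisfies
`|u_k⁺(z) - z^k| ≤ |z|^k (e^{|ω(z)| s₀(k)} - 1)` with `ω(z) = 2z/(1-z²)` and
`s₀(k) = ∑_{n=k+1}^∞ δ_n`, `δ_n = |b_n| + |1 - a_{n-1} c_{n-1}|`. -/
theorem stmt7 (a b c : ℕ → ℂ) (ha0 : a 0 = 1) (hc0 : c 0 = 1)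
    (hδ : Summable (fun m : ℕ => ‖b (m + 1)‖ + ‖1 - a m * c m‖)) :
    ∃ u : ℕ → ℂ → ℂ,
      (∀ k : ℕ, AnalyticOnNhd ℂ (u k) (Metric.ball (0 : ℂ) 1)) ∧
      (∀ k : ℕ, ContinuousOn (u k)
        (Metric.closedBall (0 : ℂ) 1 \ {(1 : ℂ), (-1 : ℂ)})) ∧
      (∀ z : ℂ, z ∈ Metric.closedBall (0 : ℂ) 1 → z ≠ 0 → z ≠ 1 → z ≠ -1 → ∀ k : ℕ,
        Summable (fun m : ℕ => ‖kerT a b c z k (m + k + 1) * u (m + k + 1) z‖) ∧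
        u k z = z ^ k + ∑' m : ℕ, kerT a b c z k (m + k + 1) * u (m + k + 1) z) ∧
      (∀ z : ℂ, z ∈ Metric.closedBall (0 : ℂ) 1 → z ≠ 1 → z ≠ -1 → ∀ k : ℕ,
        ‖u k z - z ^ k‖ ≤
          ‖z‖ ^ k *
            (Real.exp (‖2 * z / (1 - z ^ 2)‖ *
                ∑' n : ℕ, (‖b (n + k + 1)‖ + ‖1 - a (n + k) * c (n + k)‖)) - 1)) := by
  have hδ' : Summable (del a b c) := hδ
  refine ⟨Ju a b c, ?_, ?_, ?_, ?_⟩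
  · intro k
    exact ((Ju_reg hδ' k).2).analyticOnNhd Metric.isOpen_ball
  · intro k
    exact (Ju_reg hδ' k).1
  · intro z hzb hz0 hz1 hz2 k
    have hzS : z ∈ SS := by
      refine ⟨hzb, ?_⟩
      simp only [Set.mem_insert_iff, Set.mem_singleton_iff, not_or]
      exact ⟨hz1, hz2⟩
    constructor
    · have heq : (fun m : ℕ => ‖kerT a b c z k (m+k+1) * Ju a b c (m+k+1) z‖)
          = fun m => ‖z‖^k * ‖Kk a b c k m z * Jv a b c (m+k+1) z‖ := by
        funext m
        rw [kerT_mul_Ju hz0 hz1 hz2, norm_mul, norm_pow]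
      rw [heq]
      exact (Kk_Jv_summable hδ' k hzS).mul_left _
    · calc Ju a b c k z = z^k * Jv a b c k z := rfl
        _ = z^k * (1 + ∑' j : ℕ, Kk a b c k j z * Jv a b c (j+k+1) z) := by
            rw [← Jv_equation hδ' k hzS]
        _ = z^k + ∑' j : ℕ, z^k * (Kk a b c k j z * Jv a b c (j+k+1) z) := by
            rw [mul_add, mul_one, tsum_mul_left]
        _ = z^k + ∑' m : ℕ, kerT a b c z k (m+k+1) * Ju a b c (m+k+1) z := by
            congr 1
            exact tsum_congr fun m => (kerT_mul_Ju hz0 hz1 hz2 k m).symm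
  · intro z hzb hz1 hz2 k
    have hzS : z ∈ SS := by
      refine ⟨hzb, ?_⟩
      simp only [Set.mem_insert_iff, Set.mem_singleton_iff, not_or]
      exact ⟨hz1, hz2⟩
    have key := Jv_sub_one hδ' k hzS
    have e0 : ‖Ju a b c k z - z^k‖ = ‖z‖^k * ‖Jv a b c k z - 1‖ := by
      rw [Ju,
        show z^k * Jv a b c k z - z^k = z^k * (Jv a b c k z - 1) by ring,
        norm_mul, norm_pow]
    have e1 : ‖z‖ = ‖z‖ := rfl
    have e2 : ‖2*z/(1-z^2)‖ = ‖om z‖ := rfl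
    have e3 : ∑' n : ℕ, (‖b (n+k+1)‖ + ‖1 - a (n+k) * c (n+k)‖) = s0 a b c k := rfl
    rw [e0, e2, e3]
    exact mul_le_mul_of_nonneg_left key (pow_nonneg (norm_nonneg z) k)
end
end

section
/- Let a, b, c : ℕ → ℂ (indexed from 1, with the convention a_0 = c_0 = 1) satisfy Δ₁ := ∑_{m≥1} m·δ_m < ∞, where δ_m := |b_m| + |1 − a_{m−1} c_{m−1}|, and set s₁(k) := ∑_{n=k+1}^∞ n·δ_n. Then there exists a family of functions u_k⁺ : ℂ → ℂ (k ≥ 0) such that: (i) each u_k⁺ is analytic on the open unit disk and continuous on the closed unit disk; (ii) for every z in the closed unit disk with z ∉ {0, 1, −1} and every k ≥ 0, the series ∑_{m=k+1}^∞ T(k,m;z) u_m⁺(z) converges absolutely and u_k⁺(z) = z^k + ∑_{m=k+1}^∞ T(k,m;z) u_m⁺(z); (iii) for every z in the closed unit disk and every k ≥ 0, |u_k⁺(z) − z^k| ≤ |z|^k (exp(|z| s₁(k)) − 1). -/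
noncomputable section

open Finset Metric Filter

namespace Stmt9

/-- `P n z = ∑_{i<n} z^(2i)`. -/
def P (n : ℕ) (z : ℂ) : ℂ := ∑ i ∈ Finset.range n, z ^ (2 * i)

lemma norm_P_le {z : ℂ} (hz : ‖z‖ ≤ 1) (n : ℕ) : ‖P n z‖ ≤ n := by
  refine le_trans (norm_sum_le _ _) ?_
  calc ∑ i ∈ Finset.range n, ‖z ^ (2*i)‖ ≤ ∑ _i ∈ Finset.range n, (1:ℝ) :=
        Finset.sum_le_sum fun i _ => by
          rw [norm_pow]; exact pow_le_one₀ (norm_nonneg z) hz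
    _ = n := by simp

lemma P_continuous (n : ℕ) : Continuous fun z => P n z :=
  continuous_finset_sum _ fun i _ => continuous_pow _

lemma P_differentiable (n : ℕ) : Differentiable ℂ fun z => P n z :=
  Differentiable.fun_sum fun i _ => differentiable_pow _

lemma sub_inv_ne_zero' {z : ℂ} (hz0 : z ≠ 0) (hz1 : z ^ 2 ≠ 1) : z - z⁻¹ ≠ 0 := by
  intro h
  apply hz1
  have h2 : z * (z - z⁻¹) = 0 := by rw [h, mul_zero]
  rw [mul_sub, mul_inv_cancel₀ hz0] at h2
  have h3 : z * z = 1 := sub_eq_zero.mp h2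
  rw [sq]; exact h3

lemma greenG_eq {z : ℂ} (hz0 : z ≠ 0) (hz1 : z ^ 2 ≠ 1) {k m : ℤ} (h : k ≤ m) :
    greenG z k m = z ^ (k - m + 1) * P (m - k).toNat z := by
  have hzz := sub_inv_ne_zero' hz0 hz1
  set n := (m - k).toNat with hn
  have hmn : (n : ℤ) = m - k := Int.toNat_of_nonneg (by omega)
  rw [greenG, if_pos h, div_eq_iff hzz]
  refine Eq.symm ?_
  have key : P n z * (z ^ 2 - 1) = z ^ (2 * n) - 1 := by
    have h2 : ∀ i : ℕ, z ^ (2 * i) = (z ^ 2) ^ i := fun i => by rw [pow_mul]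
    simp only [P, h2]
    exact geom_sum_mul (z ^ 2) n
  have hsplit : z - z⁻¹ = z⁻¹ * (z ^ 2 - 1) := by
    field_simp
  calc z ^ (k - m + 1) * P n z * (z - z⁻¹)
      = z ^ (k - m + 1) * z⁻¹ * (P n z * (z ^ 2 - 1)) := by rw [hsplit]; ring
    _ = z ^ (k - m) * (z ^ (2 * n) - 1) := by
        rw [key, zpow_add_one₀ hz0,
          show z ^ (k - m) * z * z⁻¹ * (z ^ (2 * n) - 1)
              = z ^ (k - m) * (z ^ (2 * n) - 1) * (z * z⁻¹) from by ring,
          mul_inv_cancel₀ hz0, mul_one]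
    _ = z ^ (k - m) * z ^ ((2 * n : ℕ) : ℤ) - z ^ (k - m) := by
        rw [zpow_natCast]; ring
    _ = z ^ (m - k) - z ^ (k - m) := by
        rw [← zpow_add₀ hz0]
        congr 2
        push_cast
        omega
section Seq

variable (a b c : ℕ → ℂ)

/-- `D m = m δ_m`. -/
def D (m : ℕ) : ℝ := m * (‖b m‖ + ‖1 - a (m - 1) * c (m - 1)‖)

/-- kernel `K k m z = T(k,m;z) z^{m-k}`, a polynomial in `z`. -/
def K (k m : ℕ) (z : ℂ) : ℂ :=
  -(b m) * z * P (m - k) z + (1 - a (m - 1) * c (m - 1)) * z ^ 2 * P (m - k - 1) z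

/-- iterates of the Volterra equation. -/
def w : ℕ → ℕ → ℂ → ℂ
  | 0 => fun _ _ => 1
  | j + 1 => fun k z => ∑' m : ℕ, K a b c k (m + k + 1) z * w j (m + k + 1) z

/-- tail sums `s k = ∑_{n > k} n δ_n`. -/
def s (k : ℕ) : ℝ := ∑' n : ℕ, D a b c (n + k + 1)

lemma D_nonneg (m : ℕ) : 0 ≤ D a b c m := by
  unfold D; positivity

lemma K_continuous (k m : ℕ) : Continuous fun z => K a b c k m z := by
  unfold K
  exact (((continuous_const.mul continuous_id).mul (P_continuous _)).add
    ((continuous_const.mul (continuous_pow 2)).mul (P_continuous _)))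

lemma K_differentiable (k m : ℕ) : Differentiable ℂ fun z => K a b c k m z := by
  unfold K
  exact (((differentiable_const _).mul differentiable_id).mul (P_differentiable _)).add
    (((differentiable_const _).mul (differentiable_pow 2)).mul (P_differentiable _))

variable {a b c}

lemma summable_D_tail (hD : Summable fun m => D a b c (m + 1)) (k : ℕ) :
    Summable fun n => D a b c (n + k + 1) := by
  simpa using (summable_nat_add_iff (f := fun m => D a b c (m + 1)) k).2 hD

lemma s_nonneg (k : ℕ) : 0 ≤ s a b c k := tsum_nonneg fun n => D_nonneg a b c _

lemma s_succ (hD : Summable fun m => D a b c (m + 1)) (k : ℕ) :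
    s a b c k = D a b c (k + 1) + s a b c (k + 1) := by
  have h := Summable.tsum_eq_zero_add (summable_D_tail hD k)
  unfold s
  rw [h]
  congr 1
  · exact congrArg (D a b c) (by omega)
  · exact tsum_congr fun n => congrArg (D a b c) (by omega)

lemma s_anti (hD : Summable fun m => D a b c (m + 1)) {k l : ℕ} (h : k ≤ l) :
    s a b c l ≤ s a b c k := by
  induction l, h using Nat.le_induction with
  | base => exact le_refl _
  | succ n hn ih =>
      refine le_trans ?_ ih
      have := D_nonneg a b c (n + 1)
      rw [s_succ hD n]
      linarith

lemma norm_K_le (k m : ℕ) {z : ℂ} (hz : ‖z‖ ≤ 1) : ‖K a b c k m z‖ ≤ ‖z‖ * D a b c m := by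
  have h0 : (0:ℝ) ≤ ‖z‖ := norm_nonneg z
  have hP1 : ‖P (m - k) z‖ ≤ (m : ℝ) :=
    (norm_P_le hz _).trans (by exact_mod_cast Nat.cast_le.2 (Nat.sub_le m k))
  have hP2 : ‖P (m - k - 1) z‖ ≤ (m : ℝ) :=
    (norm_P_le hz _).trans (by exact_mod_cast Nat.cast_le.2 ((Nat.sub_le _ 1).trans (Nat.sub_le m k)))
  calc ‖K a b c k m z‖
      ≤ ‖-(b m) * z * P (m - k) z‖ + ‖(1 - a (m-1) * c (m-1)) * z ^ 2 * P (m - k - 1) z‖ :=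
        norm_add_le _ _
    _ = ‖b m‖ * ‖z‖ * ‖P (m - k) z‖ + ‖1 - a (m-1) * c (m-1)‖ * (‖z‖ * ‖z‖) * ‖P (m - k - 1) z‖ := by
        simp [norm_mul, sq, mul_assoc]
    _ ≤ ‖b m‖ * ‖z‖ * m + ‖1 - a (m-1) * c (m-1)‖ * (‖z‖ * 1) * m := by
        gcongr
    _ = ‖z‖ * D a b c m := by unfold D; ring
lemma pow_telescope {x y : ℝ} (hy : 0 ≤ y) (hxy : y ≤ x) (j : ℕ) :
    (x - y) * y ^ j ≤ (x ^ (j+1) - y ^ (j+1)) / (j + 1) := by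
  rw [le_div_iff₀ (by positivity)]
  have hg := geom_sum₂_mul x y (j + 1)
  have hsum : ((j:ℝ) + 1) * y ^ j ≤ ∑ i ∈ Finset.range (j+1), x ^ i * y ^ (j + 1 - 1 - i) := by
    have h1 : ((j:ℝ)+1) * y ^ j = ∑ _i ∈ Finset.range (j+1), y ^ j := by
      rw [Finset.sum_const, Finset.card_range]; push_cast; ring
    rw [h1]
    refine Finset.sum_le_sum fun i hi => ?_
    have hij : i ≤ j := Nat.lt_succ_iff.mp (Finset.mem_range.mp hi)
    have h2 : y ^ j = y ^ i * y ^ (j + 1 - 1 - i) := by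
      rw [← pow_add]; congr 1; omega
    rw [h2]
    exact mul_le_mul_of_nonneg_right (pow_le_pow_left₀ hy hxy i) (pow_nonneg hy _)
  have hxy' : (0:ℝ) ≤ x - y := sub_nonneg.2 hxy
  calc (x - y) * y ^ j * ((j:ℝ) + 1) = (((j:ℝ)+1) * y ^ j) * (x - y) := by ring
    _ ≤ (∑ i ∈ Finset.range (j+1), x ^ i * y ^ (j+1-1-i)) * (x - y) :=
        mul_le_mul_of_nonneg_right hsum hxy'
    _ = x ^ (j+1) - y ^ (j+1) := hg

lemma summable_Ds (hD : Summable fun m => D a b c (m + 1)) (k j : ℕ) :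
    Summable fun m => D a b c (m + k + 1) * s a b c (m + k + 1) ^ j := by
  refine Summable.of_nonneg_of_le
    (fun m => mul_nonneg (D_nonneg a b c _) (pow_nonneg (s_nonneg _) j))
    (fun m => ?_) ((summable_D_tail hD k).mul_right (s a b c k ^ j))
  exact mul_le_mul_of_nonneg_left
    (pow_le_pow_left₀ (s_nonneg _) (s_anti hD (by omega)) j) (D_nonneg a b c _)

lemma key_sum (hD : Summable fun m => D a b c (m + 1)) (k j : ℕ) :
    ∑' m : ℕ, D a b c (m + k + 1) * s a b c (m + k + 1) ^ j
      ≤ s a b c k ^ (j + 1) / (j + 1) := by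
  refine Summable.tsum_le_of_sum_range_le (summable_Ds hD k j) fun N => ?_
  have hterm : ∀ m : ℕ, D a b c (m+k+1) * s a b c (m+k+1) ^ j
      ≤ s a b c (m+k) ^ (j+1) / (j+1) - s a b c (m+1+k) ^ (j+1) / (j+1) := by
    intro m
    have hs := s_succ hD (m+k)
    have hDn := D_nonneg a b c (m+k+1)
    have h1 : D a b c (m+k+1) = s a b c (m+k) - s a b c (m+k+1) := by linarith
    rw [show m+1+k = m+k+1 from by omega, ← sub_div, h1]
    exact pow_telescope (s_nonneg _) (by linarith) j
  calc ∑ m ∈ Finset.range N, D a b c (m+k+1) * s a b c (m+k+1) ^ j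
      ≤ ∑ m ∈ Finset.range N,
          (s a b c (m+k) ^ (j+1) / (j+1) - s a b c (m+1+k) ^ (j+1) / (j+1)) :=
        Finset.sum_le_sum fun m _ => hterm m
    _ = s a b c (0+k) ^ (j+1) / (j+1) - s a b c (N+k) ^ (j+1) / (j+1) :=
        Finset.sum_range_sub' (fun m => s a b c (m+k) ^ (j+1) / ((j:ℝ)+1)) N
    _ ≤ s a b c k ^ (j+1) / (j+1) := by
        rw [show 0+k = k from by omega]
        have : (0:ℝ) ≤ s a b c (N+k) ^ (j+1) / ((j:ℝ)+1) := by
          have := s_nonneg (a := a) (b := b) (c := c) (N+k)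
          positivity
        linarith
lemma norm_Kw_aux (k m j : ℕ) {z : ℂ} (hz : ‖z‖ ≤ 1)
    (hw : ‖w a b c j (m+k+1) z‖ ≤ (‖z‖ * s a b c (m+k+1)) ^ j / j.factorial) :
    ‖K a b c k (m+k+1) z * w a b c j (m+k+1) z‖
      ≤ ‖z‖^(j+1) / j.factorial * (D a b c (m+k+1) * s a b c (m+k+1) ^ j) := by
  rw [norm_mul]
  have h1 := norm_K_le (a := a) (b := b) (c := c) k (m+k+1) hz
  calc ‖K a b c k (m+k+1) z‖ * ‖w a b c j (m+k+1) z‖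
      ≤ (‖z‖ * D a b c (m+k+1)) * ((‖z‖ * s a b c (m+k+1)) ^ j / j.factorial) := by
        refine mul_le_mul h1 hw (norm_nonneg _) ?_
        exact mul_nonneg (norm_nonneg z) (D_nonneg a b c _)
    _ = ‖z‖^(j+1) / j.factorial * (D a b c (m+k+1) * s a b c (m+k+1) ^ j) := by
        rw [mul_pow]; ring

lemma norm_w_le (hD : Summable fun m => D a b c (m + 1)) :
    ∀ (j k : ℕ) {z : ℂ}, ‖z‖ ≤ 1 →
      ‖w a b c j k z‖ ≤ (‖z‖ * s a b c k) ^ j / j.factorial := by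
  intro j
  induction j with
  | zero => intro k z hz; simp [w]
  | succ j ih =>
    intro k z hz
    have hterm : ∀ m : ℕ, ‖K a b c k (m+k+1) z * w a b c j (m+k+1) z‖
        ≤ ‖z‖^(j+1) / j.factorial * (D a b c (m+k+1) * s a b c (m+k+1) ^ j) :=
      fun m => norm_Kw_aux k m j hz (ih (m+k+1) hz)
    have hs2 : Summable fun m : ℕ =>
        ‖z‖^(j+1) / j.factorial * (D a b c (m+k+1) * s a b c (m+k+1) ^ j) :=
      (summable_Ds hD k j).mul_left _
    have hs1 : Summable fun m : ℕ => ‖K a b c k (m+k+1) z * w a b c j (m+k+1) z‖ :=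
      Summable.of_nonneg_of_le (fun m => norm_nonneg _) hterm hs2
    rw [show w a b c (j+1) k z
        = ∑' m : ℕ, K a b c k (m+k+1) z * w a b c j (m+k+1) z from rfl]
    calc ‖∑' m : ℕ, K a b c k (m+k+1) z * w a b c j (m+k+1) z‖
        ≤ ∑' m : ℕ, ‖K a b c k (m+k+1) z * w a b c j (m+k+1) z‖ :=
          norm_tsum_le_tsum_norm hs1
      _ ≤ ∑' m : ℕ, ‖z‖^(j+1) / j.factorial * (D a b c (m+k+1) * s a b c (m+k+1) ^ j) :=
          Summable.tsum_le_tsum hterm hs1 hs2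
      _ = ‖z‖^(j+1) / j.factorial
            * ∑' m : ℕ, D a b c (m+k+1) * s a b c (m+k+1) ^ j := tsum_mul_left
      _ ≤ ‖z‖^(j+1) / j.factorial * (s a b c k ^ (j+1) / (j+1)) := by
          refine mul_le_mul_of_nonneg_left (key_sum hD k j) (by positivity)
      _ = (‖z‖ * s a b c k) ^ (j+1) / (j+1).factorial := by
          rw [mul_pow, Nat.factorial_succ, div_mul_div_comm]
          push_cast
          ring

lemma norm_Kw_le (hD : Summable fun m => D a b c (m + 1)) (j k m : ℕ) {z : ℂ} (hz : ‖z‖ ≤ 1) :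
    ‖K a b c k (m+k+1) z * w a b c j (m+k+1) z‖
      ≤ D a b c (m+k+1) * (s a b c k ^ j / j.factorial) := by
  refine (norm_Kw_aux k m j hz (norm_w_le hD j (m+k+1) hz)).trans ?_
  have h1 : ‖z‖^(j+1) ≤ 1 := pow_le_one₀ (norm_nonneg z) hz
  have h2 : s a b c (m+k+1) ^ j ≤ s a b c k ^ j :=
    pow_le_pow_left₀ (s_nonneg _) (s_anti hD (by omega)) j
  have hDn := D_nonneg a b c (m+k+1)
  have hq : (0:ℝ) < j.factorial := by positivity
  calc ‖z‖^(j+1) / j.factorial * (D a b c (m+k+1) * s a b c (m+k+1) ^ j)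
      ≤ 1 / j.factorial * (D a b c (m+k+1) * s a b c k ^ j) := by
        refine mul_le_mul (by gcongr) (by gcongr) ?_ (by positivity)
        exact mul_nonneg hDn (pow_nonneg (s_nonneg _) j)
    _ = D a b c (m+k+1) * (s a b c k ^ j / j.factorial) := by ring

lemma summable_norm_Kw (hD : Summable fun m => D a b c (m + 1)) (j k : ℕ) {z : ℂ}
    (hz : ‖z‖ ≤ 1) :
    Summable fun m : ℕ => ‖K a b c k (m+k+1) z * w a b c j (m+k+1) z‖ :=
  Summable.of_nonneg_of_le (fun m => norm_nonneg _) (fun m => norm_Kw_le hD j k m hz)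
    ((summable_D_tail hD k).mul_right _)
lemma w_reg (hD : Summable fun m => D a b c (m + 1)) :
    ∀ j k : ℕ, ContinuousOn (w a b c j k) (closedBall (0:ℂ) 1) ∧
      DifferentiableOn ℂ (w a b c j k) (ball (0:ℂ) 1) := by
  intro j
  induction j with
  | zero =>
      intro k
      exact ⟨continuousOn_const, differentiableOn_const 1⟩
  | succ j ih =>
      intro k
      have hu : Summable fun m : ℕ => D a b c (m+k+1) * (s a b c k ^ j / j.factorial) :=
        (summable_D_tail hD k).mul_right _
      have hbound : ∀ (m : ℕ) (z : ℂ), z ∈ closedBall (0:ℂ) 1 →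
          ‖K a b c k (m+k+1) z * w a b c j (m+k+1) z‖
            ≤ D a b c (m+k+1) * (s a b c k ^ j / j.factorial) := fun m z hzb =>
        norm_Kw_le hD j k m (mem_closedBall_zero_iff.1 hzb)
      have htu : TendstoUniformlyOn
          (fun (t : Finset ℕ) z => ∑ m ∈ t, K a b c k (m+k+1) z * w a b c j (m+k+1) z)
          (fun z => ∑' m : ℕ, K a b c k (m+k+1) z * w a b c j (m+k+1) z)
          Filter.atTop (closedBall (0:ℂ) 1) :=
        tendstoUniformlyOn_tsum hu hbound
      have hweq : w a b c (j+1) k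
          = fun z => ∑' m : ℕ, K a b c k (m+k+1) z * w a b c j (m+k+1) z := rfl
      constructor
      · rw [hweq]
        exact htu.continuousOn (Filter.Eventually.frequently (Filter.Eventually.of_forall fun t =>
          continuousOn_finset_sum t fun m _ =>
            ((K_continuous a b c k _).continuousOn.mul (ih (m+k+1)).1)))
      · rw [hweq]
        exact ((htu.mono ball_subset_closedBall).tendstoLocallyUniformlyOn).differentiableOn
          (Filter.Eventually.of_forall fun t => DifferentiableOn.fun_sum fun m _ =>
            ((K_differentiable a b c k _).differentiableOn.mul (ih (m+k+1)).2)) isOpen_ball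

variable (a b c) in
/-- the Jost solution divided by `z^k`. -/
def W (k : ℕ) (z : ℂ) : ℂ := ∑' j : ℕ, w a b c j k z

lemma norm_w_le' (hD : Summable fun m => D a b c (m + 1)) (j k : ℕ) {z : ℂ} (hz : ‖z‖ ≤ 1) :
    ‖w a b c j k z‖ ≤ s a b c k ^ j / j.factorial := by
  refine (norm_w_le hD j k hz).trans ?_
  have h1 : (‖z‖ * s a b c k) ^ j ≤ s a b c k ^ j :=
    pow_le_pow_left₀ (mul_nonneg (norm_nonneg z) (s_nonneg _))
      (mul_le_of_le_one_left (s_nonneg _) hz) j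
  have hq : (0:ℝ) < j.factorial := by positivity
  exact div_le_div_of_nonneg_right h1 hq.le |>.trans_eq rfl

lemma summable_w (hD : Summable fun m => D a b c (m + 1)) (k : ℕ) {z : ℂ} (hz : ‖z‖ ≤ 1) :
    Summable fun j : ℕ => w a b c j k z :=
  Summable.of_norm_bounded (Real.summable_pow_div_factorial (s a b c k))
    fun j => norm_w_le' hD j k hz

lemma W_reg (hD : Summable fun m => D a b c (m + 1)) (k : ℕ) :
    ContinuousOn (W a b c k) (closedBall (0:ℂ) 1) ∧
      DifferentiableOn ℂ (W a b c k) (ball (0:ℂ) 1) := by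
  have htu : TendstoUniformlyOn (fun (t : Finset ℕ) z => ∑ j ∈ t, w a b c j k z)
      (W a b c k) Filter.atTop (closedBall (0:ℂ) 1) :=
    tendstoUniformlyOn_tsum (Real.summable_pow_div_factorial (s a b c k))
      fun j z hzb => norm_w_le' hD j k (mem_closedBall_zero_iff.1 hzb)
  constructor
  · exact htu.continuousOn (Filter.Eventually.frequently (Filter.Eventually.of_forall fun t =>
      continuousOn_finset_sum t fun j _ => (w_reg hD j k).1))
  · exact ((htu.mono ball_subset_closedBall).tendstoLocallyUniformlyOn).differentiableOn
      (Filter.Eventually.of_forall fun t => DifferentiableOn.fun_sum fun j _ => (w_reg hD j k).2)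
      isOpen_ball

lemma exp_tail (x : ℝ) : ∑' j : ℕ, x^(j+1) / (j+1).factorial = Real.exp x - 1 := by
  have hx : Real.exp x = ∑' n : ℕ, x^n / n.factorial := by
    rw [Real.exp_eq_exp_ℝ, NormedSpace.exp_eq_tsum_div]
  rw [hx, Summable.tsum_eq_zero_add (Real.summable_pow_div_factorial x)]
  simp

lemma norm_W_sub_one (hD : Summable fun m => D a b c (m + 1)) (k : ℕ) {z : ℂ}
    (hz : ‖z‖ ≤ 1) :
    ‖W a b c k z - 1‖ ≤ Real.exp (‖z‖ * s a b c k) - 1 := by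
  have hsum := summable_w hD k (z := z) hz
  have h0 : W a b c k z = 1 + ∑' j : ℕ, w a b c (j+1) k z := by
    rw [W, Summable.tsum_eq_zero_add hsum]; rfl
  rw [h0, add_sub_cancel_left]
  have hnorm : Summable fun j : ℕ => (‖z‖ * s a b c k)^(j+1) / (j+1).factorial := by
    exact (summable_nat_add_iff 1).2 (Real.summable_pow_div_factorial _)
  have hs1 : Summable fun j : ℕ => ‖w a b c (j+1) k z‖ :=
    Summable.of_nonneg_of_le (fun j => norm_nonneg _)
      (fun j => norm_w_le hD (j+1) k hz) hnorm
  calc ‖∑' j : ℕ, w a b c (j+1) k z‖ ≤ ∑' j : ℕ, ‖w a b c (j+1) k z‖ :=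
        norm_tsum_le_tsum_norm hs1
    _ ≤ ∑' j : ℕ, (‖z‖ * s a b c k)^(j+1) / (j+1).factorial :=
        Summable.tsum_le_tsum (fun j => norm_w_le hD (j+1) k hz) hs1 hnorm
    _ = Real.exp (‖z‖ * s a b c k) - 1 := exp_tail _

lemma norm_W_le (hD : Summable fun m => D a b c (m + 1)) (k : ℕ) {z : ℂ} (hz : ‖z‖ ≤ 1) :
    ‖W a b c k z‖ ≤ Real.exp (s a b c k) := by
  have h1 := norm_W_sub_one hD k hz
  have h2 : Real.exp (‖z‖ * s a b c k) ≤ Real.exp (s a b c k) :=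
    Real.exp_le_exp.2 (mul_le_of_le_one_left (s_nonneg _) hz)
  calc ‖W a b c k z‖ = ‖(W a b c k z - 1) + 1‖ := by ring_nf
    _ ≤ ‖W a b c k z - 1‖ + ‖(1:ℂ)‖ := norm_add_le _ _
    _ ≤ Real.exp (s a b c k) := by rw [norm_one]; linarith

lemma volterra (hD : Summable fun m => D a b c (m + 1)) (k : ℕ) {z : ℂ} (hz : ‖z‖ ≤ 1) :
    ∑' m : ℕ, K a b c k (m+k+1) z * W a b c (m+k+1) z = W a b c k z - 1 := by
  have hF : Summable (Function.uncurry
      fun m j : ℕ => K a b c k (m+k+1) z * w a b c j (m+k+1) z) := by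
    have hfg : Summable (fun p : ℕ × ℕ =>
        D a b c (p.1+k+1) * (s a b c k ^ p.2 / p.2.factorial)) :=
      Summable.mul_of_nonneg (f := fun m : ℕ => D a b c (m+k+1))
        (g := fun j : ℕ => s a b c k ^ j / j.factorial)
        (summable_D_tail hD k) (Real.summable_pow_div_factorial _)
        (Pi.le_def.mpr fun m => D_nonneg a b c _)
        (Pi.le_def.mpr fun j => div_nonneg (pow_nonneg (s_nonneg _) j) (Nat.cast_nonneg _))
    refine Summable.of_norm_bounded hfg ?_
    rintro ⟨m, j⟩
    exact norm_Kw_le hD j k m hz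
  calc ∑' m : ℕ, K a b c k (m+k+1) z * W a b c (m+k+1) z
      = ∑' (m : ℕ) (j : ℕ), K a b c k (m+k+1) z * w a b c j (m+k+1) z := by
        refine tsum_congr fun m => ?_
        simp only [W]
        exact (tsum_mul_left).symm
    _ = ∑' (j : ℕ) (m : ℕ), K a b c k (m+k+1) z * w a b c j (m+k+1) z :=
        (Summable.tsum_comm hF).symm
    _ = ∑' j : ℕ, w a b c (j+1) k z := tsum_congr fun j => rfl
    _ = W a b c k z - 1 := by
        have h := Summable.tsum_eq_zero_add (summable_w hD k (z := z) hz)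
        have h0 : w a b c 0 k z = 1 := rfl
        simp only [W]
        rw [h, h0]
        ring
lemma kerT_mul {z : ℂ} (hz0 : z ≠ 0) (hz2 : z ^ 2 ≠ 1) (k m : ℕ) (hkm : k < m) :
    kerT a b c z k m * z ^ m = z ^ k * K a b c k m z := by
  have h1 : greenG z k m = z ^ ((k:ℤ) - m + 1) * P (m - k) z := by
    rw [greenG_eq hz0 hz2 (by exact_mod_cast hkm.le),
      show ((m:ℤ) - (k:ℤ)).toNat = m - k from by omega]
  have h2 : greenG z k ((m:ℤ) - 1) = z ^ ((k:ℤ) - m + 2) * P (m - k - 1) z := by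
    rw [greenG_eq hz0 hz2 (by omega : (k:ℤ) ≤ (m:ℤ) - 1),
      show ((m:ℤ) - 1 - (k:ℤ)).toNat = m - k - 1 from by omega,
      show (k:ℤ) - ((m:ℤ) - 1) + 1 = (k:ℤ) - m + 2 from by ring]
  have e1 : z ^ ((k:ℤ) - m + 1) * z ^ m = z ^ k * z := by
    rw [← zpow_natCast z m, ← zpow_natCast z k, ← zpow_add₀ hz0, ← zpow_add_one₀ hz0]
    congr 1; ring
  have e2 : z ^ ((k:ℤ) - m + 2) * z ^ m = z ^ k * z ^ 2 := by
    rw [← zpow_natCast z m, ← zpow_natCast z k, ← zpow_natCast z 2,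
      ← zpow_add₀ hz0, ← zpow_add₀ hz0]
    congr 1; push_cast; ring
  rw [kerT, h1, h2, K]
  linear_combination (-(b m) * P (m-k) z) * e1
    + ((1 - a (m-1) * c (m-1)) * P (m-k-1) z) * e2

end Seq

end Stmt9

open Stmt9 in
/-- Existence of the Jost solutions under `∑ m δ_m < ∞` (Theorem 1.2 (ii)):
`u_k⁺` is analytic in the open unit disk, continuous on the closed disk,
solves the Volterra equation, and satisfies
`|u_k⁺(z) - z^k| ≤ |z|^k (e^{|z| s₁(k)} - 1)` with
`s₁(k) = ∑_{n=k+1}^∞ n δ_n`, `δ_n = |b_n| + |1 - a_{n-1} c_{n-1}|`. -/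
theorem stmt9 (a b c : ℕ → ℂ) (ha0 : a 0 = 1) (hc0 : c 0 = 1)
    (hΔ1 : Summable (fun m : ℕ => ((m : ℝ) + 1) * (‖b (m + 1)‖ + ‖1 - a m * c m‖))) :
    ∃ u : ℕ → ℂ → ℂ,
      (∀ k : ℕ, AnalyticOnNhd ℂ (u k) (Metric.ball (0 : ℂ) 1)) ∧
      (∀ k : ℕ, ContinuousOn (u k) (Metric.closedBall (0 : ℂ) 1)) ∧
      (∀ z : ℂ, z ∈ Metric.closedBall (0 : ℂ) 1 → z ≠ 0 → z ≠ 1 → z ≠ -1 → ∀ k : ℕ,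
        Summable (fun m : ℕ => ‖kerT a b c z k (m + k + 1) * u (m + k + 1) z‖) ∧
        u k z = z ^ k + ∑' m : ℕ, kerT a b c z k (m + k + 1) * u (m + k + 1) z) ∧
      (∀ z : ℂ, z ∈ Metric.closedBall (0 : ℂ) 1 → ∀ k : ℕ,
        ‖u k z - z ^ k‖ ≤
          ‖z‖ ^ k *
            (Real.exp (‖z‖ *
                ∑' n : ℕ, ((n + k + 1 : ℝ) * (‖b (n + k + 1)‖ + ‖1 - a (n + k) * c (n + k)‖))) - 1)) := by
  have hD : Summable fun m : ℕ => D a b c (m + 1) := by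
    refine hΔ1.congr fun m => ?_
    simp only [D, Nat.add_sub_cancel]
    push_cast
    ring
  refine ⟨fun k z => z ^ k * W a b c k z, ?_, ?_, ?_, ?_⟩
  · intro k
    exact (((differentiable_pow k).differentiableOn).mul (W_reg hD k).2).analyticOnNhd
      isOpen_ball
  · intro k
    exact ((continuous_pow k).continuousOn).mul (W_reg hD k).1
  · intro z hzb hz0 hzo hzn k
    have hz : ‖z‖ ≤ 1 := mem_closedBall_zero_iff.1 hzb
    have hz2 : z ^ 2 ≠ 1 := by
      intro h
      have h' : (z - 1) * (z + 1) = 0 := by linear_combination h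
      rcases mul_eq_zero.1 h' with h'' | h''
      · exact hzo (by linear_combination h'')
      · exact hzn (by linear_combination h'')
    have hpt : ∀ m : ℕ, kerT a b c z k (m+k+1) * (z ^ (m+k+1) * W a b c (m+k+1) z)
        = z ^ k * (K a b c k (m+k+1) z * W a b c (m+k+1) z) := by
      intro m
      have hker := kerT_mul (a := a) (b := b) (c := c) hz0 hz2 k (m+k+1) (by omega)
      calc kerT a b c z k (m+k+1) * (z ^ (m+k+1) * W a b c (m+k+1) z)
          = (kerT a b c z k (m+k+1) * z ^ (m+k+1)) * W a b c (m+k+1) z := by ring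
        _ = (z ^ k * K a b c k (m+k+1) z) * W a b c (m+k+1) z := by rw [hker]
        _ = z ^ k * (K a b c k (m+k+1) z * W a b c (m+k+1) z) := by ring
    constructor
    · refine Summable.of_nonneg_of_le (fun m => norm_nonneg _) (fun m => ?_)
        ((summable_D_tail hD k).mul_right (Real.exp (s a b c k)))
      rw [hpt m, norm_mul, norm_mul]
      have hK : ‖K a b c k (m+k+1) z‖ ≤ D a b c (m+k+1) :=
        (norm_K_le _ _ hz).trans (mul_le_of_le_one_left (D_nonneg a b c _) hz)
      have hW : ‖W a b c (m+k+1) z‖ ≤ Real.exp (s a b c k) :=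
        (norm_W_le hD (m+k+1) hz).trans (Real.exp_le_exp.2 (s_anti hD (by omega)))
      have hzk : ‖z ^ k‖ ≤ 1 := by
        rw [norm_pow]; exact pow_le_one₀ (norm_nonneg z) hz
      calc ‖z ^ k‖ * (‖K a b c k (m+k+1) z‖ * ‖W a b c (m+k+1) z‖)
          ≤ 1 * (D a b c (m+k+1) * Real.exp (s a b c k)) := by
            refine mul_le_mul hzk
              (mul_le_mul hK hW (norm_nonneg _) (D_nonneg a b c _)) ?_ zero_le_one
            exact mul_nonneg (norm_nonneg _) (norm_nonneg _)
        _ = D a b c (m+k+1) * Real.exp (s a b c k) := one_mul _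
    · have hsum := volterra hD k hz
      have hser : ∑' m : ℕ, kerT a b c z k (m+k+1) * (z ^ (m+k+1) * W a b c (m+k+1) z)
          = z ^ k * (W a b c k z - 1) := by
        rw [tsum_congr hpt, tsum_mul_left, hsum]
      rw [hser]
      ring
  · intro z hzb k
    have hz : ‖z‖ ≤ 1 := mem_closedBall_zero_iff.1 hzb
    have hs_eq : ∑' n : ℕ, ((n : ℝ) + (k:ℝ) + 1) * (‖b (n+k+1)‖ + ‖1 - a (n+k) * c (n+k)‖)
        = s a b c k := by
      refine tsum_congr fun n => ?_
      simp only [D, show n+k+1-1 = n+k from by omega]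
      push_cast
      ring
    rw [hs_eq]
    have hfac : z ^ k * W a b c k z - z ^ k = z ^ k * (W a b c k z - 1) := by ring
    rw [hfac, norm_mul, norm_pow]
    exact mul_le_mul_of_nonneg_left (norm_W_sub_one hD k hz)
      (pow_nonneg (norm_nonneg z) k)
end
end

section
/- Let z ∈ ℂ with z ≠ 0 and z² ≠ 1. Then for all integers k and m the Green kernel satisfies the two identities: G(k,m−1;z) + G(k,m+1;z) − (z + 1/z) G(k,m;z) = δ_{k,m} and G(k−1,m;z) + G(k+1,m;z) − (z + 1/z) G(k,m;z) = δ_{k,m}, where δ_{k,m} is the Kronecker delta (equal to 1 if k = m and 0 otherwise). -/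
noncomputable section

lemma hd' (z : ℂ) (hz0 : z ≠ 0) (hz2 : z ^ 2 ≠ 1) : z - z⁻¹ ≠ 0 := by
  intro h
  apply hz2
  have := sub_eq_zero.mp h
  field_simp at this
  rw [sq]
  linear_combination this

lemma key (z : ℂ) (hz0 : z ≠ 0) (hz2 : z ^ 2 ≠ 1) (n : ℤ) :
    (z ^ (n - 1) - z ^ (1 - n)) / (z - z⁻¹) + (z ^ (n + 1) - z ^ (-n - 1)) / (z - z⁻¹)
      - (z + 1 / z) * ((z ^ n - z ^ (-n)) / (z - z⁻¹)) = 0 := by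
  have hd := hd' z hz0 hz2
  have hw : z ^ n ≠ 0 := zpow_ne_zero _ hz0
  rw [zpow_sub₀ hz0, zpow_sub₀ hz0, zpow_add₀ hz0, zpow_sub₀ hz0 (-n) 1, zpow_neg, zpow_one]
  field_simp
  ring

/-- Identities for the Green kernel (relations (1.2) in the paper):
`G(k,m-1;z) + G(k,m+1;z) - (z + 1/z) G(k,m;z) = δ_{k,m}` and
`G(k-1,m;z) + G(k+1,m;z) - (z + 1/z) G(k,m;z) = δ_{k,m}`. -/
theorem stmt10 (z : ℂ) (hz0 : z ≠ 0) (hz2 : z ^ 2 ≠ 1) (k m : ℤ) :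
    greenG z k (m - 1) + greenG z k (m + 1) - (z + 1 / z) * greenG z k m
        = (if k = m then (1 : ℂ) else 0) ∧
      greenG z (k - 1) m + greenG z (k + 1) m - (z + 1 / z) * greenG z k m
        = (if k = m then (1 : ℂ) else 0) := by
  have hd := hd' z hz0 hz2
  constructor
  · rcases lt_trichotomy k m with h | h | h
    · have h1 : k ≤ m - 1 := by omega
      have h2 : k ≤ m + 1 := by omega
      have h3 : k ≤ m := by omega
      have hne : k ≠ m := by omega
      simp only [greenG, if_pos h1, if_pos h2, if_pos h3, if_neg hne]
      have e1 : m - 1 - k = (m - k) - 1 := by ring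
      have e2 : k - (m - 1) = 1 - (m - k) := by ring
      have e3 : m + 1 - k = (m - k) + 1 := by ring
      have e4 : k - (m + 1) = -(m - k) - 1 := by ring
      have e5 : k - m = -(m - k) := by ring
      rw [e1, e2, e3, e4, e5]
      exact key z hz0 hz2 (m - k)
    · subst h
      have h1 : ¬ (k ≤ k - 1) := by omega
      have h2 : k ≤ k + 1 := by omega
      simp only [greenG, if_pos h2, if_pos le_rfl, if_neg h1, if_pos rfl]
      simp only [sub_self, zpow_zero, add_sub_cancel_left, sub_add_cancel_left]
      rw [zpow_one, zpow_neg, zpow_one]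
      have hq : z * z - 1 ≠ 0 := by
        intro h
        apply hz2
        rw [sq]
        linear_combination h
      field_simp
      rw [if_pos trivial]
      ring
    · have h1 : ¬ (k ≤ m - 1) := by omega
      have h3 : ¬ (k ≤ m) := by omega
      have hne : k ≠ m := by omega
      simp only [greenG, if_neg h1, if_neg h3, if_neg hne]
      by_cases h2 : k ≤ m + 1
      · have : k = m + 1 := by omega
        subst this
        simp
      · simp [h2]
  · rcases lt_trichotomy k m with h | h | h
    · have h1 : k - 1 ≤ m := by omega
      have h2 : k + 1 ≤ m := by omega
      have h3 : k ≤ m := by omega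
      have hne : k ≠ m := by omega
      simp only [greenG, if_pos h1, if_pos h2, if_pos h3, if_neg hne]
      have e1 : m - (k + 1) = (m - k) - 1 := by ring
      have e2 : k + 1 - m = 1 - (m - k) := by ring
      have e3 : m - (k - 1) = (m - k) + 1 := by ring
      have e4 : k - 1 - m = -(m - k) - 1 := by ring
      have e5 : k - m = -(m - k) := by ring
      rw [e1, e2, e3, e4, e5]
      have := key z hz0 hz2 (m - k)
      linear_combination this
    · subst h
      have h1 : k - 1 ≤ k := by omega
      have h2 : ¬ (k + 1 ≤ k) := by omega
      simp only [greenG, if_pos h1, if_pos le_rfl, if_neg h2, if_pos rfl]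
      simp only [sub_self, zpow_zero, sub_sub_cancel, sub_sub_cancel_left]
      rw [zpow_one, zpow_neg, zpow_one]
      have hq : z * z - 1 ≠ 0 := by
        intro h
        apply hz2
        rw [sq]
        linear_combination h
      field_simp
      rw [if_pos trivial]
      ring
    · have h2 : ¬ (k + 1 ≤ m) := by omega
      have h3 : ¬ (k ≤ m) := by omega
      have hne : k ≠ m := by omega
      simp only [greenG, if_neg h2, if_neg h3, if_neg hne]
      by_cases h1 : k - 1 ≤ m
      · have : k = m + 1 := by omega
        subst this
        simp
      · simp [h1]
end
end

section
/- Let a, b, c : ℕ → ℂ (indexed from 1, with the convention a_0 = c_0 = 1) and set δ_m := |b_m| + |1 − a_{m−1} c_{m−1}|. Then for every z in the closed unit disk with z ≠ ±1, every integer k ≥ 0 and every integer m ≥ 1, the modified kernel T̃(k,m;z) := z^{m−k} T(k,m;z) satisfies |T̃(k,m;z)| ≤ δ_m · |z| · min{ max(m−k, 0), 2/|1 − z²| }. In particular, |T̃(k,m;z)| ≤ |ω(z)| δ_m, where ω(z) := 2z/(1 − z²). -/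
noncomputable section

lemma quot_bound (z : ℂ) (hz : ‖z‖ ≤ 1) (hz2 : z ^ 2 ≠ 1) (n : ℕ) :
    ‖(z ^ (2 * n) - 1) / (z ^ 2 - 1)‖ ≤
      min (n : ℝ) (2 / ‖1 - z ^ 2‖) := by
  have hne : z ^ 2 - 1 ≠ 0 := sub_ne_zero.mpr hz2
  have habs : (0:ℝ) < ‖z ^ 2 - 1‖ := norm_pos_iff.mpr hne
  have hzn : ∀ j : ℕ, ‖z ^ j‖ ≤ 1 := fun j => by
    rw [norm_pow]; exact pow_le_one₀ (norm_nonneg z) hz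
  refine le_min ?_ ?_
  · have key : (z ^ (2 * n) - 1) / (z ^ 2 - 1) = ∑ i ∈ Finset.range n, (z ^ 2) ^ i := by
      rw [geom_sum_eq hz2, pow_mul]
    rw [key]
    calc ‖∑ i ∈ Finset.range n, (z ^ 2) ^ i‖
        ≤ ∑ i ∈ Finset.range n, ‖(z ^ 2) ^ i‖ :=
          norm_sum_le (Finset.range n) fun i => (z ^ 2) ^ i
      _ ≤ ∑ i ∈ Finset.range n, 1 := by
          refine Finset.sum_le_sum fun i _ => ?_
          rw [← pow_mul]; exact hzn _
      _ = n := by simp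
  · rw [norm_div, norm_sub_rev 1 (z ^ 2)]
    gcongr
    have h := norm_add_le (z ^ (2 * n)) (-1)
    rw [← sub_eq_add_neg] at h
    simp only [norm_neg, norm_one] at h
    linarith [hzn (2 * n)]

/-- Bounds (1.10)–(1.11) for the modified kernel `T̃(k,m;z) = z^{m-k} T(k,m;z)`:
`|T̃(k,m;z)| ≤ δ_m |z| min{(m-k)₊, 2/|1-z²|}` and, in particular,
`|T̃(k,m;z)| ≤ |ω(z)| δ_m`, where `ω(z) = 2z/(1-z²)` and
`δ_m = |b_m| + |1 - a_{m-1} c_{m-1}|`. -/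
theorem stmt11 (a b c : ℕ → ℂ) (ha0 : a 0 = 1) (hc0 : c 0 = 1)
    (z : ℂ) (hz : ‖z‖ ≤ 1) (hzp : z ≠ 1) (hzm : z ≠ -1)
    (k m : ℕ) (hm : 1 ≤ m) :
    ‖z ^ ((m : ℤ) - (k : ℤ)) * kerT a b c z k m‖ ≤
        (‖b m‖ + ‖1 - a (m - 1) * c (m - 1)‖) *
          (‖z‖ * min (max ((m : ℝ) - (k : ℝ)) 0) (2 / ‖1 - z ^ 2‖)) ∧
      ‖z ^ ((m : ℤ) - (k : ℤ)) * kerT a b c z k m‖ ≤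
        ‖2 * z / (1 - z ^ 2)‖ * (‖b m‖ + ‖1 - a (m - 1) * c (m - 1)‖) := by
  have hz2 : z ^ 2 ≠ 1 := by
    intro h
    have : (z - 1) * (z + 1) = 0 := by linear_combination h
    rcases mul_eq_zero.mp this with h1 | h1
    · exact hzp (sub_eq_zero.mp h1)
    · exact hzm (eq_neg_of_add_eq_zero_left h1)
  have hne : z ^ 2 - 1 ≠ 0 := sub_ne_zero.mpr hz2
  have hne' : (1:ℂ) - z ^ 2 ≠ 0 := fun h => hne (by linear_combination -h)
  by_cases hk : k < m
  swap
  · -- trivial case m ≤ k : kernel vanishes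
    have g1 : greenG z k m = 0 := by
      unfold greenG
      split
      · have e1 : (m:ℤ) - k = 0 := by omega
        have e2 : (k:ℤ) - m = 0 := by omega
        rw [e1, e2, sub_self, zero_div]
      · rfl
    have g2 : greenG z k ((m:ℤ) - 1) = 0 := by
      unfold greenG
      rw [if_neg]; omega
    have hker : kerT a b c z k m = 0 := by
      rw [kerT, g1, g2]; ring
    rw [hker, mul_zero, norm_zero]
    constructor <;> positivity
  by_cases hz0 : z = 0
  · have g0 : ∀ k' m' : ℤ, greenG z k' m' = 0 := fun k' m' => by
      simp [greenG, hz0]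
    have hker : kerT a b c z k m = 0 := by
      rw [kerT, g0, g0]; ring
    rw [hker, mul_zero, norm_zero]
    constructor <;> positivity
  -- main case
  obtain ⟨p, hp⟩ : ∃ p, m = k + (p + 1) := ⟨m - k - 1, by omega⟩
  have hzz : z - z⁻¹ ≠ 0 := by
    intro h
    apply hne
    have : (z - z⁻¹) * z = (z ^ 2 - 1) := by field_simp
    rw [h, zero_mul] at this
    exact this.symm
  have hid : z ^ ((m : ℤ) - (k : ℤ)) * kerT a b c z k m =
      -(b m) * (z * ((z ^ (2 * (p + 1)) - 1) / (z ^ 2 - 1))) +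
      (1 - a (m - 1) * c (m - 1)) * (z * (z * ((z ^ (2 * p) - 1) / (z ^ 2 - 1)))) := by
    have h1 : (k:ℤ) ≤ (m:ℤ) := by omega
    have h2 : (k:ℤ) ≤ (m:ℤ) - 1 := by omega
    have e1 : (m:ℤ) - k = ((p + 1 : ℕ) : ℤ) := by omega
    have e2 : (k:ℤ) - m = -((p + 1 : ℕ) : ℤ) := by omega
    have e3 : (m:ℤ) - 1 - k = ((p : ℕ) : ℤ) := by omega
    have e4 : (k:ℤ) - ((m:ℤ) - 1) = -((p : ℕ) : ℤ) := by omega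
    rw [kerT, greenG, greenG, if_pos h1, if_pos h2, e1, e2, e3, e4,
      zpow_neg, zpow_neg, zpow_natCast, zpow_natCast]
    have hzp0 : z ^ (p + 1) ≠ 0 := pow_ne_zero _ hz0
    have hzpp : z ^ p ≠ 0 := pow_ne_zero _ hz0
    have hzz' : z - z⁻¹ = (z ^ 2 - 1) / z := by field_simp
    rw [hzz']
    field_simp
    ring
  have hq1 := quot_bound z hz hz2 (p + 1)
  have hq0 := quot_bound z hz hz2 p
  set A := 2 / ‖1 - z ^ 2‖ with hA
  have hA0 : 0 ≤ A := by positivity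
  have hmax : max ((m : ℝ) - (k : ℝ)) 0 = ((p:ℝ) + 1) := by
    rw [max_eq_left]
    · have : (m:ℝ) = (k:ℝ) + ((p:ℝ) + 1) := by push_cast [hp]; ring
      linarith
    · have h' : (m:ℝ) = (k:ℝ) + ((p:ℝ) + 1) := by push_cast [hp]; ring
      have hppos : (0:ℝ) ≤ (p:ℝ) := Nat.cast_nonneg p
      linarith
  push_cast at hq1 hq0
  have habz : 0 ≤ ‖z‖ := norm_nonneg z
  set Q1 := (z ^ (2 * (p + 1)) - 1) / (z ^ 2 - 1) with hQ1
  set Q0 := (z ^ (2 * p) - 1) / (z ^ 2 - 1) with hQ0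
  set M := ((p:ℝ) + 1) ⊓ A with hM
  have hq0' : ‖Q0‖ ≤ M := hq0.trans (min_le_min (by linarith) le_rfl)
  have key : ‖z ^ ((m:ℤ) - (k:ℤ)) * kerT a b c z k m‖ ≤
      (‖b m‖ + ‖1 - a (m - 1) * c (m - 1)‖) * (‖z‖ * M) := by
    rw [hid]
    have b1 : ‖z‖ * ‖Q1‖ ≤ ‖z‖ * M :=
      mul_le_mul_of_nonneg_left hq1 habz
    have b2 : ‖z‖ * (‖z‖ * ‖Q0‖) ≤ ‖z‖ * M := by
      have h' : ‖z‖ * ‖Q0‖ ≤ 1 * M :=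
        mul_le_mul hz hq0' (norm_nonneg _) one_pos.le
      rw [one_mul] at h'
      exact mul_le_mul_of_nonneg_left h' habz
    calc ‖-(b m) * (z * Q1) + (1 - a (m - 1) * c (m - 1)) * (z * (z * Q0))‖
        ≤ ‖-(b m) * (z * Q1)‖ +
            ‖(1 - a (m - 1) * c (m - 1)) * (z * (z * Q0))‖ :=
          norm_add_le _ _
      _ = ‖b m‖ * (‖z‖ * ‖Q1‖) +
            ‖1 - a (m - 1) * c (m - 1)‖ * (‖z‖ * (‖z‖ * ‖Q0‖)) := by
          simp [norm_mul]
      _ ≤ ‖b m‖ * (‖z‖ * M) +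
            ‖1 - a (m - 1) * c (m - 1)‖ * (‖z‖ * M) :=
          add_le_add (mul_le_mul_of_nonneg_left b1 (norm_nonneg _))
            (mul_le_mul_of_nonneg_left b2 (norm_nonneg _))
      _ = (‖b m‖ + ‖1 - a (m - 1) * c (m - 1)‖) * (‖z‖ * M) := by ring
  constructor
  · rw [hmax]; exact key
  · refine key.trans ?_
    have homega : ‖2 * z / (1 - z ^ 2)‖ = ‖z‖ * A := by
      rw [norm_div, norm_mul, Complex.norm_two, hA]; ring
    rw [homega]
    have hMA : M ≤ A := min_le_right _ _
    have := mul_le_mul_of_nonneg_left hMA habz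
    nlinarith [norm_nonneg (b m), norm_nonneg (1 - a (m - 1) * c (m - 1)), habz]
end
end

section
/- Let δ : ℕ → ℝ be a nonnegative summable sequence (indexed from 1), and set s(k) := ∑_{n=k+1}^∞ δ_n for k ≥ 0. Then for every integer j ≥ 0 and every k ≥ 0, ∑_{m=k+1}^∞ δ_m · s(m)^j ≤ s(k)^{j+1}/(j+1). -/
noncomputable section

private lemma key_pow (a b : ℝ) (hb : 0 ≤ b) (hab : b ≤ a) (j : ℕ) :
    ((j : ℝ) + 1) * (b ^ j * (a - b)) ≤ a ^ (j + 1) - b ^ (j + 1) := by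
  have ha : 0 ≤ a := hb.trans hab
  rw [← geom_sum₂_mul a b (j + 1)]
  have hgeom : ((j : ℝ) + 1) * b ^ j ≤ ∑ i ∈ Finset.range (j + 1), a ^ i * b ^ (j - i) := by
    have : ∀ i ∈ Finset.range (j + 1), b ^ j ≤ a ^ i * b ^ (j - i) := by
      intro i hi
      rw [Finset.mem_range] at hi
      have h1 : b ^ j = b ^ i * b ^ (j - i) := by
        rw [← pow_add]; congr 1; omega
      rw [h1]
      exact mul_le_mul_of_nonneg_right (pow_le_pow_left₀ hb hab i) (pow_nonneg hb _)
    calc ((j : ℝ) + 1) * b ^ j = ∑ _i ∈ Finset.range (j + 1), b ^ j := by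
          rw [Finset.sum_const, Finset.card_range, nsmul_eq_mul]; push_cast; ring
      _ ≤ _ := Finset.sum_le_sum this
  calc ((j : ℝ) + 1) * (b ^ j * (a - b)) = ((j : ℝ) + 1) * b ^ j * (a - b) := by ring
    _ ≤ (∑ i ∈ Finset.range (j + 1), a ^ i * b ^ (j - i)) * (a - b) :=
        mul_le_mul_of_nonneg_right hgeom (by linarith)

/-- The elementary tail-sum estimate used in the successive approximations
(proof of Theorem 1.2): for a nonnegative summable sequence `δ` (indexed from 1)
with tail sums `s(k) = ∑_{n=k+1}^∞ δ_n`, one has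
`∑_{m=k+1}^∞ δ_m s(m)^j ≤ s(k)^{j+1}/(j+1)` for all `j, k ≥ 0`. -/
theorem stmt12 (δ : ℕ → ℝ) (hpos : ∀ n : ℕ, 0 ≤ δ n) (hsum : Summable δ)
    (j k : ℕ) :
    ∑' m : ℕ, δ (m + k + 1) * (∑' n : ℕ, δ (n + (m + k + 1) + 1)) ^ j
      ≤ (∑' n : ℕ, δ (n + k + 1)) ^ (j + 1) / ((j : ℝ) + 1) := by
  set s : ℕ → ℝ := fun p => ∑' n, δ (n + p + 1) with hs
  have hsummable : ∀ p : ℕ, Summable (fun n => δ (n + p + 1)) := by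
    intro p
    have : Function.Injective (fun n : ℕ => n + (p + 1)) := add_left_injective _
    have := hsum.comp_injective this
    simpa [Function.comp_def, ← add_assoc] using this
  have hs_nonneg : ∀ p, 0 ≤ s p := fun p => tsum_nonneg (fun n => hpos _)
  have hs_rec : ∀ p, s p = δ (p + 1) + s (p + 1) := by
    intro p
    have := Summable.tsum_eq_zero_add (hsummable p)
    simpa [show ∀ n : ℕ, n + 1 + p + 1 = n + (p + 1) + 1 from fun n => by omega] using this
  have hjpos : (0 : ℝ) < (j : ℝ) + 1 := by positivity
  -- pointwise bound by telescoping term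
  have hterm : ∀ m : ℕ, δ (m + k + 1) * (s (m + k + 1)) ^ j
      ≤ (s (k + m) ^ (j + 1) - s (k + m + 1) ^ (j + 1)) / ((j : ℝ) + 1) := by
    intro m
    have hrec := hs_rec (k + m)
    have hidx : k + m + 1 = m + k + 1 := by omega
    rw [hidx] at hrec
    have hd : δ (m + k + 1) = s (k + m) - s (m + k + 1) := by linarith
    rw [hidx, le_div_iff₀ hjpos, hd]
    have := key_pow (s (k + m)) (s (m + k + 1)) (hs_nonneg _) (by linarith [hpos (m + k + 1)]) j
    calc (s (k + m) - s (m + k + 1)) * s (m + k + 1) ^ j * ((j : ℝ) + 1)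
        = ((j : ℝ) + 1) * (s (m + k + 1) ^ j * (s (k + m) - s (m + k + 1))) := by ring
      _ ≤ s (k + m) ^ (j + 1) - s (m + k + 1) ^ (j + 1) := this
  have hnonneg : ∀ m : ℕ, 0 ≤ δ (m + k + 1) * (s (m + k + 1)) ^ j :=
    fun m => mul_nonneg (hpos _) (pow_nonneg (hs_nonneg _) _)
  apply Real.tsum_le_of_sum_range_le hnonneg
  intro N
  calc ∑ m ∈ Finset.range N, δ (m + k + 1) * (s (m + k + 1)) ^ j
      ≤ ∑ m ∈ Finset.range N, (s (k + m) ^ (j + 1) - s (k + m + 1) ^ (j + 1)) / ((j : ℝ) + 1) :=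
        Finset.sum_le_sum (fun m _ => hterm m)
    _ = (s (k + 0) ^ (j + 1) - s (k + N) ^ (j + 1)) / ((j : ℝ) + 1) := by
        rw [← Finset.sum_div]
        congr 1
        exact Finset.sum_range_sub' (fun m => s (k + m) ^ (j + 1)) N
    _ ≤ s k ^ (j + 1) / ((j : ℝ) + 1) := by
        gcongr
        simp only [Nat.add_zero]
        nlinarith [pow_nonneg (hs_nonneg (k + N)) (j + 1)]
end
end

section
/- Let n ∈ ℕ and h > 0. Every eigenvalue λ of the discrete Schrödinger operator J_{n,h} with pure imaginary step potential satisfies |Re λ| < 2 and 0 < Im λ < h. -/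
set_option maxHeartbeats 1000000

noncomputable section

/-- `l` is an eigenvalue of the semi-infinite discrete Schrödinger matrix `J_{n,h}`
with pure imaginary step potential (diagonal entries `i h` on sites `1,…,n`, `0` afterwards;
off-diagonal entries `1`): there is a nonzero square-summable sequence `g = (g_k)_{k ≥ 1}`,
extended by `g 0 = 0`, with `g_{k-1} + b_k g_k + g_{k+1} = l g_k` for all `k ≥ 1`. -/
def IsSchrodingerEigenvalue (n : ℕ) (h : ℝ) (l : ℂ) : Prop :=
  ∃ g : ℕ → ℂ, g 0 = 0 ∧ g ≠ 0 ∧ Summable (fun k : ℕ => ‖g k‖ ^ 2) ∧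
    ∀ k : ℕ, 1 ≤ k →
      g (k - 1) + (if k ≤ n then (h : ℂ) * Complex.I else 0) * g k + g (k + 1) = l * g k

/-- If `g 0 = g 1 = 0` then the three-term recurrence forces `g ≡ 0`. -/
lemma schrod_up_zero (n : ℕ) (h : ℝ) (l : ℂ) (g : ℕ → ℂ) (hg0 : g 0 = 0) (hg1 : g 1 = 0)
    (heq : ∀ k : ℕ, 1 ≤ k →
      g (k - 1) + (if k ≤ n then (h : ℂ) * Complex.I else 0) * g k + g (k + 1) = l * g k) :
    ∀ k, g k = 0 := by
  have H : ∀ k, g k = 0 ∧ g (k + 1) = 0 := by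
    intro k
    induction k with
    | zero => exact ⟨hg0, hg1⟩
    | succ m ih =>
      refine ⟨ih.2, ?_⟩
      have h2 := heq (m + 1) (by omega)
      simp only [Nat.add_sub_cancel] at h2
      rw [ih.1, ih.2] at h2
      simpa using h2
  exact fun k => (H k).1

/-- Localization of the discrete spectrum of `J_{n,h}` (Proposition 3.1):
every eigenvalue lies in the open rectangle `|Re λ| < 2`, `0 < Im λ < h`. -/
theorem stmt14 (n : ℕ) (h : ℝ) (hh : 0 < h) (l : ℂ)
    (hl : IsSchrodingerEigenvalue n h l) :
    |l.re| < 2 ∧ 0 < l.im ∧ l.im < h := by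
  obtain ⟨g, hg0, hgne, hsum, heq⟩ := hl
  have hconj : ∀ z : ℂ, (starRingEnd ℂ) z * z = ((‖z‖ ^ 2 : ℝ) : ℂ) := by
    intro z
    rw [mul_comm, Complex.mul_conj, Complex.normSq_eq_norm_sq]
  -- g 1 ≠ 0
  have hg1 : g 1 ≠ 0 := by
    intro h1
    exact hgne (funext (schrod_up_zero n h l g hg0 h1 heq))
  -- shifted summability
  have hsum' : Summable (fun k : ℕ => ‖g (k + 1)‖ ^ 2) := (summable_nat_add_iff 1).mpr hsum
  have hsumm : Summable (fun k : ℕ => ‖g (k - 1)‖ ^ 2) := by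
    apply (summable_nat_add_iff 1).mp
    simpa using hsum
  -- the three sequences
  set C : ℕ → ℂ := fun k => (starRingEnd ℂ) (g k) * g (k + 1) with hCdef
  set A : ℕ → ℂ := fun k => (starRingEnd ℂ) (g k) * g (k - 1) with hAdef
  set B : ℕ → ℂ := fun k =>
    (if k ≤ n then (h : ℂ) * Complex.I else 0) * ((starRingEnd ℂ) (g k) * g k) with hBdef
  have hnormC : ∀ k, ‖C k‖ = ‖g k‖ * ‖g (k + 1)‖ := by
    intro k; simp [hCdef, norm_mul]
  have hCsum : Summable C := by
    apply Summable.of_norm_bounded (hsum.add hsum')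
    intro k
    rw [hnormC k]
    nlinarith [sq_nonneg (‖g k‖ - ‖g (k + 1)‖), norm_nonneg (g k), norm_nonneg (g (k + 1))]
  have hAsum : Summable A := by
    apply Summable.of_norm_bounded (hsum.add hsumm)
    intro k
    have : ‖A k‖ = ‖g k‖ * ‖g (k - 1)‖ := by simp [hAdef, norm_mul]
    rw [this]
    nlinarith [sq_nonneg (‖g k‖ - ‖g (k - 1)‖), norm_nonneg (g k), norm_nonneg (g (k - 1))]
  set t : ℕ → ℝ := fun k => if k ≤ n then ‖g k‖ ^ 2 else 0 with htdef
  have htsumm : Summable t := by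
    apply Summable.of_nonneg_of_le _ _ hsum
    · intro k; simp only [htdef]; split_ifs <;> positivity
    · intro k; simp only [htdef]; split_ifs with hk
      · exact le_rfl
      · positivity
  have hBt : ∀ k, B k = (h : ℂ) * Complex.I * ((t k : ℝ) : ℂ) := by
    intro k
    simp only [hBdef, htdef, hconj (g k)]
    split_ifs <;> simp
  have hBsum : Summable B := by
    rw [show B = fun k => (h : ℂ) * Complex.I * ((t k : ℝ) : ℂ) from funext hBt]
    exact (Complex.summable_ofReal.mpr htsumm).mul_left _
  set S : ℂ := ∑' k, C k with hSdef
  set N2 : ℝ := ∑' k, ‖g k‖ ^ 2 with hN2def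
  set T : ℝ := ∑' k, t k with hTdef
  -- pointwise identity
  have key : ∀ k, A k + B k + C k = l * ((‖g k‖ ^ 2 : ℝ) : ℂ) := by
    intro k
    rcases Nat.eq_zero_or_pos k with rfl | hk
    · simp [hAdef, hBdef, hCdef, hg0]
    · have h2 := heq k hk
      have : A k + B k + C k
          = (starRingEnd ℂ) (g k) *
            (g (k - 1) + (if k ≤ n then (h : ℂ) * Complex.I else 0) * g k + g (k + 1)) := by
        simp only [hAdef, hBdef, hCdef]; ring
      rw [this, h2, ← hconj (g k)]; ring
  -- summed identity
  have main : (starRingEnd ℂ) S + (h : ℂ) * Complex.I * ((T : ℝ) : ℂ) + S = l * ((N2 : ℝ) : ℂ) := by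
    have h1 : ∑' k, (A k + B k + C k) = ∑' k, l * ((‖g k‖ ^ 2 : ℝ) : ℂ) := tsum_congr key
    rw [Summable.tsum_add (hAsum.add hBsum) hCsum, Summable.tsum_add hAsum hBsum, tsum_mul_left,
      ← Complex.ofReal_tsum] at h1
    have hA : ∑' k, A k = (starRingEnd ℂ) S := by
      rw [Summable.tsum_eq_zero_add hAsum]
      have h0 : A 0 = 0 := by simp [hAdef, hg0]
      have hsh : ∀ k : ℕ, A (k + 1) = (starRingEnd ℂ) (C k) := by
        intro k
        simp only [hAdef, hCdef, Nat.add_sub_cancel, map_mul, Complex.conj_conj,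
          RingHomCompTriple.comp_apply, RingHom.id_apply]
        ring
      rw [h0, zero_add]
      calc ∑' k, A (k + 1) = ∑' k, (starRingEnd ℂ) (C k) := tsum_congr hsh
        _ = (starRingEnd ℂ) S := tsum_star.symm
    have hB2 : ∑' k, B k = (h : ℂ) * Complex.I * ((T : ℝ) : ℂ) := by
      calc ∑' k, B k = ∑' k, (h : ℂ) * Complex.I * ((t k : ℝ) : ℂ) := tsum_congr hBt
        _ = (h : ℂ) * Complex.I * ((T : ℝ) : ℂ) := by
            rw [tsum_mul_left, hTdef, Complex.ofReal_tsum]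
    rw [hA, hB2] at h1
    exact h1
  -- real and imaginary parts
  have hre : 2 * S.re = l.re * N2 := by
    have := congrArg Complex.re main
    simp only [Complex.add_re, Complex.conj_re, Complex.mul_re, Complex.mul_im,
      Complex.ofReal_re, Complex.ofReal_im, Complex.I_re, Complex.I_im] at this
    linarith
  have him : h * T = l.im * N2 := by
    have := congrArg Complex.im main
    simp only [Complex.add_im, Complex.conj_im, Complex.mul_re, Complex.mul_im,
      Complex.ofReal_re, Complex.ofReal_im, Complex.I_re, Complex.I_im] at this
    linarith
  -- positivity of N2
  have hN2pos : 0 < N2 := by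
    obtain ⟨k0, hk0⟩ := Function.ne_iff.mp hgne
    have hk0' : g k0 ≠ 0 := by simpa using hk0
    have hpos : 0 < ‖g k0‖ := norm_pos_iff.mpr hk0'
    exact Summable.tsum_pos hsum (fun k => by positivity) k0 (by positivity)
  have hg1pos : 0 < ‖g 1‖ ^ 2 := by
    have := norm_pos_iff.mpr hg1
    positivity
  -- Part 1: |Re l| < 2
  have hpart1 : |l.re| < 2 := by
    have hPsum : Summable (fun k => ‖g k‖ * ‖g (k + 1)‖) := by
      have := hCsum.norm
      simpa [hnormC] using this
    set P : ℝ := ∑' k, ‖g k‖ * ‖g (k + 1)‖ with hPdef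
    have hSP : ‖S‖ ≤ P := by
      have h1 : ‖S‖ ≤ ∑' k, ‖C k‖ := norm_tsum_le_tsum_norm hCsum.norm
      have h2 : ∑' k, ‖C k‖ = P := tsum_congr hnormC
      rw [h2] at h1
      exact h1
    have hshift : ∑' k, ‖g (k + 1)‖ ^ 2 = N2 := by
      rw [hN2def, Summable.tsum_eq_zero_add hsum, hg0]
      simp
    have hfsum : Summable (fun k => (‖g k‖ - ‖g (k + 1)‖) ^ 2) := by
      have he : (fun k => (‖g k‖ - ‖g (k + 1)‖) ^ 2)
          = fun k => ‖g k‖ ^ 2 + ‖g (k + 1)‖ ^ 2 - 2 * (‖g k‖ * ‖g (k + 1)‖) := by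
        funext k; ring
      rw [he]
      exact (hsum.add hsum').sub (hPsum.mul_left 2)
    have hdef : ‖g 1‖ ^ 2 ≤ 2 * N2 - 2 * P := by
      have h1 : (‖g 0‖ - ‖g 1‖) ^ 2 ≤ ∑' k, (‖g k‖ - ‖g (k + 1)‖) ^ 2 :=
        Summable.le_tsum hfsum 0 (fun j _ => sq_nonneg _)
      have h2 : ∑' k, (‖g k‖ - ‖g (k + 1)‖) ^ 2 = N2 + N2 - 2 * P := by
        have he : (fun k => (‖g k‖ - ‖g (k + 1)‖) ^ 2)
            = fun k => ‖g k‖ ^ 2 + ‖g (k + 1)‖ ^ 2 - 2 * (‖g k‖ * ‖g (k + 1)‖) := by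
          funext k; ring
        rw [he, Summable.tsum_sub (hsum.add hsum') (hPsum.mul_left 2), Summable.tsum_add hsum hsum',
          tsum_mul_left, hshift, ← hN2def, ← hPdef]
      rw [h2, hg0] at h1
      simp only [norm_zero] at h1
      nlinarith
    have hlt : |l.re| * N2 < 2 * N2 := by
      have h1 : |l.re| * N2 = |l.re * N2| := by
        rw [abs_mul, abs_of_pos hN2pos]
      rw [h1, ← hre]
      have h2 : |2 * S.re| ≤ 2 * P := by
        rw [abs_mul]
        have := (Complex.abs_re_le_norm S).trans hSP
        simp only [abs_two]
        nlinarith [abs_nonneg S.re]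
      nlinarith
    exact lt_of_mul_lt_mul_right hlt hN2pos.le
  have hTnn : 0 ≤ T := tsum_nonneg (fun k => by simp only [htdef]; split_ifs <;> positivity)
  have hTle : ∀ k, t k ≤ T := fun k => Summable.le_tsum htsumm k
    (fun j _ => by simp only [htdef]; split_ifs <;> positivity)
  refine ⟨hpart1, ?_, ?_⟩
  · -- 0 < Im l
    have himnn : 0 ≤ l.im := by
      by_contra hc
      push_neg at hc
      nlinarith
    rcases lt_or_eq_of_le himnn with hpos | hzero
    · exact hpos
    exfalso
    have hT0 : T = 0 := by nlinarith
    have hgz : ∀ k, k ≤ n → g k = 0 := by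
      intro k hk
      have h1 : t k ≤ 0 := hT0 ▸ hTle k
      simp only [htdef, if_pos hk] at h1
      have h2 : ‖g k‖ ^ 2 = 0 := le_antisymm h1 (by positivity)
      simpa using h2
    rcases Nat.eq_zero_or_pos n with hn0 | hn1
    · -- n = 0 : free Jacobi, conserved quantity argument
      subst hn0
      have hlre : l = ((l.re : ℝ) : ℂ) := by
        apply Complex.ext <;> simp [← hzero]
      have hrec : ∀ k : ℕ, g k + g (k + 1 + 1) = ((l.re : ℝ) : ℂ) * g (k + 1) := by
        intro k
        have h2 := heq (k + 1) (by omega)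
        simp only [Nat.add_sub_cancel] at h2
        rw [if_neg (by omega), zero_mul, add_zero] at h2
        rw [← hlre]
        exact h2
      set Q : ℕ → ℝ := fun k =>
        ‖g k‖ ^ 2 + ‖g (k + 1)‖ ^ 2 - l.re * ((starRingEnd ℂ) (g k) * g (k + 1)).re with hQdef
      have hns : ∀ z : ℂ, ‖z‖ ^ 2 = z.re ^ 2 + z.im ^ 2 := by
        intro z
        rw [Complex.sq_norm, Complex.normSq_apply]; ring
      have hre2 : ∀ a b : ℂ, ((starRingEnd ℂ) a * b).re = a.re * b.re + a.im * b.im := by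
        intro a b; simp [Complex.mul_re]
      have hQc : ∀ k, Q (k + 1) = Q k := by
        intro k
        have h2 := hrec k
        have hcr : (g (k + 1 + 1)).re = l.re * (g (k + 1)).re - (g k).re := by
          have h3 := congrArg Complex.re h2
          simp only [Complex.add_re, Complex.mul_re, Complex.ofReal_re,
            Complex.ofReal_im] at h3
          linarith
        have hci : (g (k + 1 + 1)).im = l.re * (g (k + 1)).im - (g k).im := by
          have h3 := congrArg Complex.im h2
          simp only [Complex.add_im, Complex.mul_im, Complex.ofReal_re,
            Complex.ofReal_im] at h3
          linarith
        simp only [hQdef, hns, hre2]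
        rw [hcr, hci]; ring
      have hQ0 : ∀ k, Q k = ‖g 1‖ ^ 2 := by
        intro k
        induction k with
        | zero => simp [hQdef, hg0]
        | succ m ih => rw [hQc m, ih]
      -- limits
      have hsq0 : Filter.Tendsto (fun k => ‖g k‖ ^ 2) Filter.atTop (nhds 0) :=
        hsum.tendsto_atTop_zero
      have hn0' : Filter.Tendsto (fun k => ‖g k‖) Filter.atTop (nhds 0) := by
        have h1 := (Real.continuous_sqrt.tendsto 0).comp hsq0
        simp only [Real.sqrt_zero] at h1
        refine h1.congr ?_
        intro k
        simp [Real.sqrt_sq (norm_nonneg _)]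
      have hsh : Filter.Tendsto (fun k : ℕ => ‖g (k + 1)‖) Filter.atTop (nhds 0) :=
        hn0'.comp (Filter.tendsto_add_atTop_nat 1)
      have hsq1 : Filter.Tendsto (fun k : ℕ => ‖g (k + 1)‖ ^ 2) Filter.atTop (nhds 0) :=
        hsq0.comp (Filter.tendsto_add_atTop_nat 1)
      have hprod : Filter.Tendsto (fun k : ℕ => ‖g k‖ * ‖g (k + 1)‖) Filter.atTop (nhds 0) := by
        have := hn0'.mul hsh
        simpa using this
      have hmid : Filter.Tendsto (fun k : ℕ => ((starRingEnd ℂ) (g k) * g (k + 1)).re)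
          Filter.atTop (nhds 0) := by
        apply squeeze_zero_norm _ hprod
        intro k
        calc ‖((starRingEnd ℂ) (g k) * g (k + 1)).re‖
            ≤ ‖(starRingEnd ℂ) (g k) * g (k + 1)‖ := Complex.abs_re_le_norm _
          _ = ‖g k‖ * ‖g (k + 1)‖ := by simp [norm_mul]
      have hQlim : Filter.Tendsto Q Filter.atTop (nhds 0) := by
        have h1 := (hsq0.add hsq1).sub (hmid.const_mul l.re)
        simpa [hQdef] using h1
      have hQconst : Filter.Tendsto Q Filter.atTop (nhds (‖g 1‖ ^ 2)) := by
        rw [show Q = fun _ => ‖g 1‖ ^ 2 from funext hQ0]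
        exact tendsto_const_nhds
      have h0 : ‖g 1‖ ^ 2 = 0 := tendsto_nhds_unique hQconst hQlim
      nlinarith
    · exact hg1 (hgz 1 hn1)
  · -- Im l < h
    by_contra hc
    push_neg at hc
    have hTleN : T ≤ N2 := by
      apply Summable.tsum_le_tsum _ htsumm hsum
      intro k
      simp only [htdef]
      split_ifs
      · exact le_rfl
      · positivity
    have hTN : T = N2 := by nlinarith
    have hdsum : Summable (fun k => ‖g k‖ ^ 2 - t k) := hsum.sub htsumm
    have hd0 : ∑' k, (‖g k‖ ^ 2 - t k) = 0 := by
      rw [Summable.tsum_sub hsum htsumm, ← hN2def, ← hTdef, hTN]; ring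
    have tail : ∀ k, n + 1 ≤ k → g k = 0 := by
      intro k hk
      have h1 : ‖g k‖ ^ 2 - t k ≤ 0 := by
        rw [← hd0]
        apply Summable.le_tsum hdsum k
        intro j _
        simp only [htdef]
        split_ifs
        · simp
        · simpa using sq_nonneg ‖g j‖
      simp only [htdef, if_neg (by omega : ¬ k ≤ n)] at h1
      have h2 : ‖g k‖ ^ 2 = 0 := le_antisymm (by linarith) (by positivity)
      simpa using h2
    have down : ∀ m, g (n + 1 - m) = 0 ∧ g (n + 2 - m) = 0 := by
      intro m
      induction m with
      | zero => exact ⟨tail _ (by omega), tail _ (by omega)⟩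
      | succ m ih =>
        constructor
        · rcases le_or_gt (m + 1) (n + 1) with hm | hm
          · have hk1 : 1 ≤ n + 1 - m := by omega
            have h2 := heq (n + 1 - m) hk1
            have e1 : n + 1 - m - 1 = n + 1 - (m + 1) := by omega
            have e2 : n + 1 - m + 1 = n + 2 - m := by omega
            rw [e1, e2, ih.1, ih.2] at h2
            simpa using h2
          · have e : n + 1 - (m + 1) = 0 := by omega
            rw [e]; exact hg0
        · have e : n + 2 - (m + 1) = n + 1 - m := by omega
          rw [e]; exact ih.1
    have hall : ∀ k, g k = 0 := by
      intro k
      rcases le_or_gt k (n + 1) with hk | hk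
      · have := (down (n + 1 - k)).1
        rwa [Nat.sub_sub_self hk] at this
      · exact tail k (by omega)
    exact hgne (funext hall)
end
end
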